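/- arXiv:math/0511647 — 5 statements merged into one kernel-verified Lean document; each statement's English description precedes it below -/
import Mathlib

section
/- Let F and F′ be finite groups with |F| = |F′|. Then there is a bijection Φ : ℤ ≀ F → ℤ ≀ F′ which is an isometry from the word metric d_{S_F} to the word metric d_{S_{F′}}, where for a finite group F the generating set S_F of ℤ ≀ F consists of all elements (f, 0) with f ≠ 1 supported in {0}, together with the elements (1, 1) and (1, −1). In other words, the Cayley graph of ℤ ≀ F with respect to S_F depends, up to isometry, only on the cardinality |F| and not on the group structure of F. -/
open Set

noncomputable section

/-- The (unrestricted) wreath product `(ℤ → F) ⋊ ℤ`, with `ℤ` acting by shifts. -/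
def WreathZ (F : Type*) := (ℤ → F) × ℤ

namespace WreathZ

variable {F : Type*} [Group F]

instance : Group (WreathZ F) where
  mul a b := (fun i => a.1 i * b.1 (i - a.2), a.2 + b.2)
  one := (fun _ => 1, 0)
  inv a := (fun i => (a.1 (i + a.2))⁻¹, -a.2)
  mul_assoc a b c := by
    show ((fun i => (a.1 i * b.1 (i - a.2)) * c.1 (i - (a.2 + b.2)), (a.2 + b.2) + c.2)
        : (ℤ → F) × ℤ)
      = (fun i => a.1 i * (b.1 (i - a.2) * c.1 (i - a.2 - b.2)), a.2 + (b.2 + c.2))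
    refine Prod.ext ?_ ?_
    · funext i
      show (a.1 i * b.1 (i - a.2)) * c.1 (i - (a.2 + b.2))
        = a.1 i * (b.1 (i - a.2) * c.1 (i - a.2 - b.2))
      rw [mul_assoc, sub_add_eq_sub_sub]
    · exact add_assoc _ _ _
  one_mul a := by
    show ((fun i => 1 * a.1 (i - 0), 0 + a.2) : (ℤ → F) × ℤ) = a
    refine Prod.ext ?_ ?_
    · funext i
      show 1 * a.1 (i - 0) = a.1 i
      rw [one_mul, sub_zero]
    · exact zero_add _
  mul_one a := by
    show ((fun i => a.1 i * 1, a.2 + 0) : (ℤ → F) × ℤ) = a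
    refine Prod.ext ?_ ?_
    · funext i
      show a.1 i * 1 = a.1 i
      rw [mul_one]
    · exact add_zero _
  inv_mul_cancel a := by
    show ((fun i => (a.1 (i + a.2))⁻¹ * a.1 (i - -a.2), -a.2 + a.2) : (ℤ → F) × ℤ)
      = ((fun _ => 1, 0) : (ℤ → F) × ℤ)
    refine Prod.ext ?_ ?_
    · funext i
      show (a.1 (i + a.2))⁻¹ * a.1 (i - -a.2) = 1
      rw [sub_neg_eq_add, inv_mul_cancel]
    · simp

@[simp] theorem mul_fst (a b : WreathZ F) :
    (a * b).1 = fun i => a.1 i * b.1 (i - a.2) := rfl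
@[simp] theorem mul_snd (a b : WreathZ F) : (a * b).2 = a.2 + b.2 := rfl
@[simp] theorem one_fst : ((1 : WreathZ F)).1 = fun _ => 1 := rfl
@[simp] theorem one_snd : ((1 : WreathZ F)).2 = 0 := rfl
@[simp] theorem inv_fst (a : WreathZ F) : (a⁻¹).1 = fun i => (a.1 (i + a.2))⁻¹ := rfl
@[simp] theorem inv_snd (a : WreathZ F) : (a⁻¹).2 = -a.2 := rfl

end WreathZ

/-- The lamplighter group `ℤ ≀ F = (⊕_{i ∈ ℤ} F) ⋊ ℤ`: the subgroup of the unrestricted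
wreath product consisting of finitely supported configurations of lamps. -/
def Lamp (F : Type*) [Group F] : Subgroup (WreathZ F) where
  carrier := {a : WreathZ F | {i : ℤ | a.1 i ≠ 1}.Finite}
  mul_mem' := by
    intro a b ha hb
    refine Set.Finite.subset (Set.Finite.union ha (Set.Finite.image (· + a.2) hb)) ?_
    intro i hi
    by_cases h1 : a.1 i = 1
    · right
      refine ⟨i - a.2, ?_, by ring⟩
      intro hcon
      exact hi (by show a.1 i * b.1 (i - a.2) = 1; rw [h1, hcon, one_mul])
    · exact Or.inl h1
  one_mem' := by
    show {i : ℤ | ((1 : WreathZ F)).1 i ≠ 1}.Finite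
    have h : {i : ℤ | ((1 : WreathZ F)).1 i ≠ 1} = ∅ := by
      ext i
      simp [WreathZ.one_fst]
    rw [h]
    exact Set.finite_empty
  inv_mem' := by
    intro a ha
    refine Set.Finite.subset (Set.Finite.image (· - a.2) ha) ?_
    intro i hi
    refine ⟨i + a.2, ?_, by ring⟩
    intro hcon
    exact hi (by show (a.1 (i + a.2))⁻¹ = 1; rw [hcon, inv_one])

/-- The word norm of `g` with respect to a generating set `S`. -/
def wordNorm {Γ : Type*} [Group Γ] (S : Set Γ) (g : Γ) : ℕ :=
  sInf {m : ℕ | ∃ l : List Γ, (∀ x ∈ l, x ∈ S) ∧ l.prod = g ∧ l.length = m}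

/-- The word metric on a group `Γ` with respect to a generating set `S`. -/
def wordDist {Γ : Type*} [Group Γ] (S : Set Γ) (a b : Γ) : ℝ :=
  (wordNorm S (a⁻¹ * b) : ℝ)

/-- `S` is a finite symmetric generating set of `Γ`. -/
def IsFinSymmGen {Γ : Type*} [Group Γ] (S : Set Γ) : Prop :=
  S.Finite ∧ (∀ s ∈ S, s⁻¹ ∈ S) ∧ Subgroup.closure S = ⊤

/-- `f` is a `(K, C)`-quasi-isometric embedding with respect to the given distances. -/
def IsQIE {X Y : Type*} (dX : X → X → ℝ) (dY : Y → Y → ℝ) (K C : ℝ) (f : X → Y) : Prop :=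
  ∀ a b : X, (1 / K) * dX a b - C ≤ dY (f a) (f b) ∧ dY (f a) (f b) ≤ K * dX a b + C

/-- `f` is a `(K, C)`-quasi-isometry with respect to the given distances. -/
def IsQI {X Y : Type*} (dX : X → X → ℝ) (dY : Y → Y → ℝ) (K C : ℝ) (f : X → Y) : Prop :=
  IsQIE dX dY K C f ∧ ∀ y : Y, ∃ x : X, dY (f x) y ≤ C

/-- Two "metric spaces", given by distance functions, are quasi-isometric. -/
def QuasiIsometric {X Y : Type*} (dX : X → X → ℝ) (dY : Y → Y → ℝ) : Prop :=
  ∃ (K C : ℝ) (f : X → Y), 1 ≤ K ∧ 0 ≤ C ∧ IsQI dX dY K C f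

/-- The standard generating set `S_F` of the lamplighter group `ℤ ≀ F`: all elements `(f, 0)`
with `f ≠ 1` supported in `{0}`, together with `(1, 1)` and `(1, -1)`. -/
def lampGen (F : Type*) [Group F] : Set (Lamp F) :=
  {g : Lamp F |
    ((g : WreathZ F).2 = 0 ∧ (∀ i : ℤ, i ≠ 0 → (g : WreathZ F).1 i = 1) ∧
      (g : WreathZ F).1 0 ≠ 1) ∨
    (((g : WreathZ F).1 = fun _ => 1) ∧
      ((g : WreathZ F).2 = 1 ∨ (g : WreathZ F).2 = -1))}

section Aux

variable {F F' : Type*} [Group F] [Group F']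

/-- Apply a pointwise bijection of lamp values. -/
private def phiFun (e : F ≃ F') : WreathZ F → WreathZ F' :=
  fun a => (fun i => e (a.1 i), a.2)

private lemma phiFun_mem (e : F ≃ F') (he : e 1 = 1) {a : WreathZ F} (ha : a ∈ Lamp F) :
    phiFun e a ∈ Lamp F' := by
  have ha' : {i : ℤ | a.1 i ≠ 1}.Finite := ha
  show {i : ℤ | (phiFun e a).1 i ≠ 1}.Finite
  refine Set.Finite.subset ha' fun i hi => ?_
  simp only [Set.mem_setOf_eq] at hi ⊢
  intro h1
  exact hi (show e (a.1 i) = 1 by rw [h1, he])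

private def phiEquiv (e : F ≃ F') (he : e 1 = 1) : Lamp F ≃ Lamp F' where
  toFun a := ⟨phiFun e a, phiFun_mem e he a.2⟩
  invFun a := ⟨phiFun e.symm a,
    phiFun_mem e.symm (by rw [← he, Equiv.symm_apply_apply]) a.2⟩
  left_inv a := Subtype.ext (Prod.ext (funext fun i => e.symm_apply_apply _) rfl)
  right_inv a := Subtype.ext (Prod.ext (funext fun i => e.apply_symm_apply _) rfl)

private lemma phi_adj (e : F ≃ F') (he : e 1 = 1) (u v : Lamp F)
    (h : u⁻¹ * v ∈ lampGen F) :
    (phiEquiv e he u)⁻¹ * phiEquiv e he v ∈ lampGen F' := by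
  have hc : ∀ i : ℤ,
      ((((phiEquiv e he u)⁻¹ * phiEquiv e he v : Lamp F') : WreathZ F').1 i = 1 ↔
        (((u⁻¹ * v : Lamp F) : WreathZ F).1 i = 1)) := by
    intro i
    show (e ((u : WreathZ F).1 (i + (u : WreathZ F).2)))⁻¹ *
          e ((v : WreathZ F).1 (i - -(u : WreathZ F).2)) = 1 ↔
        ((u : WreathZ F).1 (i + (u : WreathZ F).2))⁻¹ *
          (v : WreathZ F).1 (i - -(u : WreathZ F).2) = 1
    rw [inv_mul_eq_one, inv_mul_eq_one, e.injective.eq_iff]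
  rcases h with ⟨h0, h1, h2⟩ | ⟨h1, h2⟩
  · exact Or.inl ⟨h0, fun i hi => (hc i).mpr (h1 i hi), fun hcon => h2 ((hc 0).mp hcon)⟩
  · exact Or.inr ⟨funext fun i => (hc i).mpr (congrFun h1 i), h2⟩

private lemma transport (Ψ : Lamp F → Lamp F')
    (hΨ : ∀ u v : Lamp F, u⁻¹ * v ∈ lampGen F → (Ψ u)⁻¹ * Ψ v ∈ lampGen F') :
    ∀ l : List (Lamp F), (∀ x ∈ l, x ∈ lampGen F) → ∀ a : Lamp F,
      ∃ l' : List (Lamp F'), (∀ x ∈ l', x ∈ lampGen F') ∧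
        l'.prod = (Ψ a)⁻¹ * Ψ (a * l.prod) ∧ l'.length = l.length := by
  intro l
  induction l with
  | nil => exact fun _ a => ⟨[], by simp, by simp, rfl⟩
  | cons s t ih =>
    intro hmem a
    obtain ⟨t', ht'mem, ht'prod, ht'len⟩ :=
      ih (fun x hx => hmem x (List.mem_cons_of_mem s hx)) (a * s)
    refine ⟨((Ψ a)⁻¹ * Ψ (a * s)) :: t', ?_, ?_, by simp [ht'len]⟩
    · intro x hx
      rcases List.mem_cons.mp hx with hx | hx
    
      · subst hx
        exact hΨ a (a * s) (by simpa using hmem s (List.mem_cons_self (a := s) (l := t)))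
      · exact ht'mem x hx
    · rw [List.prod_cons, ht'prod, List.prod_cons]
      simp [mul_assoc]

private lemma phi_norm_eq (e : F ≃ F') (he : e 1 = 1) (a b : Lamp F) :
    wordNorm (lampGen F') ((phiEquiv e he a)⁻¹ * phiEquiv e he b)
      = wordNorm (lampGen F) (a⁻¹ * b) := by
  have he' : e.symm 1 = 1 := by rw [← he, Equiv.symm_apply_apply]
  have hinv : ∀ x : Lamp F, phiEquiv e.symm he' (phiEquiv e he x) = x := fun x =>
    Subtype.ext (Prod.ext (funext fun i => e.symm_apply_apply _) rfl)
  unfold wordNorm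
  congr 1
  ext m
  constructor
  · rintro ⟨l', hmem, hprod, hlen⟩
    obtain ⟨l, hm, hp, hl⟩ :=
      transport (phiEquiv e.symm he') (phi_adj e.symm he') l' hmem (phiEquiv e he a)
    refine ⟨l, hm, ?_, hl.trans hlen⟩
    rw [hp, hprod, mul_inv_cancel_left, hinv, hinv]
  · rintro ⟨l, hmem, hprod, hlen⟩
    obtain ⟨l', hm, hp, hl⟩ :=
      transport (phiEquiv e he) (phi_adj e he) l hmem a
    refine ⟨l', hm, ?_, hl.trans hlen⟩
    rw [hp, hprod, mul_inv_cancel_left]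

end Aux

/-- **Theorem.** The Cayley graph of the lamplighter group `ℤ ≀ F` with respect to the
standard generating set `S_F` depends, up to isometry, only on the cardinality `|F|`: if
`|F| = |F'|` there is a bijection `ℤ ≀ F → ℤ ≀ F'` which is an isometry for the word
metrics. -/
theorem lamplighter_cayley_depends_only_on_card
    (F F' : Type*) [Group F] [Fintype F] [Group F'] [Fintype F']
    (hcard : Fintype.card F = Fintype.card F') :
    ∃ Φ : Lamp F ≃ Lamp F',
      ∀ a b : Lamp F, wordDist (lampGen F) a b = wordDist (lampGen F') (Φ a) (Φ b) := by
  haveI := Classical.decEq F'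
  have e0 : F ≃ F' := Fintype.equivOfCardEq hcard
  let e : F ≃ F' := e0.trans (Equiv.swap (e0 1) 1)
  have he : e 1 = 1 := by
    show Equiv.swap (e0 1) 1 (e0 1) = 1
    rw [Equiv.swap_apply_left]
  refine ⟨phiEquiv e he, fun a b => ?_⟩
  show ((wordNorm (lampGen F) (a⁻¹ * b) : ℕ) : ℝ)
    = ((wordNorm (lampGen F') ((phiEquiv e he a)⁻¹ * phiEquiv e he b) : ℕ) : ℝ)
  exact_mod_cast (phi_norm_eq e he a b).symm

end
end

section
/- Scales Lemma for Sol: for all K ≥ 1, C ≥ 0 and ε > 0 there exist a positive integer n₀ and a real r* > 0, depending only on K, C and ε, with the following property. Let r₀ ≤ r₁ ≤ … ≤ r_M be positive reals with r₀ ≥ r*, with r_{m−1} dividing r_m and r_m/r_{m−1} ≥ n₀ for 1 ≤ m ≤ M, and let L be a positive multiple of r_M. For a (K,C)-quasi-geodesic segment α : [0,L] → Sol and 1 ≤ m ≤ M, let δ_m(α) = (r_m/L)·#{ j : 0 ≤ j < L/r_m and the restriction of α to [j·r_m, (j+1)·r_m] is not ε-monotone }, where a restriction is called ε-monotone if |t₁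 − t₂| < ε·r_m whenever t₁, t₂ ∈ [j·r_m, (j+1)·r_m] satisfy h(α(t₁)) = h(α(t₂)). Then Σ_{m=1}^{M} δ_m(α) ≤ 16K³/ε. -/
set_option maxHeartbeats 1000000


open Set

noncomputable section

/-- A path `γ : ℝ → E` is piecewise `C¹` on `[0,1]`. -/
def PiecewiseC1 {E : Type*} [NormedAddCommGroup E] [NormedSpace ℝ E] (γ : ℝ → E) : Prop :=
  ∃ (n : ℕ) (τ : ℕ → ℝ), τ 0 = 0 ∧ τ n = 1 ∧ (∀ i < n, τ i ≤ τ (i + 1)) ∧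
    ∀ i < n, ContDiffOn ℝ 1 γ (Set.Icc (τ i) (τ (i + 1)))

/-- The `Sol` length of a path `γ(t) = (x(t), y(t), z(t))`, for the metric
`ds² = e^{-z} dx² + e^{z} dy² + dz²`. -/
def solLength (γ : ℝ → ℝ × ℝ × ℝ) : ℝ :=
  ∫ t in (0:ℝ)..1,
    Real.sqrt (Real.exp (-(γ t).2.2) * (deriv (fun s => (γ s).1) t) ^ 2 +
      Real.exp ((γ t).2.2) * (deriv (fun s => (γ s).2.1) t) ^ 2 +
      (deriv (fun s => (γ s).2.2) t) ^ 2)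

/-- The left-invariant distance on `Sol = ℝ³`. -/
def dSol (p q : ℝ × ℝ × ℝ) : ℝ :=
  sInf {ℓ : ℝ | ∃ γ : ℝ → ℝ × ℝ × ℝ,
    γ 0 = p ∧ γ 1 = q ∧ PiecewiseC1 γ ∧ solLength γ = ℓ}

/-- Height function on `Sol`. -/
def solHeight (p : ℝ × ℝ × ℝ) : ℝ := p.2.2

/-- `α` is a `(K,C)`-quasi-geodesic segment on `[0, L]` with respect to the distance `dX`. -/
def IsQGeoOn {X : Type*} (dX : X → X → ℝ) (K C : ℝ) (α : ℝ → X) (L : ℝ) : Prop :=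
  ∀ s ∈ Set.Icc (0:ℝ) L, ∀ t ∈ Set.Icc (0:ℝ) L,
    (1 / K) * |s - t| - C ≤ dX (α s) (α t) ∧ dX (α s) (α t) ≤ K * |s - t| + C

/-- The restriction of `α` to `[a, b]` is `ε`-monotone: equal heights occur only at
parameters within `ε·(b - a)`. -/
def EpsMonotoneOn (α : ℝ → ℝ × ℝ × ℝ) (ε a b : ℝ) : Prop :=
  ∀ t₁ ∈ Set.Icc a b, ∀ t₂ ∈ Set.Icc a b,
    solHeight (α t₁) = solHeight (α t₂) → |t₁ - t₂| < ε * (b - a)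

namespace SolScales

open MeasureTheory intervalIntegral

def speed (γ : ℝ → ℝ × ℝ × ℝ) (t : ℝ) : ℝ :=
  Real.sqrt (Real.exp (-(γ t).2.2) * (deriv (fun s => (γ s).1) t) ^ 2 +
      Real.exp ((γ t).2.2) * (deriv (fun s => (γ s).2.1) t) ^ 2 +
      (deriv (fun s => (γ s).2.2) t) ^ 2)

lemma speed_nonneg (γ : ℝ → ℝ × ℝ × ℝ) (t : ℝ) : 0 ≤ speed γ t := Real.sqrt_nonneg _

lemma solLength_eq (γ : ℝ → ℝ × ℝ × ℝ) : solLength γ = ∫ t in (0:ℝ)..1, speed γ t := rfl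

lemma solLength_nonneg (γ : ℝ → ℝ × ℝ × ℝ) : 0 ≤ solLength γ := by
  rw [solLength_eq]
  exact intervalIntegral.integral_nonneg (by norm_num) (fun t _ => speed_nonneg γ t)

lemma intervalIntegrable_of_eqOn_Ioo {f g : ℝ → ℝ} {a b : ℝ} (hab : a ≤ b)
    (hf : ContinuousOn f (Set.Icc a b)) (hfg : Set.EqOn f g (Set.Ioo a b)) :
    IntervalIntegrable g volume a b := by
  rw [intervalIntegrable_iff_integrableOn_Ioc_of_le hab, integrableOn_Ioc_iff_integrableOn_Ioo]
  exact ((hf.integrableOn_Icc).mono_set Set.Ioo_subset_Icc_self).congr_fun hfg measurableSet_Ioo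

lemma piece_integrable {f : ℝ → ℝ} {a b : ℝ} (hab : a ≤ b)
    (hf : ContDiffOn ℝ 1 f (Set.Icc a b)) :
    IntervalIntegrable (deriv f) volume a b := by
  rcases eq_or_lt_of_le hab with rfl | h
  · exact IntervalIntegrable.refl
  have hU : UniqueDiffOn ℝ (Set.Icc a b) := uniqueDiffOn_Icc h
  apply intervalIntegrable_of_eqOn_Ioo hab (hf.continuousOn_derivWithin hU le_rfl)
  intro x hx
  exact derivWithin_of_mem_nhds (Icc_mem_nhds hx.1 hx.2)

lemma piece_ftc {f : ℝ → ℝ} {a b c d : ℝ} (hab : a ≤ b)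
    (hf : ContDiffOn ℝ 1 f (Set.Icc a b))
    (hac : a ≤ c) (hcd : c ≤ d) (hdb : d ≤ b) :
    ∫ t in c..d, deriv f t = f d - f c := by
  apply intervalIntegral.integral_eq_sub_of_hasDeriv_right_of_le hcd
  · exact hf.continuousOn.mono (Set.Icc_subset_Icc hac hdb)
  · intro x hx
    have hx' : x ∈ Set.Ioo a b := ⟨lt_of_le_of_lt hac hx.1, lt_of_lt_of_le hx.2 hdb⟩
    have hd : DifferentiableAt ℝ f x :=
      ((hf.differentiableOn one_ne_zero) x (Set.Ioo_subset_Icc_self hx')).differentiableAt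
        (Icc_mem_nhds hx'.1 hx'.2)
    exact hd.hasDerivAt.hasDerivWithinAt
  · exact (piece_integrable hab hf).mono_set
      (by rw [Set.uIcc_of_le hcd, Set.uIcc_of_le hab]; exact Set.Icc_subset_Icc hac hdb)

lemma tau_mono {n : ℕ} {τ : ℕ → ℝ} (hm : ∀ i < n, τ i ≤ τ (i + 1)) :
    ∀ i j, i ≤ j → j ≤ n → τ i ≤ τ j := by
  intro i j hij hjn
  induction j with
  | zero => have : i = 0 := Nat.le_zero.mp hij; simp [this]
  | succ j ih =>
    rcases Nat.lt_or_ge i (j + 1) with h | h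
    · exact le_trans (ih (Nat.lt_succ_iff.mp h) (by omega)) (hm j (by omega))
    · have : i = j + 1 := le_antisymm hij h
      simp [this]

lemma glue_integrable {g : ℝ → ℝ} {n : ℕ} {τ : ℕ → ℝ}
    (hp : ∀ i < n, IntervalIntegrable g volume (τ i) (τ (i + 1))) :
    ∀ i ≤ n, IntervalIntegrable g volume (τ 0) (τ i) := by
  intro i
  induction i with
  | zero => intro _; exact IntervalIntegrable.refl
  | succ i ih => intro h; exact (ih (by omega)).trans (hp i (by omega))

lemma glue_ftc {f : ℝ → ℝ} {n : ℕ} {τ : ℕ → ℝ}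
    (hm : ∀ i < n, τ i ≤ τ (i + 1))
    (hsm : ∀ i < n, ContDiffOn ℝ 1 f (Set.Icc (τ i) (τ (i + 1)))) :
    ∀ i ≤ n, ∀ t ∈ Set.Icc (τ 0) (τ i), ∫ u in (τ 0)..t, deriv f u = f t - f (τ 0) := by
  intro i
  induction i with
  | zero => intro _ t ht; have : t = τ 0 := le_antisymm ht.2 ht.1; simp [this]
  | succ i ih =>
    intro hin t ht
    rcases le_or_gt t (τ i) with h | h
    · exact ih (by omega) t ⟨ht.1, h⟩
    · have h0i : τ 0 ≤ τ i := tau_mono hm 0 i (by omega) (by omega)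
      have hii : τ i ≤ τ (i + 1) := hm i (by omega)
      have I1 : IntervalIntegrable (deriv f) volume (τ 0) (τ i) :=
        glue_integrable (fun j hj => piece_integrable (hm j hj) (hsm j hj)) i (by omega)
      have I2 : IntervalIntegrable (deriv f) volume (τ i) t :=
        (piece_integrable hii (hsm i (by omega))).mono_set
          (by rw [Set.uIcc_of_le h.le, Set.uIcc_of_le hii]
              exact Set.Icc_subset_Icc le_rfl ht.2)
      rw [← intervalIntegral.integral_add_adjacent_intervals I1 I2,
        ih (by omega) (τ i) ⟨h0i, le_rfl⟩,
        piece_ftc hii (hsm i (by omega)) le_rfl h.le ht.2]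
      ring



lemma speed_piece_integrable {γ : ℝ → ℝ × ℝ × ℝ} {a b : ℝ} (hab : a ≤ b)
    (hγ : ContDiffOn ℝ 1 γ (Set.Icc a b)) :
    IntervalIntegrable (speed γ) volume a b := by
  rcases eq_or_lt_of_le hab with rfl | h
  · exact IntervalIntegrable.refl
  have hU : UniqueDiffOn ℝ (Set.Icc a b) := uniqueDiffOn_Icc h
  have hX : ContDiffOn ℝ 1 (fun u => (γ u).1) (Set.Icc a b) := hγ.fst
  have hY : ContDiffOn ℝ 1 (fun u => (γ u).2.1) (Set.Icc a b) := hγ.snd.fst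
  have hZ : ContDiffOn ℝ 1 (fun u => (γ u).2.2) (Set.Icc a b) := hγ.snd.snd
  have hFc : ContinuousOn (fun t => Real.sqrt
      (Real.exp (-(γ t).2.2) * (derivWithin (fun u => (γ u).1) (Set.Icc a b) t) ^ 2 +
        Real.exp ((γ t).2.2) * (derivWithin (fun u => (γ u).2.1) (Set.Icc a b) t) ^ 2 +
        (derivWithin (fun u => (γ u).2.2) (Set.Icc a b) t) ^ 2)) (Set.Icc a b) := by
    apply ContinuousOn.sqrt
    apply ContinuousOn.add
    apply ContinuousOn.add
    · exact (Real.continuous_exp.comp_continuousOn hZ.continuousOn.neg).mul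
        ((hX.continuousOn_derivWithin hU le_rfl).pow 2)
    · exact (Real.continuous_exp.comp_continuousOn hZ.continuousOn).mul
        ((hY.continuousOn_derivWithin hU le_rfl).pow 2)
    · exact (hZ.continuousOn_derivWithin hU le_rfl).pow 2
  apply intervalIntegrable_of_eqOn_Ioo hab hFc
  intro x hx
  have hnb : Set.Icc a b ∈ nhds x := Icc_mem_nhds hx.1 hx.2
  simp only [speed, derivWithin_of_mem_nhds hnb]

lemma abs_deriv_z_le_speed (γ : ℝ → ℝ × ℝ × ℝ) (t : ℝ) :
    |deriv (fun s => (γ s).2.2) t| ≤ speed γ t := by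
  have h1 : (deriv (fun s => (γ s).2.2) t) ^ 2 ≤
      Real.exp (-(γ t).2.2) * (deriv (fun s => (γ s).1) t) ^ 2 +
      Real.exp ((γ t).2.2) * (deriv (fun s => (γ s).2.1) t) ^ 2 +
      (deriv (fun s => (γ s).2.2) t) ^ 2 := by
    nlinarith [sq_nonneg (deriv (fun s => (γ s).1) t), sq_nonneg (deriv (fun s => (γ s).2.1) t),
      (Real.exp_pos (-(γ t).2.2)).le, (Real.exp_pos ((γ t).2.2)).le,
      mul_nonneg (Real.exp_pos (-(γ t).2.2)).le (sq_nonneg (deriv (fun s => (γ s).1) t)),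
      mul_nonneg (Real.exp_pos ((γ t).2.2)).le (sq_nonneg (deriv (fun s => (γ s).2.1) t))]
  calc |deriv (fun s => (γ s).2.2) t| = Real.sqrt ((deriv (fun s => (γ s).2.2) t) ^ 2) :=
        (Real.sqrt_sq_eq_abs _).symm
    _ ≤ speed γ t := Real.sqrt_le_sqrt h1

lemma abs_le_exp_mul {e d sp : ℝ} (hs : 0 ≤ sp) (h : Real.exp e * d ^ 2 ≤ sp ^ 2) :
    |d| ≤ Real.exp (-e / 2) * sp := by
  have he2 : Real.exp e = (Real.exp (e / 2)) ^ 2 := by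
    rw [sq, ← Real.exp_add]; ring_nf
  have hd2 : d ^ 2 ≤ (Real.exp (-e / 2) * sp) ^ 2 := by
    have key : (Real.exp (-e / 2)) ^ 2 * (Real.exp e * d ^ 2) = d ^ 2 := by
      rw [sq, ← Real.exp_add, ← mul_assoc, ← Real.exp_add]
      ring_nf
      rw [Real.exp_zero, one_mul]
    calc d ^ 2 = (Real.exp (-e / 2)) ^ 2 * (Real.exp e * d ^ 2) := key.symm
      _ ≤ (Real.exp (-e / 2)) ^ 2 * sp ^ 2 := mul_le_mul_of_nonneg_left h (sq_nonneg _)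
      _ = (Real.exp (-e / 2) * sp) ^ 2 := (mul_pow _ _ _).symm
  calc |d| = Real.sqrt (d ^ 2) := (Real.sqrt_sq_eq_abs d).symm
    _ ≤ Real.sqrt ((Real.exp (-e / 2) * sp) ^ 2) := Real.sqrt_le_sqrt hd2
    _ = Real.exp (-e / 2) * sp := Real.sqrt_sq (mul_nonneg (Real.exp_pos _).le hs)

lemma speed_sq (γ : ℝ → ℝ × ℝ × ℝ) (t : ℝ) :
    speed γ t ^ 2 = Real.exp (-(γ t).2.2) * (deriv (fun s => (γ s).1) t) ^ 2 +
      Real.exp ((γ t).2.2) * (deriv (fun s => (γ s).2.1) t) ^ 2 +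
      (deriv (fun s => (γ s).2.2) t) ^ 2 := by
  apply Real.sq_sqrt
  have a1 := mul_nonneg (Real.exp_pos (-(γ t).2.2)).le (sq_nonneg (deriv (fun s => (γ s).1) t))
  have a2 := mul_nonneg (Real.exp_pos ((γ t).2.2)).le (sq_nonneg (deriv (fun s => (γ s).2.1) t))
  have a3 := sq_nonneg (deriv (fun s => (γ s).2.2) t)
  linarith

lemma abs_deriv_x_le (γ : ℝ → ℝ × ℝ × ℝ) (t : ℝ) :
    |deriv (fun s => (γ s).1) t| ≤ Real.exp ((γ t).2.2 / 2) * speed γ t := by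
  have h := abs_le_exp_mul (speed_nonneg γ t) (e := -(γ t).2.2) (d := deriv (fun s => (γ s).1) t)
    (by rw [speed_sq]
        have a2 := mul_nonneg (Real.exp_pos ((γ t).2.2)).le (sq_nonneg (deriv (fun s => (γ s).2.1) t))
        have a3 := sq_nonneg (deriv (fun s => (γ s).2.2) t)
        linarith)
  rwa [neg_neg] at h

lemma abs_deriv_y_le (γ : ℝ → ℝ × ℝ × ℝ) (t : ℝ) :
    |deriv (fun s => (γ s).2.1) t| ≤ Real.exp (-(γ t).2.2 / 2) * speed γ t := by
  exact abs_le_exp_mul (speed_nonneg γ t) (e := (γ t).2.2) (d := deriv (fun s => (γ s).2.1) t)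
    (by rw [speed_sq]
        have a1 := mul_nonneg (Real.exp_pos (-(γ t).2.2)).le (sq_nonneg (deriv (fun s => (γ s).1) t))
        have a3 := sq_nonneg (deriv (fun s => (γ s).2.2) t)
        linarith)

lemma speed_integrable {γ : ℝ → ℝ × ℝ × ℝ} (hγ : PiecewiseC1 γ) :
    IntervalIntegrable (speed γ) volume 0 1 := by
  obtain ⟨n, τ, h0, h1, hm, hsm⟩ := hγ
  have := glue_integrable (g := speed γ) (τ := τ)
    (fun i hi => speed_piece_integrable (hm i hi) (hsm i hi)) n le_rfl
  rwa [h0, h1] at this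

lemma ae_Icc_of_Ioo {l r : ℝ} {P : ℝ → Prop} (h : ∀ x ∈ Set.Ioo l r, P x) :
    ∀ᵐ x ∂(volume.restrict (Set.Icc l r)), P x := by
  rw [← Measure.restrict_congr_set Ioo_ae_eq_Icc]
  filter_upwards [ae_restrict_mem measurableSet_Ioo] with x hx using h x hx

lemma II.sub {g : ℝ → ℝ} (hg : IntervalIntegrable g volume 0 1) {c d : ℝ}
    (hc : 0 ≤ c) (hcd : c ≤ d) (hd1 : d ≤ 1) : IntervalIntegrable g volume c d :=
  hg.mono_set (by rw [Set.uIcc_of_le hcd, Set.uIcc_of_le zero_le_one]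
                  exact Set.Icc_subset_Icc hc hd1)

/-- Master analytic estimates for a piecewise-C¹ path. -/
lemma path_estimates {γ : ℝ → ℝ × ℝ × ℝ} (hγ : PiecewiseC1 γ) :
    (∀ t ∈ Set.Icc (0:ℝ) 1, |(γ t).2.2 - (γ 0).2.2| ≤ solLength γ) ∧
    |(γ 1).1 - (γ 0).1| ≤ Real.exp (((γ 0).2.2 + solLength γ) / 2) * solLength γ ∧
    |(γ 1).2.1 - (γ 0).2.1| ≤ Real.exp ((solLength γ - (γ 0).2.2) / 2) * solLength γ := by
  obtain ⟨n, τ, h0, h1, hm, hsm⟩ := hγ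
  have hspeedInt : IntervalIntegrable (speed γ) volume 0 1 := by
    have := glue_integrable (g := speed γ) (τ := τ)
      (fun i hi => speed_piece_integrable (hm i hi) (hsm i hi)) n le_rfl
    rwa [h0, h1] at this
  have hZint : IntervalIntegrable (deriv (fun s => (γ s).2.2)) volume 0 1 := by
    have := glue_integrable (g := deriv (fun s => (γ s).2.2)) (τ := τ)
      (fun i hi => piece_integrable (hm i hi) (hsm i hi).snd.snd) n le_rfl
    rwa [h0, h1] at this
  have hXint : IntervalIntegrable (deriv (fun s => (γ s).1)) volume 0 1 := by
    have := glue_integrable (g := deriv (fun s => (γ s).1)) (τ := τ)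
      (fun i hi => piece_integrable (hm i hi) (hsm i hi).fst) n le_rfl
    rwa [h0, h1] at this
  have hYint : IntervalIntegrable (deriv (fun s => (γ s).2.1)) volume 0 1 := by
    have := glue_integrable (g := deriv (fun s => (γ s).2.1)) (τ := τ)
      (fun i hi => piece_integrable (hm i hi) (hsm i hi).snd.fst) n le_rfl
    rwa [h0, h1] at this
  have hZftc : ∀ t ∈ Set.Icc (0:ℝ) 1, ∫ u in (0:ℝ)..t, deriv (fun s => (γ s).2.2) u
      = (γ t).2.2 - (γ 0).2.2 := by
    intro t ht
    have := glue_ftc (f := fun s => (γ s).2.2) hm (fun i hi => (hsm i hi).snd.snd) n le_rfl t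
      (by rw [h0, h1]; exact ht)
    rwa [h0] at this
  have hXftc : ∫ u in (0:ℝ)..1, deriv (fun s => (γ s).1) u = (γ 1).1 - (γ 0).1 := by
    have := glue_ftc (f := fun s => (γ s).1) hm (fun i hi => (hsm i hi).fst) n le_rfl 1
      (by rw [h0, h1]; exact ⟨zero_le_one, le_rfl⟩)
    rwa [h0] at this
  have hYftc : ∫ u in (0:ℝ)..1, deriv (fun s => (γ s).2.1) u = (γ 1).2.1 - (γ 0).2.1 := by
    have := glue_ftc (f := fun s => (γ s).2.1) hm (fun i hi => (hsm i hi).snd.fst) n le_rfl 1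
      (by rw [h0, h1]; exact ⟨zero_le_one, le_rfl⟩)
    rwa [h0] at this
  have hZbound : ∀ t ∈ Set.Icc (0:ℝ) 1, |(γ t).2.2 - (γ 0).2.2| ≤ solLength γ := by
    intro t ht
    rw [← hZftc t ht]
    calc |∫ u in (0:ℝ)..t, deriv (fun s => (γ s).2.2) u|
        ≤ ∫ u in (0:ℝ)..t, |deriv (fun s => (γ s).2.2) u| :=
          intervalIntegral.abs_integral_le_integral_abs ht.1
      _ ≤ ∫ u in (0:ℝ)..t, speed γ u := by
          apply intervalIntegral.integral_mono_on ht.1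
            ((II.sub hZint le_rfl ht.1 ht.2).abs)
            (II.sub hspeedInt le_rfl ht.1 ht.2)
          intro x _
          exact abs_deriv_z_le_speed γ x
      _ ≤ ∫ u in (0:ℝ)..1, speed γ u := by
          rw [← intervalIntegral.integral_add_adjacent_intervals
            (II.sub hspeedInt le_rfl ht.1 ht.2)
            (II.sub hspeedInt ht.1 ht.2 le_rfl)]
          have : 0 ≤ ∫ u in t..1, speed γ u :=
            intervalIntegral.integral_nonneg ht.2 (fun u _ => speed_nonneg γ u)
          linarith
      _ = solLength γ := (solLength_eq γ).symm
  refine ⟨hZbound, ?_, ?_⟩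
  · rw [← hXftc]
    calc |∫ u in (0:ℝ)..1, deriv (fun s => (γ s).1) u|
        ≤ ∫ u in (0:ℝ)..1, |deriv (fun s => (γ s).1) u| :=
          intervalIntegral.abs_integral_le_integral_abs zero_le_one
      _ ≤ ∫ u in (0:ℝ)..1, Real.exp (((γ 0).2.2 + solLength γ) / 2) * speed γ u := by
          apply intervalIntegral.integral_mono_on zero_le_one hXint.abs
            (hspeedInt.const_mul _)
          intro x hx
          calc |deriv (fun s => (γ s).1) x| ≤ Real.exp ((γ x).2.2 / 2) * speed γ x :=
                abs_deriv_x_le γ x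
            _ ≤ Real.exp (((γ 0).2.2 + solLength γ) / 2) * speed γ x := by
                apply mul_le_mul_of_nonneg_right _ (speed_nonneg γ x)
                apply Real.exp_le_exp.mpr
                have := hZbound x hx
                have h := abs_le.mp this
                linarith [h.2]
      _ = Real.exp (((γ 0).2.2 + solLength γ) / 2) * solLength γ := by
          rw [intervalIntegral.integral_const_mul, ← solLength_eq]
  · rw [← hYftc]
    calc |∫ u in (0:ℝ)..1, deriv (fun s => (γ s).2.1) u|
        ≤ ∫ u in (0:ℝ)..1, |deriv (fun s => (γ s).2.1) u| :=
          intervalIntegral.abs_integral_le_integral_abs zero_le_one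
      _ ≤ ∫ u in (0:ℝ)..1, Real.exp ((solLength γ - (γ 0).2.2) / 2) * speed γ u := by
          apply intervalIntegral.integral_mono_on zero_le_one hYint.abs
            (hspeedInt.const_mul _)
          intro x hx
          calc |deriv (fun s => (γ s).2.1) x| ≤ Real.exp (-(γ x).2.2 / 2) * speed γ x :=
                abs_deriv_y_le γ x
            _ ≤ Real.exp ((solLength γ - (γ 0).2.2) / 2) * speed γ x := by
                apply mul_le_mul_of_nonneg_right _ (speed_nonneg γ x)
                apply Real.exp_le_exp.mpr
                have h := abs_le.mp (hZbound x hx)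
                linarith [h.1]
      _ = Real.exp ((solLength γ - (γ 0).2.2) / 2) * solLength γ := by
          rw [intervalIntegral.integral_const_mul, ← solLength_eq]

def pathSet (p q : ℝ × ℝ × ℝ) : Set ℝ :=
  {ℓ : ℝ | ∃ γ : ℝ → ℝ × ℝ × ℝ, γ 0 = p ∧ γ 1 = q ∧ PiecewiseC1 γ ∧ solLength γ = ℓ}

lemma dSol_eq (p q : ℝ × ℝ × ℝ) : dSol p q = sInf (pathSet p q) := rfl

lemma line_piecewiseC1 (p q : ℝ × ℝ × ℝ) : PiecewiseC1 (fun t : ℝ => p + t • (q - p)) := by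
  refine ⟨1, fun i => if i = 0 then 0 else 1, by simp, by simp, ?_, ?_⟩
  · intro i hi
    interval_cases i
    simp
  · intro i hi
    interval_cases i
    exact (contDiff_const.add (contDiff_id.smul contDiff_const)).contDiffOn

lemma pathSet_nonempty (p q : ℝ × ℝ × ℝ) : (pathSet p q).Nonempty := by
  refine ⟨solLength (fun t : ℝ => p + t • (q - p)), fun t : ℝ => p + t • (q - p), by simp, ?_,
    line_piecewiseC1 p q, rfl⟩
  simp

lemma pathSet_bddBelow (p q : ℝ × ℝ × ℝ) : BddBelow (pathSet p q) := by
  refine ⟨0, fun ℓ hℓ => ?_⟩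
  obtain ⟨γ, -, -, -, hlen⟩ := hℓ
  rw [← hlen]; exact solLength_nonneg γ

lemma dSol_nonneg (p q : ℝ × ℝ × ℝ) : 0 ≤ dSol p q :=
  le_csInf (pathSet_nonempty p q) (fun ℓ hℓ => by
    obtain ⟨γ, -, -, -, hlen⟩ := hℓ
    rw [← hlen]; exact solLength_nonneg γ)

lemma height_lipschitz (p q : ℝ × ℝ × ℝ) : |solHeight q - solHeight p| ≤ dSol p q := by
  apply le_csInf (pathSet_nonempty p q)
  rintro ℓ ⟨γ, hγ0, hγ1, hpc, hlen⟩
  have := (path_estimates hpc).1 1 ⟨zero_le_one, le_rfl⟩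
  rw [hγ0, hγ1, hlen] at this
  exact this

lemma exists_good_path (p q : ℝ × ℝ × ℝ) :
    ∃ γ : ℝ → ℝ × ℝ × ℝ, γ 0 = p ∧ γ 1 = q ∧ PiecewiseC1 γ ∧ solLength γ < dSol p q + 1 := by
  obtain ⟨ℓ, hℓ, hlt⟩ := Real.lt_sInf_add_pos (pathSet_nonempty p q) (by norm_num : (0:ℝ) < 1)
  obtain ⟨γ, hγ0, hγ1, hpc, hlen⟩ := hℓ
  exact ⟨γ, hγ0, hγ1, hpc, by rw [hlen]; exact hlt⟩

lemma link_bounds (p q : ℝ × ℝ × ℝ) {D : ℝ} (hD : dSol p q + 1 ≤ D) :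
    |q.1 - p.1| ≤ Real.exp ((p.2.2 + D) / 2) * D ∧
    |q.2.1 - p.2.1| ≤ Real.exp ((D - p.2.2) / 2) * D := by
  obtain ⟨γ, hγ0, hγ1, hpc, hlen⟩ := exists_good_path p q
  have hℓ0 : 0 ≤ solLength γ := solLength_nonneg γ
  have hℓD : solLength γ ≤ D := le_trans hlen.le (by linarith [dSol_nonneg p q])
  obtain ⟨-, hx, hy⟩ := path_estimates hpc
  rw [hγ0, hγ1] at hx hy
  constructor
  · refine le_trans hx ?_
    have h1 : Real.exp ((p.2.2 + solLength γ) / 2) ≤ Real.exp ((p.2.2 + D) / 2) :=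
      Real.exp_le_exp.mpr (by linarith)
    calc Real.exp ((p.2.2 + solLength γ) / 2) * solLength γ
        ≤ Real.exp ((p.2.2 + D) / 2) * solLength γ := mul_le_mul_of_nonneg_right h1 hℓ0
      _ ≤ Real.exp ((p.2.2 + D) / 2) * D := mul_le_mul_of_nonneg_left hℓD (Real.exp_pos _).le
  · refine le_trans hy ?_
    have h1 : Real.exp ((solLength γ - p.2.2) / 2) ≤ Real.exp ((D - p.2.2) / 2) :=
      Real.exp_le_exp.mpr (by linarith)
    calc Real.exp ((solLength γ - p.2.2) / 2) * solLength γ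
        ≤ Real.exp ((D - p.2.2) / 2) * solLength γ := mul_le_mul_of_nonneg_right h1 hℓ0
      _ ≤ Real.exp ((D - p.2.2) / 2) * D := mul_le_mul_of_nonneg_left hℓD (Real.exp_pos _).le

lemma sqrt_exp_mul_sq (u d : ℝ) : Real.sqrt (Real.exp u * d ^ 2) = Real.exp (u / 2) * |d| := by
  have h2 : Real.exp (u / 2) ^ 2 = Real.exp u := by
    rw [sq, ← Real.exp_add, add_halves]
  have key : Real.exp u * d ^ 2 = (Real.exp (u / 2) * |d|) ^ 2 := by
    rw [mul_pow, sq_abs, h2]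
  rw [key, Real.sqrt_sq (by positivity)]

lemma deriv_affine (c m t : ℝ) : deriv (fun s => c + m * s) t = m := by
  have h : HasDerivAt (fun s : ℝ => c + m * s) m t := by
    simpa using (((hasDerivAt_id t).const_mul m).const_add c)
  exact h.deriv

lemma speed_const_of_affine {γ : ℝ → ℝ × ℝ × ℝ} {l r c₁ m₁ c₂ m₂ c₃ m₃ : ℝ}
    (hEq : Set.EqOn γ (fun t => (c₁ + m₁ * t, c₂ + m₂ * t, c₃ + m₃ * t)) (Set.Icc l r))
    {t : ℝ} (ht : t ∈ Set.Ioo l r) :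
    speed γ t = Real.sqrt (Real.exp (-(c₃ + m₃ * t)) * m₁ ^ 2 +
      Real.exp (c₃ + m₃ * t) * m₂ ^ 2 + m₃ ^ 2) := by
  have hnb : Set.Icc l r ∈ nhds t := Icc_mem_nhds ht.1 ht.2
  have hev : γ =ᶠ[nhds t] (fun t => (c₁ + m₁ * t, c₂ + m₂ * t, c₃ + m₃ * t)) :=
    Filter.eventuallyEq_of_mem hnb hEq
  have hX : deriv (fun s => (γ s).1) t = m₁ := by
    have h2 : (fun s => (γ s).1) =ᶠ[nhds t] (fun s => c₁ + m₁ * s) :=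
      hev.mono (fun s hs => by simp only [hs])
    rw [h2.deriv_eq, deriv_affine]
  have hY : deriv (fun s => (γ s).2.1) t = m₂ := by
    have h2 : (fun s => (γ s).2.1) =ᶠ[nhds t] (fun s => c₂ + m₂ * s) :=
      hev.mono (fun s hs => by simp only [hs])
    rw [h2.deriv_eq, deriv_affine]
  have hZ : deriv (fun s => (γ s).2.2) t = m₃ := by
    have h2 : (fun s => (γ s).2.2) =ᶠ[nhds t] (fun s => c₃ + m₃ * s) :=
      hev.mono (fun s hs => by simp only [hs])
    rw [h2.deriv_eq, deriv_affine]
  have hz : (γ t).2.2 = c₃ + m₃ * t := by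
    rw [hEq (Set.Ioo_subset_Icc_self ht)]
  simp only [speed, hX, hY, hZ, hz]

lemma integral_speed_piece_le {γ : ℝ → ℝ × ℝ × ℝ} {l r cst : ℝ} (hlr : l ≤ r)
    (hll : 0 ≤ l) (hr1 : r ≤ 1) (hint : IntervalIntegrable (speed γ) volume 0 1)
    (hc : ∀ t ∈ Set.Ioo l r, speed γ t = cst) :
    ∫ t in l..r, speed γ t ≤ (r - l) * cst := by
  have hI := II.sub hint hll hlr hr1
  calc ∫ t in l..r, speed γ t ≤ ∫ _t in l..r, cst :=
        intervalIntegral.integral_mono_ae_restrict hlr hI intervalIntegrable_const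
          (ae_Icc_of_Ioo (fun x hx => (hc x hx).le))
    _ = (r - l) * cst := by rw [intervalIntegral.integral_const, smul_eq_mul]

section CmpPath

variable (x₁ y₁ x₂ y₂ h a b : ℝ)

def cmp : ℝ → ℝ × ℝ × ℝ := fun t =>
  (if t ≤ 1/5 then x₁ else if t ≤ 2/5 then x₁ + (5*t-1)*(x₂-x₁) else x₂,
   if t ≤ 3/5 then y₁ else if t ≤ 4/5 then y₁ + (5*t-3)*(y₂-y₁) else y₂,
   if t ≤ 1/5 then h + 5*a*t else if t ≤ 2/5 then h + a else
     if t ≤ 3/5 then h + a + 2*(a+b) - 5*(a+b)*t else if t ≤ 4/5 then h - b else h - 5*b + 5*b*t)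

lemma cmp_eq0 : Set.EqOn (cmp x₁ y₁ x₂ y₂ h a b)
    (fun t => (x₁ + 0 * t, y₁ + 0 * t, h + (5*a) * t)) (Set.Icc 0 (1/5)) := by
  intro t ht
  simp only [cmp]
  rw [if_pos ht.2, if_pos (show t ≤ 3/5 by linarith [ht.2]), if_pos ht.2]
  simp only [Prod.mk.injEq]
  exact ⟨by ring, by ring, trivial⟩

lemma cmp_eq1 : Set.EqOn (cmp x₁ y₁ x₂ y₂ h a b)
    (fun t => ((x₁ - (x₂-x₁)) + (5*(x₂-x₁)) * t, y₁ + 0 * t, (h+a) + 0 * t)) (Set.Icc (1/5) (2/5)) := by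
  intro t ht
  simp only [cmp, Prod.mk.injEq]
  refine ⟨?_, ?_, ?_⟩
  · by_cases hc : t ≤ 1/5
    · have he : t = 1/5 := le_antisymm hc ht.1
      rw [if_pos hc, he]; ring
    · rw [if_neg hc, if_pos ht.2]; ring
  · rw [if_pos (show t ≤ 3/5 by linarith [ht.2])]; ring
  · by_cases hc : t ≤ 1/5
    · have he : t = 1/5 := le_antisymm hc ht.1
      rw [if_pos hc, he]; ring
    · rw [if_neg hc, if_pos ht.2]; ring

lemma cmp_eq2 : Set.EqOn (cmp x₁ y₁ x₂ y₂ h a b)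
    (fun t => (x₂ + 0 * t, y₁ + 0 * t, (h + a + 2*(a+b)) + (-(5*(a+b))) * t)) (Set.Icc (2/5) (3/5)) := by
  intro t ht
  have hn1 : ¬ t ≤ 1/5 := by
    have := ht.1; intro hcon; linarith
  simp only [cmp, Prod.mk.injEq]
  refine ⟨?_, ?_, ?_⟩
  · by_cases hc : t ≤ 2/5
    · have he : t = 2/5 := le_antisymm hc ht.1
      rw [if_neg hn1, if_pos hc, he]; ring
    · rw [if_neg hn1, if_neg hc]; ring
  · rw [if_pos (show t ≤ 3/5 from ht.2)]; ring
  · by_cases hc : t ≤ 2/5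
    · have he : t = 2/5 := le_antisymm hc ht.1
      rw [if_neg hn1, if_pos hc, he]; ring
    · rw [if_neg hn1, if_neg hc, if_pos ht.2]; ring

lemma cmp_eq3 : Set.EqOn (cmp x₁ y₁ x₂ y₂ h a b)
    (fun t => (x₂ + 0 * t, (y₁ - 3*(y₂-y₁)) + (5*(y₂-y₁)) * t, (h - b) + 0 * t)) (Set.Icc (3/5) (4/5)) := by
  intro t ht
  have hn1 : ¬ t ≤ 1/5 := by
    have := ht.1; intro hcon; linarith
  have hn2 : ¬ t ≤ 2/5 := by
    have := ht.1; intro hcon; linarith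
  simp only [cmp, Prod.mk.injEq]
  refine ⟨?_, ?_, ?_⟩
  · rw [if_neg hn1, if_neg hn2]; ring
  · by_cases hc : t ≤ 3/5
    · have he : t = 3/5 := le_antisymm hc ht.1
      rw [if_pos hc, he]; ring
    · rw [if_neg hc, if_pos ht.2]; ring
  · by_cases hc : t ≤ 3/5
    · have he : t = 3/5 := le_antisymm hc ht.1
      rw [if_neg hn1, if_neg hn2, if_pos hc, he]; ring
    · rw [if_neg hn1, if_neg hn2, if_neg hc, if_pos ht.2]; ring

lemma cmp_eq4 : Set.EqOn (cmp x₁ y₁ x₂ y₂ h a b)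
    (fun t => (x₂ + 0 * t, y₂ + 0 * t, (h - 5*b) + (5*b) * t)) (Set.Icc (4/5) 1) := by
  intro t ht
  have hn1 : ¬ t ≤ 1/5 := by
    have := ht.1; intro hcon; linarith
  have hn2 : ¬ t ≤ 2/5 := by
    have := ht.1; intro hcon; linarith
  have hn3 : ¬ t ≤ 3/5 := by
    have := ht.1; intro hcon; linarith
  simp only [cmp, Prod.mk.injEq]
  refine ⟨?_, ?_, ?_⟩
  · rw [if_neg hn1, if_neg hn2]; ring
  · by_cases hc : t ≤ 4/5
    · have he : t = 4/5 := le_antisymm hc ht.1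
      rw [if_neg hn3, if_pos hc, he]; ring
    · rw [if_neg hn3, if_neg hc]; ring
  · by_cases hc : t ≤ 4/5
    · have he : t = 4/5 := le_antisymm hc ht.1
      rw [if_neg hn1, if_neg hn2, if_neg hn3, if_pos hc, he]; ring
    · rw [if_neg hn1, if_neg hn2, if_neg hn3, if_neg hc]

lemma cmp_pc1 : PiecewiseC1 (cmp x₁ y₁ x₂ y₂ h a b) := by
  refine ⟨5, fun i => (i : ℝ)/5, by norm_num, by norm_num, ?_, ?_⟩
  · intro i _
    have hle : (i : ℝ) ≤ (i : ℝ) + 1 := by linarith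
    push_cast
    linarith
  · intro i hi
    interval_cases i
    · exact ((by fun_prop : ContDiff ℝ 1
        (fun t : ℝ => (x₁ + 0 * t, y₁ + 0 * t, h + (5*a) * t))).contDiffOn).congr
        (fun x hx => by
          rw [Set.mem_Icc] at hx; push_cast at hx
          exact cmp_eq0 x₁ y₁ x₂ y₂ h a b
            (Set.mem_Icc.mpr ⟨by linarith [hx.1], by linarith [hx.2]⟩))
    · exact ((by fun_prop : ContDiff ℝ 1
        (fun t : ℝ => ((x₁ - (x₂-x₁)) + (5*(x₂-x₁)) * t, y₁ + 0 * t, (h+a) + 0 * t))).contDiffOn).congr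
        (fun x hx => by
          rw [Set.mem_Icc] at hx; push_cast at hx
          exact cmp_eq1 x₁ y₁ x₂ y₂ h a b
            (Set.mem_Icc.mpr ⟨by linarith [hx.1], by linarith [hx.2]⟩))
    · exact ((by fun_prop : ContDiff ℝ 1
        (fun t : ℝ => (x₂ + 0 * t, y₁ + 0 * t, (h + a + 2*(a+b)) + (-(5*(a+b))) * t))).contDiffOn).congr
        (fun x hx => by
          rw [Set.mem_Icc] at hx; push_cast at hx
          exact cmp_eq2 x₁ y₁ x₂ y₂ h a b
            (Set.mem_Icc.mpr ⟨by linarith [hx.1], by linarith [hx.2]⟩))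
    · exact ((by fun_prop : ContDiff ℝ 1
        (fun t : ℝ => (x₂ + 0 * t, (y₁ - 3*(y₂-y₁)) + (5*(y₂-y₁)) * t, (h - b) + 0 * t))).contDiffOn).congr
        (fun x hx => by
          rw [Set.mem_Icc] at hx; push_cast at hx
          exact cmp_eq3 x₁ y₁ x₂ y₂ h a b
            (Set.mem_Icc.mpr ⟨by linarith [hx.1], by linarith [hx.2]⟩))
    · exact ((by fun_prop : ContDiff ℝ 1
        (fun t : ℝ => (x₂ + 0 * t, y₂ + 0 * t, (h - 5*b) + (5*b) * t))).contDiffOn).congr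
        (fun x hx => by
          rw [Set.mem_Icc] at hx; push_cast at hx
          exact cmp_eq4 x₁ y₁ x₂ y₂ h a b
            (Set.mem_Icc.mpr ⟨by linarith [hx.1], by linarith [hx.2]⟩))

lemma dSol_le_cmp (ha : 0 ≤ a) (hb : 0 ≤ b) :
    dSol (x₁, y₁, h) (x₂, y₂, h) ≤
      2*a + 2*b + Real.exp (-(h+a)/2) * |x₂ - x₁| + Real.exp ((h-b)/2) * |y₂ - y₁| := by
  have hpc := cmp_pc1 x₁ y₁ x₂ y₂ h a b
  have hspeed := speed_integrable hpc
  have h0 : cmp x₁ y₁ x₂ y₂ h a b 0 = (x₁, y₁, h) := by norm_num [cmp]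
  have h1 : cmp x₁ y₁ x₂ y₂ h a b 1 = (x₂, y₂, h) := by norm_num [cmp]
  have hd : dSol (x₁, y₁, h) (x₂, y₂, h) ≤ solLength (cmp x₁ y₁ x₂ y₂ h a b) :=
    csInf_le (pathSet_bddBelow _ _) ⟨cmp x₁ y₁ x₂ y₂ h a b, h0, h1, hpc, rfl⟩
  have hs0 : ∀ t ∈ Set.Ioo (0:ℝ) (1/5), speed (cmp x₁ y₁ x₂ y₂ h a b) t = 5*a := by
    intro t ht
    rw [speed_const_of_affine (cmp_eq0 x₁ y₁ x₂ y₂ h a b) ht]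
    norm_num
    rw [show (5*a)^2 = Real.exp 0 * (5*a)^2 by rw [Real.exp_zero]; ring, sqrt_exp_mul_sq]
    rw [abs_of_nonneg (by linarith : (0:ℝ) ≤ 5*a)]
    norm_num
  have hs1 : ∀ t ∈ Set.Ioo (1/5:ℝ) (2/5), speed (cmp x₁ y₁ x₂ y₂ h a b) t
      = Real.exp (-(h+a)/2) * (5*|x₂ - x₁|) := by
    intro t ht
    rw [speed_const_of_affine (cmp_eq1 x₁ y₁ x₂ y₂ h a b) ht]
    norm_num
    rw [sqrt_exp_mul_sq, abs_mul]
    norm_num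
  have hs2 : ∀ t ∈ Set.Ioo (2/5:ℝ) (3/5), speed (cmp x₁ y₁ x₂ y₂ h a b) t = 5*(a+b) := by
    intro t ht
    rw [speed_const_of_affine (cmp_eq2 x₁ y₁ x₂ y₂ h a b) ht]
    norm_num
    rw [show (5*(a+b))^2 = Real.exp 0 * (5*(a+b))^2 by rw [Real.exp_zero]; ring, sqrt_exp_mul_sq]
    rw [abs_of_nonneg (by linarith : (0:ℝ) ≤ 5*(a+b))]
    norm_num
  have hs3 : ∀ t ∈ Set.Ioo (3/5:ℝ) (4/5), speed (cmp x₁ y₁ x₂ y₂ h a b) t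
      = Real.exp ((h-b)/2) * (5*|y₂ - y₁|) := by
    intro t ht
    rw [speed_const_of_affine (cmp_eq3 x₁ y₁ x₂ y₂ h a b) ht]
    norm_num
    rw [sqrt_exp_mul_sq, abs_mul]
    norm_num
  have hs4 : ∀ t ∈ Set.Ioo (4/5:ℝ) 1, speed (cmp x₁ y₁ x₂ y₂ h a b) t = 5*b := by
    intro t ht
    rw [speed_const_of_affine (cmp_eq4 x₁ y₁ x₂ y₂ h a b) ht]
    norm_num
    rw [show (5*b)^2 = Real.exp 0 * (5*b)^2 by rw [Real.exp_zero]; ring, sqrt_exp_mul_sq]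
    rw [abs_of_nonneg (by linarith : (0:ℝ) ≤ 5*b)]
    norm_num
  have I1 := II.sub hspeed (by norm_num : (0:ℝ) ≤ 0) (by norm_num : (0:ℝ) ≤ 1/5) (by norm_num)
  have I2 := II.sub hspeed (by norm_num : (0:ℝ) ≤ 1/5) (by norm_num : (1/5:ℝ) ≤ 2/5) (by norm_num)
  have I3 := II.sub hspeed (by norm_num : (0:ℝ) ≤ 2/5) (by norm_num : (2/5:ℝ) ≤ 3/5) (by norm_num)
  have I4 := II.sub hspeed (by norm_num : (0:ℝ) ≤ 3/5) (by norm_num : (3/5:ℝ) ≤ 4/5) (by norm_num)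
  have I5 := II.sub hspeed (by norm_num : (0:ℝ) ≤ 4/5) (by norm_num : (4/5:ℝ) ≤ 1) (by norm_num)
  have I02 := II.sub hspeed (le_refl 0) (by norm_num : (0:ℝ) ≤ 2/5) (by norm_num)
  have I03 := II.sub hspeed (le_refl 0) (by norm_num : (0:ℝ) ≤ 3/5) (by norm_num)
  have I04 := II.sub hspeed (le_refl 0) (by norm_num : (0:ℝ) ≤ 4/5) (by norm_num)
  have E1 := intervalIntegral.integral_add_adjacent_intervals I1 I2
  have E2 := intervalIntegral.integral_add_adjacent_intervals I02 I3
  have E3 := intervalIntegral.integral_add_adjacent_intervals I03 I4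
  have E4 := intervalIntegral.integral_add_adjacent_intervals I04 I5
  have B0 := integral_speed_piece_le (by norm_num : (0:ℝ) ≤ 1/5) le_rfl (by norm_num) hspeed hs0
  have B1 := integral_speed_piece_le (by norm_num : (1/5:ℝ) ≤ 2/5) (by norm_num) (by norm_num) hspeed hs1
  have B2 := integral_speed_piece_le (by norm_num : (2/5:ℝ) ≤ 3/5) (by norm_num) (by norm_num) hspeed hs2
  have B3 := integral_speed_piece_le (by norm_num : (3/5:ℝ) ≤ 4/5) (by norm_num) (by norm_num) hspeed hs3
  have B4 := integral_speed_piece_le (by norm_num : (4/5:ℝ) ≤ 1) (by norm_num) le_rfl hspeed hs4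
  rw [show ((1:ℝ)/5 - 0) * (5*a) = a from by ring] at B0
  rw [show ((2:ℝ)/5 - 1/5) * (Real.exp (-(h+a)/2) * (5*|x₂ - x₁|))
      = Real.exp (-(h+a)/2) * |x₂ - x₁| from by ring] at B1
  rw [show ((3:ℝ)/5 - 2/5) * (5*(a+b)) = a + b from by ring] at B2
  rw [show ((4:ℝ)/5 - 3/5) * (Real.exp ((h-b)/2) * (5*|y₂ - y₁|))
      = Real.exp ((h-b)/2) * |y₂ - y₁| from by ring] at B3
  rw [show ((1:ℝ) - 4/5) * (5*b) = b from by ring] at B4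
  have hlen : solLength (cmp x₁ y₁ x₂ y₂ h a b)
      ≤ 2*a + 2*b + Real.exp (-(h+a)/2) * |x₂ - x₁| + Real.exp ((h-b)/2) * |y₂ - y₁| := by
    rw [solLength_eq]
    linarith
  linarith

end CmpPath

/-- The threshold above which the excursion argument works. -/
def Pmin (K C : ℝ) : ℝ :=
  4*K*(C + 8*Real.log ((K+1)*(C+1)) + 4*((K+1)*(C+1)) + 8*Real.log (32*K) + 2)

lemma E₁_ge_two {K C : ℝ} (hK : 1 ≤ K) (hC : 0 ≤ C) : 2 ≤ (K+1)*(C+1) := by nlinarith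

lemma log32K_ge_one {K : ℝ} (hK : 1 ≤ K) : 1 ≤ Real.log (32*K) := by
  rw [Real.le_log_iff_exp_le (by linarith)]
  have := Real.exp_one_lt_d9
  linarith

lemma Pmin_pos {K C : ℝ} (hK : 1 ≤ K) (hC : 0 ≤ C) : 0 < Pmin K C := by
  have h1 := log32K_ge_one hK
  have h2 : (0:ℝ) ≤ Real.log ((K+1)*(C+1)) :=
    Real.log_nonneg (by nlinarith [E₁_ge_two hK hC])
  have h3 := E₁_ge_two hK hC
  unfold Pmin
  nlinarith

/-- **Excursion lemma**: a quasi-geodesic segment between two points at equal height,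
of sufficiently long duration, must deviate in height by a definite amount. -/
lemma excursion {K C L : ℝ} (hK : 1 ≤ K) (hC : 0 ≤ C)
    {α : ℝ → ℝ × ℝ × ℝ} (hα : IsQGeoOn dSol K C α L)
    {t₁ t₂ : ℝ} (h0t : 0 ≤ t₁) (h12 : t₁ ≤ t₂) (htL : t₂ ≤ L)
    (hh : solHeight (α t₂) = solHeight (α t₁))
    (hbig : Pmin K C ≤ t₂ - t₁) :
    ∃ s ∈ Set.Icc t₁ t₂, (t₂ - t₁)/(8*K) ≤ |solHeight (α s) - solHeight (α t₁)| := by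
  by_contra hcon
  push_neg at hcon
  set P := t₂ - t₁ with hPdef
  have hK0 : (0:ℝ) < K := by linarith
  have hP : 0 < P := lt_of_lt_of_le (Pmin_pos hK hC) hbig
  set E₁ := (K+1)*(C+1) with hE₁def
  have hE₁2 : 2 ≤ E₁ := E₁_ge_two hK hC
  set δ := C + 1 with hδdef
  have hδ : 0 < δ := by linarith
  set u := P/(8*K) with hudef
  have hu0 : 0 ≤ u := by positivity
  set h₀ := solHeight (α t₁) with hh₀def
  -- the chain
  set n := ⌈P/δ⌉₊ with hndef
  have hn : 0 < n := Nat.ceil_pos.mpr (div_pos hP hδ)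
  have hnR : (0:ℝ) < n := by exact_mod_cast hn
  set sp : ℕ → ℝ := fun i => t₁ + i*(P/n) with hspdef
  have hsp0 : sp 0 = t₁ := by simp [hspdef]
  have hspn : sp n = t₂ := by
    simp only [hspdef]
    rw [mul_div_cancel₀ _ (ne_of_gt hnR)]
    simp [hPdef]
  have hsp_mem : ∀ i ≤ n, sp i ∈ Set.Icc t₁ t₂ := by
    intro i hi
    have hiR : (i:ℝ) ≤ n := by exact_mod_cast hi
    constructor
    · simp only [hspdef]
      have : 0 ≤ (i:ℝ)*(P/n) := by positivity
      linarith
    · simp only [hspdef]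
      have h1 : (i:ℝ)*(P/n) ≤ n*(P/n) :=
        mul_le_mul_of_nonneg_right hiR (by positivity)
      rw [mul_div_cancel₀ _ (ne_of_gt hnR)] at h1
      linarith
  have hsp_mem' : ∀ i ≤ n, sp i ∈ Set.Icc 0 L := by
    intro i hi
    obtain ⟨a1, a2⟩ := hsp_mem i hi
    exact ⟨le_trans h0t a1, le_trans a2 htL⟩
  have hspace : P/n ≤ δ := by
    rw [div_le_iff₀ hnR]
    have h1 : P/δ ≤ n := Nat.le_ceil _
    calc P = (P/δ)*δ := by field_simp
      _ ≤ n*δ := mul_le_mul_of_nonneg_right h1 hδ.le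
      _ = δ*n := by ring
  have hstep : ∀ i : ℕ, sp (i+1) - sp i = P/n := by
    intro i
    simp only [hspdef]
    push_cast
    ring
  have hlink : ∀ i < n, dSol (α (sp i)) (α (sp (i+1))) + 1 ≤ E₁ := by
    intro i hi
    have h1 := (hα (sp i) (hsp_mem' i (by omega)) (sp (i+1)) (hsp_mem' (i+1) (by omega))).2
    have h2 : |sp i - sp (i+1)| = P/n := by
      rw [abs_sub_comm, abs_of_nonneg]
      · exact hstep i
      · rw [hstep i]; positivity
    rw [h2] at h1
    have h3 : K*(P/n) ≤ K*δ := mul_le_mul_of_nonneg_left hspace hK0.le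
    have h4 : K*δ + C + 1 = E₁ := by rw [hδdef, hE₁def]; ring
    calc dSol (α (sp i)) (α (sp (i+1))) + 1 ≤ K*(P/n) + C + 1 := by linarith
      _ ≤ K*δ + C + 1 := by linarith
      _ = E₁ := h4
  have hzb : ∀ i ≤ n, ((α (sp i)).2.2 : ℝ) < h₀ + u ∧ h₀ - u < (α (sp i)).2.2 := by
    intro i hi
    have h1 := abs_lt.mp (hcon (sp i) (hsp_mem i hi))
    simp only [solHeight] at h1
    exact ⟨by linarith [h1.2], by linarith [h1.1]⟩
  have hn_le : (n:ℝ) ≤ P + 1 := by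
    have h1 : (n:ℝ) < P/δ + 1 := Nat.ceil_lt_add_one (by positivity)
    have h2 : P/δ ≤ P := by
      rw [div_le_iff₀ hδ]
      nlinarith
    linarith
  set G := (P+1)*E₁ with hGdef
  have hG1 : 1 ≤ G := by nlinarith
  have hG0 : 0 < G := by linarith
  have hlogG : 0 ≤ Real.log G := Real.log_nonneg hG1
  set A := 2*Real.log G + (u + E₁) with hAdef
  have hA0 : 0 ≤ A := by
    rw [hAdef]
    linarith
  have hXlink : ∀ i < n, |(α (sp (i+1))).1 - (α (sp i)).1|
      ≤ Real.exp ((h₀ + u + E₁)/2) * E₁ := by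
    intro i hi
    have hb := (link_bounds (α (sp i)) (α (sp (i+1))) (hlink i hi)).1
    refine le_trans hb ?_
    have hz := (hzb i (le_of_lt hi)).1
    have he : Real.exp (((α (sp i)).2.2 + E₁)/2) ≤ Real.exp ((h₀ + u + E₁)/2) :=
      Real.exp_le_exp.mpr (by linarith)
    exact mul_le_mul_of_nonneg_right he (by linarith)
  have hYlink : ∀ i < n, |(α (sp (i+1))).2.1 - (α (sp i)).2.1|
      ≤ Real.exp ((u + E₁ - h₀)/2) * E₁ := by
    intro i hi
    have hb := (link_bounds (α (sp i)) (α (sp (i+1))) (hlink i hi)).2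
    refine le_trans hb ?_
    have hz := (hzb i (le_of_lt hi)).2
    have he : Real.exp ((E₁ - (α (sp i)).2.2)/2) ≤ Real.exp ((u + E₁ - h₀)/2) :=
      Real.exp_le_exp.mpr (by linarith)
    exact mul_le_mul_of_nonneg_right he (by linarith)
  have hXtot : |(α t₂).1 - (α t₁).1| ≤ G * Real.exp ((h₀ + u + E₁)/2) := by
    have e1 : (α t₂).1 - (α t₁).1
        = ∑ i ∈ Finset.range n, ((α (sp (i+1))).1 - (α (sp i)).1) := by
      rw [Finset.sum_range_sub (fun i => (α (sp i)).1) n, hsp0, hspn]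
    rw [e1]
    calc |∑ i ∈ Finset.range n, ((α (sp (i+1))).1 - (α (sp i)).1)|
        ≤ ∑ i ∈ Finset.range n, |(α (sp (i+1))).1 - (α (sp i)).1| :=
          Finset.abs_sum_le_sum_abs _ _
      _ ≤ ∑ _i ∈ Finset.range n, Real.exp ((h₀ + u + E₁)/2) * E₁ :=
          Finset.sum_le_sum (fun i hi => hXlink i (Finset.mem_range.mp hi))
      _ = n * (Real.exp ((h₀ + u + E₁)/2) * E₁) := by
          rw [Finset.sum_const, Finset.card_range, nsmul_eq_mul]
      _ ≤ (P+1) * (Real.exp ((h₀ + u + E₁)/2) * E₁) :=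
          mul_le_mul_of_nonneg_right hn_le (by positivity)
      _ = G * Real.exp ((h₀ + u + E₁)/2) := by rw [hGdef]; ring
  have hYtot : |(α t₂).2.1 - (α t₁).2.1| ≤ G * Real.exp ((u + E₁ - h₀)/2) := by
    have e1 : (α t₂).2.1 - (α t₁).2.1
        = ∑ i ∈ Finset.range n, ((α (sp (i+1))).2.1 - (α (sp i)).2.1) := by
      rw [Finset.sum_range_sub (fun i => (α (sp i)).2.1) n, hsp0, hspn]
    rw [e1]
    calc |∑ i ∈ Finset.range n, ((α (sp (i+1))).2.1 - (α (sp i)).2.1)|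
        ≤ ∑ i ∈ Finset.range n, |(α (sp (i+1))).2.1 - (α (sp i)).2.1| :=
          Finset.abs_sum_le_sum_abs _ _
      _ ≤ ∑ _i ∈ Finset.range n, Real.exp ((u + E₁ - h₀)/2) * E₁ :=
          Finset.sum_le_sum (fun i hi => hYlink i (Finset.mem_range.mp hi))
      _ = n * (Real.exp ((u + E₁ - h₀)/2) * E₁) := by
          rw [Finset.sum_const, Finset.card_range, nsmul_eq_mul]
      _ ≤ (P+1) * (Real.exp ((u + E₁ - h₀)/2) * E₁) :=
          mul_le_mul_of_nonneg_right hn_le (by positivity)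
      _ = G * Real.exp ((u + E₁ - h₀)/2) := by rw [hGdef]; ring
  have e2 : ((α t₂).1, (α t₂).2.1, h₀) = α t₂ := by rw [← hh]; rfl
  have e1' : ((α t₁).1, (α t₁).2.1, h₀) = α t₁ := rfl
  have hup : dSol (α t₁) (α t₂) ≤ 2*A + 2*A + Real.exp (-(h₀+A)/2) * |(α t₂).1 - (α t₁).1|
      + Real.exp ((h₀-A)/2) * |(α t₂).2.1 - (α t₁).2.1| := by
    have hcm := dSol_le_cmp ((α t₁).1) ((α t₁).2.1) ((α t₂).1) ((α t₂).2.1) h₀ A A hA0 hA0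
    rwa [e1', e2] at hcm
  have hterm1 : Real.exp (-(h₀+A)/2) * |(α t₂).1 - (α t₁).1| ≤ 1 := by
    calc Real.exp (-(h₀+A)/2) * |(α t₂).1 - (α t₁).1|
        ≤ Real.exp (-(h₀+A)/2) * (G * Real.exp ((h₀ + u + E₁)/2)) :=
          mul_le_mul_of_nonneg_left hXtot (Real.exp_pos _).le
      _ = G * Real.exp (-(h₀+A)/2 + (h₀ + u + E₁)/2) := by rw [Real.exp_add]; ring
      _ = G * Real.exp (-Real.log G) := by
          congr 1
          rw [hAdef]
          ring
      _ = 1 := by rw [Real.exp_neg, Real.exp_log hG0, mul_inv_cancel₀ (ne_of_gt hG0)]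
  have hterm2 : Real.exp ((h₀-A)/2) * |(α t₂).2.1 - (α t₁).2.1| ≤ 1 := by
    calc Real.exp ((h₀-A)/2) * |(α t₂).2.1 - (α t₁).2.1|
        ≤ Real.exp ((h₀-A)/2) * (G * Real.exp ((u + E₁ - h₀)/2)) :=
          mul_le_mul_of_nonneg_left hYtot (Real.exp_pos _).le
      _ = G * Real.exp ((h₀-A)/2 + (u + E₁ - h₀)/2) := by rw [Real.exp_add]; ring
      _ = G * Real.exp (-Real.log G) := by
          congr 1
          rw [hAdef]
          ring
      _ = 1 := by rw [Real.exp_neg, Real.exp_log hG0, mul_inv_cancel₀ (ne_of_gt hG0)]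
  have hlow : (1/K)*P - C ≤ dSol (α t₁) (α t₂) := by
    have hq := (hα t₁ ⟨h0t, le_trans h12 htL⟩ t₂ ⟨le_trans h0t h12, htL⟩).1
    rwa [show |t₁ - t₂| = P by rw [abs_sub_comm]; exact abs_of_nonneg (by linarith)] at hq
  -- final arithmetic
  clear hcon hα hXlink hYlink hXtot hYtot hsp_mem hsp_mem' hzb hlink hstep hspace hn_le
  clear hsp0 hspn hndef hspdef e2 e1'
  clear_value P E₁ δ u h₀ n sp G A
  clear hh hh₀def
  set Q := (1/K)*P with hQdef
  have hQu : 8*u = Q := by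
    rw [hudef, hQdef]
    field_simp
  have hlogG_eq : Real.log G = Real.log (P+1) + Real.log E₁ := by
    rw [hGdef, Real.log_mul (ne_of_gt (by linarith : (0:ℝ) < P+1)) (ne_of_gt (by linarith : (0:ℝ) < E₁))]
  have hF4 : Real.log (P+1) ≤ (Q+1)/32 - 1 + Real.log (32*K) := by
    have hd1 : Real.log ((P+1)/(32*K)) = Real.log (P+1) - Real.log (32*K) :=
      Real.log_div (by positivity) (by positivity)
    have hd2 : Real.log ((P+1)/(32*K)) ≤ (P+1)/(32*K) - 1 :=
      Real.log_le_sub_one_of_pos (by positivity)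
    have hd3 : (P+1)/(32*K) ≤ (Q+1)/32 := by
      have hQP : Q = P/K := by rw [hQdef]; ring
      have e : (P+1)/(32*K) = (P/K + 1/K)/32 := by
        field_simp
      rw [e, hQP]
      have hKinv : 1/K ≤ 1 := by
        rw [div_le_one hK0]; exact hK
      gcongr
    linarith
  have hF5 : 4*(C + 8*Real.log E₁ + 4*E₁ + 8*Real.log (32*K) + 2) ≤ Q := by
    have hp1 : (1/K)*(Pmin K C) = 4*(C + 8*Real.log E₁ + 4*E₁ + 8*Real.log (32*K) + 2) := by
      rw [Pmin, hE₁def, hδdef]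
      field_simp
    have hp2 : (1/K)*(Pmin K C) ≤ (1/K)*P :=
      mul_le_mul_of_nonneg_left hbig (by positivity)
    rw [hQdef]
    linarith
  linarith [hup, hterm1, hterm2, hlow, hQu, hAdef, hlogG_eq, hF4, hF5]

lemma sum_abs_ge (f : ℕ → ℝ) {a b : ℕ} (hab : a ≤ b) :
    |f b - f a| ≤ ∑ i ∈ Finset.Ico a b, |f (i+1) - f i| := by
  induction b, hab using Nat.le_induction with
  | base => simp
  | succ b hab ih =>
    rw [Finset.sum_Ico_succ_top (by omega : a ≤ b)]
    have e : f (b+1) - f a = (f b - f a) + (f (b+1) - f b) := by ring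
    have h := abs_add_le (f b - f a) (f (b+1) - f b)
    rw [e]
    linarith

lemma sum_abs_marked (f : ℕ → ℝ) {a i j k b : ℕ}
    (h1 : a ≤ i) (h2 : i ≤ j) (h3 : j ≤ k) (h4 : k ≤ b) :
    |f b - f a| + (|f j - f i| + |f k - f j| - |f k - f i|)
      ≤ ∑ l ∈ Finset.Ico a b, |f (l+1) - f l| := by
  have s1 := sum_abs_ge f h1
  have s2 := sum_abs_ge f h2
  have s3 := sum_abs_ge f h3
  have s4 := sum_abs_ge f h4
  have e1 : ∑ l ∈ Finset.Ico a i, |f (l+1) - f l| + ∑ l ∈ Finset.Ico i b, |f (l+1) - f l|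
      = ∑ l ∈ Finset.Ico a b, |f (l+1) - f l| :=
    Finset.sum_Ico_consecutive _ h1 (le_trans h2 (le_trans h3 h4))
  have e2 : ∑ l ∈ Finset.Ico i j, |f (l+1) - f l| + ∑ l ∈ Finset.Ico j b, |f (l+1) - f l|
      = ∑ l ∈ Finset.Ico i b, |f (l+1) - f l| :=
    Finset.sum_Ico_consecutive _ h2 (le_trans h3 h4)
  have e3 : ∑ l ∈ Finset.Ico j k, |f (l+1) - f l| + ∑ l ∈ Finset.Ico k b, |f (l+1) - f l|
      = ∑ l ∈ Finset.Ico j b, |f (l+1) - f l| :=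
    Finset.sum_Ico_consecutive _ h3 h4
  have tri1 : |f b - f a| ≤ |f i - f a| + |f k - f i| + |f b - f k| := by
    have q1 : |f b - f a| ≤ |f i - f a| + |f b - f i| := by
      have e : f b - f a = (f i - f a) + (f b - f i) := by ring
      have h := abs_add_le (f i - f a) (f b - f i)
      rw [e]; linarith
    have q2 : |f b - f i| ≤ |f k - f i| + |f b - f k| := by
      have e : f b - f i = (f k - f i) + (f b - f k) := by ring
      have h := abs_add_le (f k - f i) (f b - f k)
      rw [e]; linarith
    linarith
  linarith

lemma sum_range_mul_sum (g : ℕ → ℝ) (N k : ℕ) :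
    ∑ i ∈ Finset.range (N*k), g i = ∑ j ∈ Finset.range N, ∑ i ∈ Finset.range k, g (j*k + i) := by
  induction N with
  | zero => simp
  | succ N ih =>
    rw [Finset.sum_range_succ, ← ih, show (N+1)*k = N*k + k by ring, Finset.sum_range_add]

/-- **Block refinement**: a non-ε-monotone interval at scale `rm` forces extra height
variation at the finer scale `r'`. -/
lemma block {K C ε L : ℝ} (hK : 1 ≤ K) (hC : 0 ≤ C) (hε : 0 < ε)
    {α : ℝ → ℝ × ℝ × ℝ} (hα : IsQGeoOn dSol K C α L)
    {r' rm : ℝ} (hr' : 0 < r') {k : ℕ} (hk : rm = k * r')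
    {n₀ : ℕ} (hkn : n₀ ≤ k) (h96 : 96*K^2/ε ≤ (n₀:ℝ))
    (hCrm : 96*K*C ≤ ε * rm)
    (hPm : Pmin K C ≤ ε * rm)
    {Nm : ℕ} {j : ℕ} (hj : j < Nm) (hL : L = (Nm * k : ℕ) * r')
    (hbad : ¬ EpsMonotoneOn α ε (j * rm) ((j+1) * rm)) :
    |solHeight (α ((j+1)*rm)) - solHeight (α (j*rm))| + ε*rm/(8*K)
      ≤ ∑ l ∈ Finset.Ico (j*k) (j*k+k), |solHeight (α ((l+1) * r')) - solHeight (α (l * r'))| := by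
  have hK0 : (0:ℝ) < K := by linarith
  have hrm : 0 < rm := by
    have h1 : (0:ℝ) < 96*K^2/ε := by positivity
    have h2 : (0:ℝ) < (n₀:ℝ) := lt_of_lt_of_le h1 h96
    have h3 : (0:ℝ) < (k:ℝ) := lt_of_lt_of_le h2 (by exact_mod_cast hkn)
    rw [hk]; exact mul_pos h3 hr'
  set a := j * rm with hadef
  set b := (j+1) * rm with hbdef
  have hab : b - a = rm := by rw [hadef, hbdef]; ring
  have ha0 : 0 ≤ a := by
    rw [hadef]; exact mul_nonneg (Nat.cast_nonneg j) hrm.le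
  have hbL : b ≤ L := by
    rw [hbdef, hL, hk]
    push_cast
    have hj1 : (j:ℝ) + 1 ≤ (Nm:ℝ) := by exact_mod_cast hj
    calc ((j:ℝ)+1) * ((k:ℝ) * r') ≤ (Nm:ℝ) * ((k:ℝ) * r') := by
          apply mul_le_mul_of_nonneg_right hj1
          exact mul_nonneg (Nat.cast_nonneg _) hr'.le
      _ = (Nm:ℝ) * (k:ℝ) * r' := by ring
  -- extract the equal-height pair
  rw [EpsMonotoneOn] at hbad
  push_neg at hbad
  obtain ⟨t₁, ht₁, t₂, ht₂, hheq, hfar⟩ := hbad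
  rw [hab] at hfar
  obtain ⟨u₁, u₂, hu₁, hu₂, h12, hheq', hsep⟩ :
      ∃ u₁ u₂, u₁ ∈ Set.Icc a b ∧ u₂ ∈ Set.Icc a b ∧ u₁ ≤ u₂ ∧
        solHeight (α u₂) = solHeight (α u₁) ∧ ε * rm ≤ u₂ - u₁ := by
    rcases le_total t₁ t₂ with hle | hle
    · exact ⟨t₁, t₂, ht₁, ht₂, hle, hheq.symm, by
        rwa [abs_sub_comm, abs_of_nonneg (by linarith)] at hfar⟩
    · exact ⟨t₂, t₁, ht₂, ht₁, hle, hheq, by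
        rwa [abs_of_nonneg (by linarith)] at hfar⟩
  -- excursion
  obtain ⟨s, hs, hsh⟩ := excursion hK hC hα (le_trans ha0 hu₁.1) h12 (le_trans hu₂.2 hbL)
    hheq' (le_trans hPm hsep)
  set H₀ := solHeight (α u₁) with hH₀def
  have hu₀ : ε*rm/(8*K) ≤ |solHeight (α s) - H₀| := by
    refine le_trans ?_ hsh
    gcongr <;> linarith
  -- grid indices
  have hfl_le : ∀ t ∈ Set.Icc a b, ⌊(t - a)/r'⌋₊ ≤ k := by
    intro t ht
    have h1 : (t - a)/r' ≤ (k:ℝ) := by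
      rw [div_le_iff₀ hr']
      have : t - a ≤ rm := by linarith [ht.2, hab]
      rw [hk] at this
      linarith
    calc ⌊(t - a)/r'⌋₊ ≤ ⌊(k:ℝ)⌋₊ := Nat.floor_le_floor h1
      _ = k := Nat.floor_natCast k
  have hpos_approx : ∀ t ∈ Set.Icc a b,
      |((j*k + ⌊(t - a)/r'⌋₊ : ℕ) : ℝ) * r' - t| ≤ r' ∧
      ((j*k + ⌊(t - a)/r'⌋₊ : ℕ) : ℝ) * r' ∈ Set.Icc (0:ℝ) L := by
    intro t ht
    have hta : 0 ≤ t - a := by linarith [ht.1]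
    have hdiv0 : 0 ≤ (t - a)/r' := div_nonneg hta hr'.le
    have hfl1 : (⌊(t - a)/r'⌋₊ : ℝ) * r' ≤ t - a := by
      rw [← le_div_iff₀ hr']
      exact Nat.floor_le hdiv0
    have hfl2 : t - a < ((⌊(t - a)/r'⌋₊ : ℝ) + 1) * r' := by
      rw [← div_lt_iff₀ hr']
      exact Nat.lt_floor_add_one _
    have hja : ((j*k : ℕ) : ℝ) * r' = a := by
      push_cast
      rw [hadef, hk]
      ring
    have hposeq : ((j*k + ⌊(t - a)/r'⌋₊ : ℕ) : ℝ) * r' = a + (⌊(t - a)/r'⌋₊ : ℝ) * r' := by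
      push_cast
      push_cast at hja
      linarith [hja]
    have hfl2' : t - a < (⌊(t - a)/r'⌋₊ : ℝ) * r' + r' := by
      have := hfl2
      rw [add_mul, one_mul] at this
      linarith
    constructor
    · rw [hposeq]
      rw [abs_le]
      constructor
      · linarith
      · linarith
    · constructor
      · rw [hposeq]
        have hfl0 : 0 ≤ (⌊(t - a)/r'⌋₊ : ℝ) * r' := mul_nonneg (Nat.cast_nonneg _) hr'.le
        linarith
      · rw [hposeq, hL]
        have hle : (⌊(t - a)/r'⌋₊ : ℝ) ≤ (k:ℝ) := by exact_mod_cast hfl_le t ht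
        push_cast
        have hj1 : (j:ℝ) + 1 ≤ (Nm:ℝ) := by exact_mod_cast hj
        have ha' : a = (j:ℝ) * ((k:ℝ) * r') := by rw [hadef, hk]
        nlinarith [hr'.le]
  -- height comparison at grid points
  have hgrid : ∀ t ∈ Set.Icc a b,
      |solHeight (α (((j*k + ⌊(t - a)/r'⌋₊ : ℕ) : ℝ) * r')) - solHeight (α t)| ≤ K*r' + C := by
    intro t ht
    obtain ⟨happx, hmem⟩ := hpos_approx t ht
    have htmem : t ∈ Set.Icc (0:ℝ) L := ⟨le_trans ha0 ht.1, le_trans ht.2 hbL⟩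
    have hd := (hα _ hmem t htmem).2
    have hlip := height_lipschitz (α (((j*k + ⌊(t - a)/r'⌋₊ : ℕ) : ℝ) * r')) (α t)
    have hKr : K * |((j*k + ⌊(t - a)/r'⌋₊ : ℕ) : ℝ) * r' - t| ≤ K * r' :=
      mul_le_mul_of_nonneg_left happx hK0.le
    rw [abs_sub_comm]
    linarith
  -- apply the marked-variation inequality
  set i₁ := j*k + ⌊(u₁ - a)/r'⌋₊ with hi₁def
  set is := j*k + ⌊(s - a)/r'⌋₊ with hisdef
  set i₂ := j*k + ⌊(u₂ - a)/r'⌋₊ with hi₂def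
  have hsmem : s ∈ Set.Icc a b := ⟨le_trans hu₁.1 hs.1, le_trans hs.2 hu₂.2⟩
  have hord1 : j*k ≤ i₁ := Nat.le_add_right _ _
  have hord2 : i₁ ≤ is := by
    rw [hi₁def, hisdef]
    have hmono : (u₁ - a)/r' ≤ (s - a)/r' :=
      (div_le_div_iff_of_pos_right hr').mpr (by linarith [hs.1])
    have := Nat.floor_le_floor hmono
    omega
  have hord3 : is ≤ i₂ := by
    rw [hisdef, hi₂def]
    have hmono : (s - a)/r' ≤ (u₂ - a)/r' :=
      (div_le_div_iff_of_pos_right hr').mpr (by linarith [hs.2])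
    have := Nat.floor_le_floor hmono
    omega
  have hord4 : i₂ ≤ j*k + k := by
    have := hfl_le u₂ hu₂
    omega
  set f : ℕ → ℝ := fun l => solHeight (α (l * r')) with hfdef
  have hmarked := sum_abs_marked f hord1 hord2 hord3 hord4
  -- identify the endpoints
  have hend1 : f (j*k) = solHeight (α (j*rm)) := by
    rw [hfdef]
    congr 2
    push_cast
    rw [hk]
    ring
  have hend2 : f (j*k+k) = solHeight (α ((j+1)*rm)) := by
    rw [hfdef]
    congr 2
    push_cast
    rw [hk]
    ring
  -- height comparisons
  set w := K*r' + C with hwdef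
  have hF₁ : |f i₁ - H₀| ≤ w := by
    rw [hfdef, hH₀def, hi₁def]
    exact hgrid u₁ hu₁
  have hFs : |f is - solHeight (α s)| ≤ w := by
    rw [hfdef, hisdef]
    exact hgrid s hsmem
  have hF₂ : |f i₂ - H₀| ≤ w := by
    rw [hfdef, hi₂def, ← hheq']
    exact hgrid u₂ hu₂
  -- the marked quantity is large
  have h6w : 6*w ≤ ε*rm/(8*K) := by
    have hn₀r' : (n₀:ℝ) * r' ≤ rm := by
      have : (n₀:ℝ) ≤ (k:ℝ) := by exact_mod_cast hkn
      rw [hk]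
      exact mul_le_mul_of_nonneg_right this hr'.le
    have ha : (96*K^2/ε) * r' ≤ (n₀:ℝ) * r' :=
      mul_le_mul_of_nonneg_right h96 hr'.le
    have hc : 96*K^2*r' ≤ ε * rm := by
      have hb : (96*K^2/ε) * r' ≤ rm := le_trans ha hn₀r'
      rw [div_mul_eq_mul_div, div_le_iff₀ hε] at hb
      linarith
    have hd : 6*(K*r') ≤ ε*rm/(16*K) := by
      rw [le_div_iff₀ (by linarith : (0:ℝ) < 16*K)]
      nlinarith
    have he : 6*C ≤ ε*rm/(16*K) := by
      rw [le_div_iff₀ (by linarith : (0:ℝ) < 16*K)]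
      nlinarith
    have hf : ε*rm/(16*K) + ε*rm/(16*K) = ε*rm/(8*K) := by
      field_simp
      ring
    rw [hwdef]
    linarith
  have htri1 : ε*rm/(8*K) - 2*w ≤ |f is - f i₁| := by
    have e : solHeight (α s) - H₀ = (solHeight (α s) - f is) + (f is - f i₁) + (f i₁ - H₀) := by
      ring
    have h1 : |solHeight (α s) - H₀| ≤ |solHeight (α s) - f is| + |f is - f i₁| + |f i₁ - H₀| := by
      rw [e]
      exact le_trans (abs_add_le _ _) (by linarith [abs_add_le (solHeight (α s) - f is) (f is - f i₁)])
    rw [abs_sub_comm (solHeight (α s)) (f is)] at h1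
    linarith
  have htri2 : ε*rm/(8*K) - 2*w ≤ |f i₂ - f is| := by
    have e : solHeight (α s) - H₀ = (solHeight (α s) - f is) - (f i₂ - f is) + (f i₂ - H₀) := by
      ring
    have h1 : |solHeight (α s) - H₀| ≤ |solHeight (α s) - f is| + |f i₂ - f is| + |f i₂ - H₀| := by
      rw [e]
      refine le_trans (abs_add_le _ _) ?_
      have h2 := abs_sub (solHeight (α s) - f is) (f i₂ - f is)
      linarith
    rw [abs_sub_comm (solHeight (α s)) (f is)] at h1
    linarith
  have htri3 : |f i₂ - f i₁| ≤ 2*w := by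
    have e : f i₂ - f i₁ = (f i₂ - H₀) - (f i₁ - H₀) := by ring
    rw [e]
    have := abs_sub (f i₂ - H₀) (f i₁ - H₀)
    linarith
  rw [hend1, hend2] at hmarked
  have hsum : (∑ l ∈ Finset.Ico (j*k) (j*k+k), |f (l+1) - f l|)
      = ∑ l ∈ Finset.Ico (j*k) (j*k+k),
          |solHeight (α (((l:ℝ)+1) * r')) - solHeight (α ((l:ℝ) * r'))| := by
    apply Finset.sum_congr rfl
    intro l _
    simp only [hfdef]
    norm_cast
  rw [hsum, ← hadef, ← hbdef] at hmarked
  linarith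

lemma block_good {α : ℝ → ℝ × ℝ × ℝ} {r' rm : ℝ} {k j : ℕ} (hk : rm = k * r') :
    |solHeight (α ((j+1)*rm)) - solHeight (α (j*rm))|
      ≤ ∑ l ∈ Finset.Ico (j*k) (j*k+k),
          |solHeight (α (((l:ℝ)+1) * r')) - solHeight (α ((l:ℝ) * r'))| := by
  set f : ℕ → ℝ := fun l => solHeight (α (l * r')) with hfdef
  have hmain := sum_abs_ge f (Nat.le_add_right (j*k) k)
  have hend1 : f (j*k) = solHeight (α ((j:ℝ)*rm)) := by
    simp only [hfdef]
    congr 2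
    push_cast
    rw [hk]
    ring
  have hend2 : f (j*k+k) = solHeight (α (((j:ℝ)+1)*rm)) := by
    simp only [hfdef]
    congr 2
    push_cast
    rw [hk]
    ring
  have hsum : (∑ l ∈ Finset.Ico (j*k) (j*k+k), |f (l+1) - f l|)
      = ∑ l ∈ Finset.Ico (j*k) (j*k+k),
          |solHeight (α (((l:ℝ)+1) * r')) - solHeight (α ((l:ℝ) * r'))| := by
    apply Finset.sum_congr rfl
    intro l _
    simp only [hfdef]
    norm_cast
  rw [hend1, hend2, hsum] at hmain
  exact hmain

end SolScales

open SolScales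

/-- **Scales Lemma for `Sol`.** Given scales `r₀ ≤ r₁ ≤ … ≤ r_M`, each dividing the next with
large ratio, and a `(K,C)`-quasi-geodesic `α : [0,L] → Sol` with `r_M ∣ L`, the fractions
`δ_m(α)` of the subsegments of length `r_m` on which `α` is not `ε`-monotone satisfy
`∑ δ_m(α) ≤ 16K³/ε`. -/
theorem sol_scales :
    ∀ K C ε : ℝ, 1 ≤ K → 0 ≤ C → 0 < ε →
      ∃ (n₀ : ℕ) (rstar : ℝ), 0 < n₀ ∧ 0 < rstar ∧
        ∀ (M : ℕ) (r : ℕ → ℝ) (L : ℝ),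
          (∀ m ≤ M, 0 < r m) →
          rstar ≤ r 0 →
          (∀ m, 1 ≤ m → m ≤ M → ∃ k : ℕ, n₀ ≤ k ∧ r m = k * r (m - 1)) →
          (∃ N : ℕ, 0 < N ∧ L = N * r M) →
          ∀ α : ℝ → ℝ × ℝ × ℝ, IsQGeoOn dSol K C α L →
            ∑ m ∈ Finset.Icc 1 M,
              (r m / L) *
                (Set.ncard {j : ℕ | (j : ℝ) < L / r m ∧
                  ¬ EpsMonotoneOn α ε (j * r m) ((j + 1) * r m)} : ℝ)
              ≤ 16 * K ^ 3 / ε := by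
  intro K C ε hK hC hε
  classical
  set n₀ : ℕ := ⌈96*K^2/ε⌉₊ + 1 with hn₀def
  set rstar : ℝ := max (max (Pmin K C/ε + 1) (C+1)) (96*K*C/ε + 1) with hrstardef
  have hK0 : (0:ℝ) < K := by linarith
  have hrstar0 : 0 < rstar := by
    have h1 : (0:ℝ) < C + 1 := by linarith
    have h2 : C + 1 ≤ rstar := le_trans (le_max_right _ _) (le_max_left _ _)
    linarith
  refine ⟨n₀, rstar, Nat.succ_pos _, hrstar0, ?_⟩
  intro M r L hr hr0 hdiv hLex α hα
  obtain ⟨NM, hNM, hLeq⟩ := hLex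
  -- ratio choice
  set kfun : ℕ → ℕ := fun m => if h : 1 ≤ m ∧ m ≤ M then (hdiv m h.1 h.2).choose else 1
    with hkfundef
  have hkfun : ∀ m, 1 ≤ m → m ≤ M → n₀ ≤ kfun m ∧ r m = kfun m * r (m-1) := by
    intro m h1 h2
    simp only [hkfundef, dif_pos (And.intro h1 h2)]
    exact (hdiv m h1 h2).choose_spec
  -- the number of intervals at scale m
  set NN : ℕ → ℕ := fun m => NM * ∏ i ∈ Finset.Ico m M, kfun (i+1) with hNNdef
  have hNN_M : NN M = NM := by simp [hNNdef]
  have hNN_step : ∀ m < M, NN m = NN (m+1) * kfun (m+1) := by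
    intro m hm
    simp only [hNNdef]
    rw [Finset.prod_eq_prod_Ico_succ_bot hm]
    ring
  have hLNaux : ∀ d, ∀ m, m + d = M → L = (NN m) * r m := by
    intro d
    induction d with
    | zero =>
      intro m hm
      have : m = M := by omega
      subst this
      rw [hNN_M]
      exact hLeq
    | succ d ih =>
      intro m hm
      have hmM : m < M := by omega
      have h1 := ih (m+1) (by omega)
      have h2 := (hkfun (m+1) (by omega) (by omega)).2
      simp only [Nat.add_sub_cancel] at h2
      rw [hNN_step m hmM, h1, h2]
      push_cast
      ring
  have hLN : ∀ m ≤ M, L = (NN m) * r m := fun m hm => hLNaux (M - m) m (by omega)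
  have hL0 : 0 < L := by
    rw [hLeq]
    exact mul_pos (by exact_mod_cast hNM) (hr M le_rfl)
  have hr0m : ∀ m ≤ M, r 0 ≤ r m := by
    intro m
    induction m with
    | zero => intro _; exact le_rfl
    | succ m ih =>
      intro hm
      have h2 := (hkfun (m+1) (by omega) hm).2
      have h1 := (hkfun (m+1) (by omega) hm).1
      simp only [Nat.add_sub_cancel] at h2
      have hk1 : (1:ℝ) ≤ (kfun (m+1) : ℝ) := by
        have : 1 ≤ kfun (m+1) := le_trans (Nat.succ_le_succ (Nat.zero_le _)) h1
        exact_mod_cast this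
      have := ih (by omega)
      have hrm : 0 < r m := hr m (by omega)
      calc r 0 ≤ r m := this
        _ = 1 * r m := (one_mul _).symm
        _ ≤ (kfun (m+1) : ℝ) * r m := mul_le_mul_of_nonneg_right hk1 hrm.le
        _ = r (m+1) := h2.symm
  -- heights variation at scale m
  set V : ℕ → ℝ := fun m => ∑ i ∈ Finset.range (NN m),
    |solHeight (α (((i:ℝ)+1) * r m)) - solHeight (α ((i:ℝ) * r m))| with hVdef
  set badc : ℕ → Finset ℕ := fun m => (Finset.range (NN m)).filter
    (fun j => ¬ EpsMonotoneOn α ε (j * r m) ((j+1) * r m)) with hbadcdef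
  -- step inequality
  have hVstep : ∀ m, 1 ≤ m → m ≤ M →
      V m + ((badc m).card : ℝ) * (ε * r m/(8*K)) ≤ V (m-1) := by
    intro m h1 h2
    have hk := (hkfun m h1 h2).2
    have hkn := (hkfun m h1 h2).1
    have hNrel : NN (m-1) = NN m * kfun m := by
      have := hNN_step (m-1) (by omega)
      have e : m - 1 + 1 = m := by omega
      rw [e] at this
      exact this
    have hr' : 0 < r (m-1) := hr (m-1) (by omega)
    have h96 : 96*K^2/ε ≤ (n₀:ℝ) := by
      rw [hn₀def]
      push_cast
      linarith [Nat.le_ceil (96*K^2/ε)]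
    have hCrm : 96*K*C ≤ ε * r m := by
      have hup : 96*K*C/ε + 1 ≤ rstar := le_max_right _ _
      have hrm : 96*K*C/ε + 1 ≤ r m := le_trans hup (le_trans hr0 (hr0m m h2))
      have : 96*K*C/ε ≤ r m := by linarith
      rw [div_le_iff₀ hε] at this
      linarith
    have hPm : Pmin K C ≤ ε * r m := by
      have hup : Pmin K C/ε + 1 ≤ rstar :=
        le_trans (le_max_left _ _) (le_max_left _ _)
      have hrm : Pmin K C/ε ≤ r m := by
        have := le_trans hup (le_trans hr0 (hr0m m h2))
        linarith
      rw [div_le_iff₀ hε] at hrm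
      linarith
    have hLm : L = ((NN m * kfun m : ℕ) : ℝ) * r (m-1) := by
      rw [← hNrel]
      exact hLN (m-1) (by omega)
    -- expand V (m-1) as a double sum
    have hexp : V (m-1) = ∑ j ∈ Finset.range (NN m), ∑ l ∈ Finset.Ico (j*(kfun m)) (j*(kfun m)+(kfun m)),
        |solHeight (α (((l:ℝ)+1) * r (m-1))) - solHeight (α ((l:ℝ) * r (m-1)))| := by
      simp only [hVdef]
      rw [hNrel, sum_range_mul_sum]
      apply Finset.sum_congr rfl
      intro j _
      rw [Finset.sum_Ico_eq_sum_range]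
      simp only [Nat.add_sub_cancel_left]
    rw [hexp]
    have hper : ∀ j ∈ Finset.range (NN m),
        |solHeight (α (((j:ℝ)+1) * r m)) - solHeight (α ((j:ℝ) * r m))|
          + (if ¬ EpsMonotoneOn α ε (j * r m) ((j+1) * r m) then ε * r m/(8*K) else 0)
        ≤ ∑ l ∈ Finset.Ico (j*(kfun m)) (j*(kfun m)+(kfun m)),
            |solHeight (α (((l:ℝ)+1) * r (m-1))) - solHeight (α ((l:ℝ) * r (m-1)))| := by
      intro j hj
      rw [Finset.mem_range] at hj
      by_cases hb : EpsMonotoneOn α ε (j * r m) ((j+1) * r m)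
      · rw [if_neg (not_not_intro hb), add_zero]
        exact block_good hk
      · rw [if_pos hb]
        exact block hK hC hε hα hr' hk hkn h96 hCrm hPm hj hLm hb
    calc V m + ((badc m).card : ℝ) * (ε * r m/(8*K))
        = ∑ j ∈ Finset.range (NN m),
            (|solHeight (α (((j:ℝ)+1) * r m)) - solHeight (α ((j:ℝ) * r m))|
              + (if ¬ EpsMonotoneOn α ε (j * r m) ((j+1) * r m) then ε * r m/(8*K) else 0)) := by
          rw [Finset.sum_add_distrib]
          congr 1
          rw [hbadcdef, ← Finset.sum_filter, Finset.sum_const, nsmul_eq_mul]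
      _ ≤ _ := Finset.sum_le_sum hper
  -- telescoping
  have htel : ∑ m ∈ Finset.Icc 1 M, (V (m-1) - V m) = V 0 - V M := by
    rw [← Finset.Ico_add_one_right_eq_Icc 1 M, Finset.sum_Ico_eq_sum_range]
    simp only [Nat.add_sub_cancel_left, Nat.succ_sub_one, Nat.add_sub_cancel]
    have hterm : ∀ x ∈ Finset.range M, V x - V (1+x) = V x - V (x+1) := by
      intro x _
      rw [add_comm]
    rw [Finset.sum_congr rfl hterm, Finset.sum_range_sub' V M]
  have hVM : 0 ≤ V M := Finset.sum_nonneg (fun i _ => abs_nonneg _)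
  have hV0 : V 0 ≤ 2*K*L := by
    have hper : ∀ i ∈ Finset.range (NN 0),
        |solHeight (α (((i:ℝ)+1) * r 0)) - solHeight (α ((i:ℝ) * r 0))| ≤ K * r 0 + C := by
      intro i hi
      rw [Finset.mem_range] at hi
      have hr00 : 0 < r 0 := hr 0 (Nat.zero_le _)
      have hiR : (i:ℝ) + 1 ≤ (NN 0 : ℝ) := by exact_mod_cast hi
      have hL00 := hLN 0 (Nat.zero_le _)
      have hm1 : (i:ℝ) * r 0 ∈ Set.Icc (0:ℝ) L := by
        constructor
        · exact mul_nonneg (Nat.cast_nonneg _) hr00.le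
        · rw [hL00]
          have : (i:ℝ) ≤ (NN 0 : ℝ) := by linarith
          exact mul_le_mul_of_nonneg_right this hr00.le
      have hm2 : ((i:ℝ)+1) * r 0 ∈ Set.Icc (0:ℝ) L := by
        constructor
        · positivity
        · rw [hL00]
          exact mul_le_mul_of_nonneg_right hiR hr00.le
      have hd := (hα ((i:ℝ) * r 0) hm1 (((i:ℝ)+1) * r 0) hm2).2
      have hlip := height_lipschitz (α ((i:ℝ) * r 0)) (α (((i:ℝ)+1) * r 0))
      have habs : |(i:ℝ) * r 0 - ((i:ℝ)+1) * r 0| = r 0 := by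
        rw [show (i:ℝ) * r 0 - ((i:ℝ)+1) * r 0 = -(r 0) by ring, abs_neg,
          abs_of_nonneg hr00.le]
      rw [habs] at hd
      linarith
    have hsum : V 0 ≤ (NN 0 : ℝ) * (K * r 0 + C) := by
      simp only [hVdef]
      calc ∑ i ∈ Finset.range (NN 0),
            |solHeight (α (((i:ℝ)+1) * r 0)) - solHeight (α ((i:ℝ) * r 0))|
          ≤ ∑ _i ∈ Finset.range (NN 0), (K * r 0 + C) := Finset.sum_le_sum hper
        _ = (NN 0 : ℝ) * (K * r 0 + C) := by
            rw [Finset.sum_const, Finset.card_range, nsmul_eq_mul]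
    have hL00 := hLN 0 (Nat.zero_le _)
    have hC_le : C ≤ r 0 := by
      have h2 : C + 1 ≤ rstar := le_trans (le_max_right _ _) (le_max_left _ _)
      linarith [le_trans h2 hr0]
    have hNN0 : (0:ℝ) ≤ (NN 0 : ℝ) := Nat.cast_nonneg _
    have hterm : (NN 0 : ℝ) * C ≤ L := by
      rw [hL00]
      exact mul_le_mul_of_nonneg_left hC_le hNN0
    have : (NN 0 : ℝ) * (K * r 0 + C) = K * ((NN 0 : ℝ) * r 0) + (NN 0 : ℝ) * C := by ring
    rw [this, ← hL00] at hsum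
    have hKL : 0 < K * L := mul_pos hK0 hL0
    nlinarith
  -- sum the step inequalities
  have hmain : ∑ m ∈ Finset.Icc 1 M, ((badc m).card : ℝ) * (ε * r m/(8*K)) ≤ 2*K*L := by
    have h1 : ∑ m ∈ Finset.Icc 1 M, ((badc m).card : ℝ) * (ε * r m/(8*K))
        ≤ ∑ m ∈ Finset.Icc 1 M, (V (m-1) - V m) := by
      apply Finset.sum_le_sum
      intro m hm
      rw [Finset.mem_Icc] at hm
      have := hVstep m hm.1 hm.2
      linarith
    rw [htel] at h1
    linarith
  -- identify ncard with badc card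
  have hncard : ∀ m, 1 ≤ m → m ≤ M →
      (Set.ncard {j : ℕ | (j : ℝ) < L / r m ∧
        ¬ EpsMonotoneOn α ε (j * r m) ((j + 1) * r m)} : ℝ) = ((badc m).card : ℝ) := by
    intro m h1 h2
    congr 1
    have hrm : 0 < r m := hr m h2
    have hset : {j : ℕ | (j : ℝ) < L / r m ∧
        ¬ EpsMonotoneOn α ε (j * r m) ((j + 1) * r m)} = ↑(badc m) := by
      rw [hbadcdef]
      ext j
      simp only [Set.mem_setOf_eq, Finset.coe_filter, Finset.mem_range]
      constructor
      · rintro ⟨hj1, hj2⟩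
        refine ⟨?_, hj2⟩
        have : (j:ℝ) < (NN m : ℝ) := by
          rw [hLN m h2, mul_div_cancel_right₀ _ (ne_of_gt hrm)] at hj1
          exact hj1
        exact_mod_cast this
      · rintro ⟨hj1, hj2⟩
        refine ⟨?_, hj2⟩
        rw [hLN m h2, mul_div_cancel_right₀ _ (ne_of_gt hrm)]
        exact_mod_cast hj1
    rw [hset, Set.ncard_coe_finset]
  -- conclude
  have hfactor : ∀ m, 1 ≤ m → m ≤ M →
      (r m / L) * ((badc m).card : ℝ)
        = (((badc m).card : ℝ) * (ε * r m/(8*K))) * (8*K/(ε*L)) := by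
    intro m h1 h2
    rw [mul_assoc, div_mul_div_comm, show ε * r m * (8*K) = (r m) * (ε*(8*K)) by ring,
      show 8*K*(ε*L) = L*(ε*(8*K)) by ring, mul_div_mul_right _ _ (by positivity)]
    ring
  calc ∑ m ∈ Finset.Icc 1 M, (r m / L) *
        (Set.ncard {j : ℕ | (j : ℝ) < L / r m ∧
          ¬ EpsMonotoneOn α ε (j * r m) ((j + 1) * r m)} : ℝ)
      = ∑ m ∈ Finset.Icc 1 M, (((badc m).card : ℝ) * (ε * r m/(8*K))) * (8*K/(ε*L)) := by
        apply Finset.sum_congr rfl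
        intro m hm
        rw [Finset.mem_Icc] at hm
        rw [hncard m hm.1 hm.2, hfactor m hm.1 hm.2]
    _ = (∑ m ∈ Finset.Icc 1 M, ((badc m).card : ℝ) * (ε * r m/(8*K))) * (8*K/(ε*L)) := by
        rw [Finset.sum_mul]
    _ ≤ (2*K*L) * (8*K/(ε*L)) := by
        apply mul_le_mul_of_nonneg_right hmain
        positivity
    _ = 16*K^2/ε := by
        field_simp
        ring
    _ ≤ 16 * K ^ 3 / ε := by
        have hKK : 16*K^2 ≤ 16*K^3 := by nlinarith [sq_nonneg K, hK, hK0]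
        exact (div_le_div_iff_of_pos_right hε).mpr hKK

end
end

section
/- Scales Lemma II: let Y be a metric space, K ≥ 1, C ≥ 0 and ε > 0. Let r₀ ≤ r₁ ≤ … ≤ r_M be positive reals with r₀ ≥ 2KC, with r_{m−1} dividing r_m for 1 ≤ m ≤ M, and let L be a positive multiple of r_M. For a (K,C)-quasi-geodesic segment α : [0,L] → Y and 1 ≤ m ≤ M, let δ_m(α) = (r_m/L)·#{ j : 0 ≤ j < L/r_m and the restriction of α to [j·r_m, (j+1)·r_m] is not ε-efficient on scale r_{m−1} }, where the restriction to [j·r_m, (j+1)·r_m] is ε-efficient on scale r_{m−1} if Σ_{i=1}^{r_m/r_{m−1}} d(α(j·r_m + i·r_{m−1}), α(j·r_m + (i−1)·r_{m−1})) ≤ (1+ε)·d(α(j·r_m), α((j+1)·r_m)). Then Σ_{m=1}^{M} δ_m(α) ≤ 4K²/ε. -/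
noncomputable section

open scoped Classical

/-- `α` is a `(K,C)`-quasi-geodesic segment on `[0, L]` in the metric space `Y`. -/
def IsQGeoOnM {Y : Type*} [MetricSpace Y] (K C : ℝ) (α : ℝ → Y) (L : ℝ) : Prop :=
  ∀ s ∈ Set.Icc (0:ℝ) L, ∀ t ∈ Set.Icc (0:ℝ) L,
    (1 / K) * |s - t| - C ≤ dist (α s) (α t) ∧ dist (α s) (α t) ≤ K * |s - t| + C

/-- Number of blocks at scale `m`. -/
def nScale (N : ℕ) (k : ℕ → ℕ) (M m : ℕ) : ℕ := N * ∏ i ∈ Finset.Ico m M, k (i + 1)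

/-- The set of inefficient blocks at scale `m`. -/
noncomputable def badSet {Y : Type*} [MetricSpace Y] (α : ℝ → Y) (ε : ℝ) (r : ℕ → ℝ)
    (k : ℕ → ℕ) (n : ℕ → ℕ) (m : ℕ) : Finset ℕ :=
  (Finset.range (n m)).filter (fun j => ¬ (∑ i ∈ Finset.range (k m),
    dist (α (j * r m + (i + 1) * r (m - 1))) (α (j * r m + i * r (m - 1))) ≤
    (1 + ε) * dist (α (j * r m)) (α ((j + 1) * r m))))

lemma sum_range_mul_aux {β : Type*} [AddCommMonoid β] (f : ℕ → β) (a b : ℕ) :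
    ∑ j ∈ Finset.range (a * b), f j
      = ∑ j ∈ Finset.range a, ∑ i ∈ Finset.range b, f (j * b + i) := by
  induction a with
  | zero => simp
  | succ a ih => rw [Nat.succ_mul, Finset.sum_range_add, ih, Finset.sum_range_succ]

lemma tele_aux (S : ℕ → ℝ) (M : ℕ) :
    ∑ m ∈ Finset.Icc 1 M, (S (m - 1) - S m) = S 0 - S M := by
  induction M with
  | zero => simp
  | succ M ih =>
    rw [Finset.sum_Icc_succ_top (by omega : 1 ≤ M + 1), ih]
    simp only [Nat.add_sub_cancel]
    ring

set_option maxHeartbeats 2000000 in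
/-- **Scales Lemma II.** Given scales `r₀ ≤ r₁ ≤ … ≤ r_M` with `r₀ ≥ 2KC` and
`r_m = k_m · r_{m-1}`, and a `(K,C)`-quasi-geodesic `α : [0, L] → Y` with `L = N · r_M`,
the fractions `δ_m(α)` of the subsegments of length `r_m` on which `α` is not `ε`-efficient
on scale `r_{m-1}` satisfy `∑ δ_m(α) ≤ 4K²/ε`. -/
theorem scales_II {Y : Type*} [MetricSpace Y]
    (K C ε : ℝ) (hK : 1 ≤ K) (hC : 0 ≤ C) (hε : 0 < ε)
    (M : ℕ) (r : ℕ → ℝ) (k : ℕ → ℕ)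
    (hpos : ∀ m ≤ M, 0 < r m)
    (hr0 : 2 * K * C ≤ r 0)
    (hdvd : ∀ m, 1 ≤ m → m ≤ M → r m = k m * r (m - 1))
    (L : ℝ) (N : ℕ) (hN : 0 < N) (hL : L = N * r M)
    (α : ℝ → Y) (hα : IsQGeoOnM K C α L) :
    ∑ m ∈ Finset.Icc 1 M,
      (r m / L) *
        (Set.ncard {j : ℕ | (j : ℝ) < L / r m ∧
          ¬ (∑ i ∈ Finset.range (k m),
              dist (α (j * r m + (i + 1) * r (m - 1))) (α (j * r m + i * r (m - 1))) ≤
            (1 + ε) * dist (α (j * r m)) (α ((j + 1) * r m)))} : ℝ)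
      ≤ 4 * K ^ 2 / ε := by
  classical
  have hK0 : (0:ℝ) < K := lt_of_lt_of_le one_pos hK
  have hrM : 0 < r M := hpos M le_rfl
  have hL0 : 0 < L := by rw [hL]; positivity
  set n : ℕ → ℕ := nScale N k M with hn_def
  -- positivity of k on [1, M]
  have hk : ∀ m, 1 ≤ m → m ≤ M → 0 < k m := by
    intro m h1 h2
    rcases Nat.eq_zero_or_pos (k m) with h | h
    · exfalso
      have hh := hdvd m h1 h2
      rw [h] at hh
      simp at hh
      exact absurd hh (hpos m h2).ne'
    · exact h
  have hnpos : ∀ m, 0 < n m := by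
    intro m
    refine Nat.mul_pos hN (Finset.prod_pos ?_)
    intro i hi
    rw [Finset.mem_Ico] at hi
    exact hk (i + 1) (by omega) (by omega)
  -- recurrence for n
  have hnrec : ∀ m, 1 ≤ m → m ≤ M → n (m - 1) = k m * n m := by
    intro m h1 h2
    show N * ∏ i ∈ Finset.Ico (m-1) M, k (i+1) = k m * (N * ∏ i ∈ Finset.Ico m M, k (i+1))
    rw [Finset.prod_eq_prod_Ico_succ_bot (by omega : m - 1 < M)]
    rw [show m - 1 + 1 = m by omega]
    ring
  -- r m * n m = L
  have hLd : ∀ d, d ≤ M → r (M - d) * ((n (M - d) : ℝ)) = L := by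
    intro d
    induction d with
    | zero =>
      intro _
      have hnM : n M = N := by simp [hn_def, nScale]
      simp only [Nat.sub_zero, hnM, hL]
      ring
    | succ d ih =>
      intro hd
      have hms : M - (d + 1) = (M - d) - 1 := by omega
      have h1 : 1 ≤ M - d := by omega
      have h2 : M - d ≤ M := by omega
      rw [hms, hnrec (M - d) h1 h2]
      have hdvd' := hdvd (M - d) h1 h2
      push_cast
      calc r (M - d - 1) * ((k (M - d) : ℝ) * (n (M - d) : ℝ))
          = ((k (M - d) : ℝ) * r (M - d - 1)) * (n (M - d) : ℝ) := by ring
        _ = r (M - d) * (n (M - d) : ℝ) := by rw [← hdvd']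
        _ = L := ih (by omega)
  have hLn : ∀ m, m ≤ M → r m * ((n m : ℝ)) = L := by
    intro m hm
    have := hLd (M - m) (by omega)
    rwa [show M - (M - m) = m by omega] at this
  -- monotonicity r 0 ≤ r m
  have hr0le : ∀ m, m ≤ M → r 0 ≤ r m := by
    intro m
    induction m with
    | zero => intro _; exact le_rfl
    | succ p ih =>
      intro h
      have h1 : r (p+1) = (k (p+1) : ℝ) * r p := by simpa using hdvd (p+1) (by omega) h
      have hkp : 1 ≤ k (p+1) := hk (p+1) (by omega) h
      have hkp' : (1:ℝ) ≤ (k (p+1) : ℝ) := by exact_mod_cast hkp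
      have hrp : 0 < r p := hpos p (by omega)
      have : r p ≤ r (p+1) := by rw [h1]; nlinarith
      exact le_trans (ih (by omega)) this
  -- total path length at scale m
  set S : ℕ → ℝ := fun m => ∑ j ∈ Finset.range (n m),
      dist (α ((j + 1) * r m)) (α (j * r m)) with hS_def
  have hSnonneg : ∀ m, 0 ≤ S m := by
    intro m
    apply Finset.sum_nonneg
    intro j _
    exact dist_nonneg
  -- key step inequality
  have hstep : ∀ m, 1 ≤ m → m ≤ M →
      S m + ε * (r m / (2*K)) * ((badSet α ε r k n m).card : ℝ) ≤ S (m-1) := by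
    intro m h1 h2
    have hm1 : m - 1 ≤ M := le_trans (Nat.sub_le m 1) h2
    have hrm : 0 < r m := hpos m h2
    have hrp : 0 < r (m-1) := hpos _ hm1
    have hrec : r m = (k m : ℝ) * r (m-1) := hdvd m h1 h2
    -- regroup S (m-1)
    have hS : S (m-1) = ∑ j ∈ Finset.range (n m), ∑ i ∈ Finset.range (k m),
        dist (α (j * r m + (i + 1) * r (m - 1))) (α (j * r m + i * r (m - 1))) := by
      rw [hS_def]
      simp only
      rw [hnrec m h1 h2, Nat.mul_comm, sum_range_mul_aux]
      refine Finset.sum_congr rfl fun j _ => Finset.sum_congr rfl fun i _ => ?_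
      rw [show (((j * k m + i : ℕ) : ℝ) + 1) * r (m-1)
            = (j : ℝ) * r m + ((i : ℝ) + 1) * r (m-1) by push_cast [hrec]; ring,
          show ((j * k m + i : ℕ) : ℝ) * r (m-1)
            = (j : ℝ) * r m + (i : ℝ) * r (m-1) by push_cast [hrec]; ring]
    have hptwise : ∀ j ∈ Finset.range (n m),
        dist (α (((j:ℝ) + 1) * r m)) (α ((j:ℝ) * r m))
          + (if j ∈ badSet α ε r k n m then ε * (r m / (2*K)) else 0)
        ≤ ∑ i ∈ Finset.range (k m),
            dist (α (j * r m + (i + 1) * r (m - 1))) (α (j * r m + i * r (m - 1))) := by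
      intro j hj
      have hjn : j < n m := Finset.mem_range.mp hj
      have hjn' : ((j:ℝ) + 1) ≤ (n m : ℝ) := by exact_mod_cast Nat.succ_le_of_lt hjn
      have hmem1 : (j:ℝ) * r m ∈ Set.Icc (0:ℝ) L := by
        constructor
        · positivity
        · have := hLn m h2
          nlinarith
      have hmem2 : ((j:ℝ) + 1) * r m ∈ Set.Icc (0:ℝ) L := by
        constructor
        · positivity
        · have := hLn m h2
          nlinarith
      -- lower bound on the block's endpoint distance
      have hD : r m / (2*K) ≤ dist (α ((j:ℝ) * r m)) (α (((j:ℝ)+1) * r m)) := by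
        have hlow := (hα ((j:ℝ) * r m) hmem1 (((j:ℝ)+1) * r m) hmem2).1
        have habs : |(j:ℝ) * r m - ((j:ℝ)+1) * r m| = r m := by
          rw [show (j:ℝ) * r m - ((j:ℝ)+1) * r m = -(r m) by ring, abs_neg,
            abs_of_pos hrm]
        rw [habs] at hlow
        have hCle : C ≤ r m / (2*K) := by
          rw [le_div_iff₀ (by positivity)]
          nlinarith [hr0le m h2]
        have hhalf : 1/K * r m - r m/(2*K) = r m/(2*K) := by
          field_simp
          ring
        linarith
      -- chain triangle inequality
      have chain : dist (α ((j:ℝ) * r m)) (α (((j:ℝ)+1) * r m))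
          ≤ ∑ i ∈ Finset.range (k m),
              dist (α (j * r m + (i + 1) * r (m - 1))) (α (j * r m + i * r (m - 1))) := by
        have h := dist_le_range_sum_dist
          (fun i : ℕ => α ((j:ℝ) * r m + (i : ℝ) * r (m-1))) (k m)
        simp only [Nat.cast_zero, zero_mul, add_zero, Nat.cast_add, Nat.cast_one] at h
        rw [show (j:ℝ) * r m + ((k m : ℕ) : ℝ) * r (m-1) = ((j:ℝ)+1) * r m by
          rw [hrec]; ring] at h
        refine le_trans h (le_of_eq ?_)
        exact Finset.sum_congr rfl fun i _ => dist_comm _ _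
      by_cases hb : j ∈ badSet α ε r k n m
      · have hbgt : (1 + ε) * dist (α ((j:ℝ) * r m)) (α (((j:ℝ)+1) * r m))
            < ∑ i ∈ Finset.range (k m),
                dist (α (j * r m + (i + 1) * r (m - 1))) (α (j * r m + i * r (m - 1))) := by
          have := Finset.mem_filter.mp hb
          exact lt_of_not_ge this.2
        rw [if_pos hb, dist_comm]
        nlinarith [hD, hε.le, mul_le_mul_of_nonneg_left hD hε.le]
      · rw [if_neg hb, add_zero, dist_comm]
        exact chain
    have hsum := Finset.sum_le_sum hptwise
    rw [Finset.sum_add_distrib] at hsum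
    have hite : ∑ j ∈ Finset.range (n m),
        (if j ∈ badSet α ε r k n m then ε * (r m / (2*K)) else 0)
        = ((badSet α ε r k n m).card : ℝ) * (ε * (r m / (2*K))) := by
      have hsub : badSet α ε r k n m ⊆ Finset.range (n m) := Finset.filter_subset _ _
      rw [Finset.sum_ite_mem, Finset.inter_eq_right.mpr hsub,
        Finset.sum_const, nsmul_eq_mul]
    rw [hite] at hsum
    rw [hS]
    have hSm : ∑ j ∈ Finset.range (n m), dist (α (((j:ℝ) + 1) * r m)) (α ((j:ℝ) * r m)) = S m := by
      rw [hS_def]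
    rw [hSm] at hsum
    linarith
  -- identify the sets in the statement with badSet
  have hset : ∀ m, 1 ≤ m → m ≤ M →
      {j : ℕ | (j : ℝ) < L / r m ∧
        ¬ (∑ i ∈ Finset.range (k m),
            dist (α (j * r m + (i + 1) * r (m - 1))) (α (j * r m + i * r (m - 1))) ≤
          (1 + ε) * dist (α (j * r m)) (α ((j + 1) * r m)))}
      = ↑(badSet α ε r k n m) := by
    intro m h1 h2
    have hdivm : L / r m = (n m : ℝ) := by
      rw [div_eq_iff (hpos m h2).ne', mul_comm]
      exact (hLn m h2).symm
    ext j
    simp only [Set.mem_setOf_eq, badSet, Finset.coe_filter, Set.mem_setOf_eq,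
      Finset.mem_range, hdivm, Nat.cast_lt]
  -- sum of step inequalities
  have hT : ε / (2*K) * ∑ m ∈ Finset.Icc 1 M, r m * ((badSet α ε r k n m).card : ℝ)
      ≤ S 0 := by
    have h1 : ∑ m ∈ Finset.Icc 1 M, ε / (2*K) * (r m * ((badSet α ε r k n m).card : ℝ))
        ≤ ∑ m ∈ Finset.Icc 1 M, (S (m-1) - S m) := by
      refine Finset.sum_le_sum ?_
      intro m hm
      obtain ⟨hm1, hm2⟩ := Finset.mem_Icc.mp hm
      have := hstep m hm1 hm2
      have heq : ε / (2*K) * (r m * ((badSet α ε r k n m).card : ℝ))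
          = ε * (r m / (2*K)) * ((badSet α ε r k n m).card : ℝ) := by ring
      linarith [heq ▸ this]
    rw [tele_aux S M] at h1
    rw [Finset.mul_sum]
    have := hSnonneg M
    linarith
  -- bound on S 0
  have hS0 : S 0 ≤ K * L + L / (2*K) := by
    have hb : S 0 ≤ ∑ j ∈ Finset.range (n 0), (K * r 0 + C) := by
      rw [hS_def]
      refine Finset.sum_le_sum ?_
      intro j hj
      have hjn : j < n 0 := Finset.mem_range.mp hj
      have hjn' : ((j:ℝ) + 1) ≤ (n 0 : ℝ) := by exact_mod_cast Nat.succ_le_of_lt hjn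
      have hr0p : 0 < r 0 := hpos 0 (Nat.zero_le M)
      have hmem1 : (j:ℝ) * r 0 ∈ Set.Icc (0:ℝ) L := by
        constructor
        · positivity
        · have := hLn 0 (Nat.zero_le M); nlinarith
      have hmem2 : ((j:ℝ) + 1) * r 0 ∈ Set.Icc (0:ℝ) L := by
        constructor
        · positivity
        · have := hLn 0 (Nat.zero_le M); nlinarith
      have hup := (hα (((j:ℝ)+1) * r 0) hmem2 ((j:ℝ) * r 0) hmem1).2
      have habs : |((j:ℝ)+1) * r 0 - (j:ℝ) * r 0| = r 0 := by
        rw [show ((j:ℝ)+1) * r 0 - (j:ℝ) * r 0 = r 0 by ring, abs_of_pos hr0p]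
      rw [habs] at hup
      exact hup
    rw [Finset.sum_const, Finset.card_range, nsmul_eq_mul] at hb
    have hr0p : 0 < r 0 := hpos 0 (Nat.zero_le M)
    have hL0' : r 0 * ((n 0 : ℝ)) = L := hLn 0 (Nat.zero_le M)
    have hCle : C ≤ r 0 / (2*K) := by
      rw [le_div_iff₀ (by positivity)]
      nlinarith
    have hn0 : (0:ℝ) ≤ (n 0 : ℝ) := Nat.cast_nonneg _
    have key : (n 0 : ℝ) * (K * r 0 + C) ≤ K * L + L / (2*K) := by
      have e1 : (n 0 : ℝ) * (K * r 0) = K * L := by rw [← hL0']; ring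
      have e2 : (n 0 : ℝ) * (r 0 / (2*K)) = L / (2*K) := by
        rw [← hL0']; ring
      have h3 := mul_le_mul_of_nonneg_left hCle hn0
      nlinarith [e1, e2, h3]
    linarith
  -- final computation
  calc ∑ m ∈ Finset.Icc 1 M,
      (r m / L) *
        (Set.ncard {j : ℕ | (j : ℝ) < L / r m ∧
          ¬ (∑ i ∈ Finset.range (k m),
              dist (α (j * r m + (i + 1) * r (m - 1))) (α (j * r m + i * r (m - 1))) ≤
            (1 + ε) * dist (α (j * r m)) (α ((j + 1) * r m)))} : ℝ)
      = ∑ m ∈ Finset.Icc 1 M, (r m * ((badSet α ε r k n m).card : ℝ)) / L := by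
        refine Finset.sum_congr rfl ?_
        intro m hm
        obtain ⟨hm1, hm2⟩ := Finset.mem_Icc.mp hm
        rw [hset m hm1 hm2, Set.ncard_coe_finset]
        ring
    _ = (∑ m ∈ Finset.Icc 1 M, r m * ((badSet α ε r k n m).card : ℝ)) / L := by
        rw [Finset.sum_div]
    _ ≤ 4 * K ^ 2 / ε := by
        set T := ∑ m ∈ Finset.Icc 1 M, r m * ((badSet α ε r k n m).card : ℝ) with hT_def
        have hTnn : 0 ≤ T := by
          rw [hT_def]
          refine Finset.sum_nonneg ?_
          intro m hm
          obtain ⟨hm1, hm2⟩ := Finset.mem_Icc.mp hm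
          have := (hpos m hm2).le
          positivity
        have h2K : (0:ℝ) < 2*K := by positivity
        have H2 : ε * T ≤ 2*K^2*L + L := by
          have := mul_le_mul_of_nonneg_left hT h2K.le
          have e : 2*K * (ε / (2*K) * T) = ε * T := by field_simp
          have e2 : 2*K * (K * L + L / (2*K)) = 2*K^2*L + L := by field_simp
          -- hS0 : S 0 ≤ K*L + L/(2K), hT : ε/(2K)*T ≤ S 0
          nlinarith [hT, hS0]
        rw [div_le_div_iff₀ hL0 hε]
        nlinarith [H2, mul_nonneg (by nlinarith : (0:ℝ) ≤ 2*K^2 - 1) hL0.le]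
end
end

section
/- Coarse Differentiation Lemma: let X and Y be metric spaces, K ≥ 1, C ≥ 0, ε > 0 and θ > 0. There exists a positive real L₀, depending only on K, C, ε and θ, with the following property: for every (K,C)-quasi-isometry φ : X → Y, every L that is a positive integer multiple of L₀, and every nonempty finite family 𝓕 of geodesic segments γ : [0,L] → X (isometric embeddings of [0,L] into X), there exist positive reals r and R with 2KC ≤ r, r dividing R, and R dividing L₀, such that #{ (γ, j) : γ ∈ 𝓕, 0 ≤ j < L/R, and the restriction of φ∘γ to [jR, (j+1)R] is ε-efficient on scale r } ≥ (1−θ)·|𝓕|·(L/R), where the restriction of φ∘γ to [jR, (j+1)R] is ε-efficient on scale r if Σ_{i=1}^{R/r} d_Y(φ(γ(jR + i·r)), φ(γ(jR + (i−1)·r))) ≤ (1+ε)·d_Y(φ(γ(jR)), φ(γ((j+1)R))). -/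
noncomputable section

/-- `φ` is a `(K,C)`-quasi-isometry between metric spaces. -/
def IsQIM {X Y : Type*} [MetricSpace X] [MetricSpace Y] (K C : ℝ) (φ : X → Y) : Prop :=
  (∀ a b : X, (1 / K) * dist a b - C ≤ dist (φ a) (φ b) ∧ dist (φ a) (φ b) ≤ K * dist a b + C)
    ∧ ∀ y : Y, ∃ x : X, dist (φ x) y ≤ C

private lemma sum_range_two_mul' (M : ℕ) (f : ℕ → ℝ) :
    ∑ i ∈ Finset.range (2 * M), f i
      = ∑ j ∈ Finset.range M, (f (2 * j) + f (2 * j + 1)) := by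
  induction M with
  | zero => simp
  | succ M ih =>
    have h : 2 * (M + 1) = (2 * M + 1) + 1 := by ring
    rw [h, Finset.sum_range_succ, Finset.sum_range_succ, ih, Finset.sum_range_succ]
    ring

set_option maxHeartbeats 2000000 in
/-- **Coarse Differentiation Lemma.** For every `(K,C)`-quasi-isometry `φ : X → Y`, every
`L` a positive multiple of a constant `L₀ = L₀(K,C,ε,θ)`, and every nonempty finite family
`𝓕` of geodesic segments `γ : [0,L] → X`, there exist scales `2KC ≤ r ∣ R ∣ L₀` such that at
least a `(1-θ)`-fraction of the `R`-subsegments of the `φ∘γ`, `γ ∈ 𝓕`, are `ε`-efficient at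
scale `r`. -/

theorem coarse_differentiation {X Y : Type*} [MetricSpace X] [MetricSpace Y]
    (K C ε θ : ℝ) (hK : 1 ≤ K) (hC : 0 ≤ C) (hε : 0 < ε) (hθ : 0 < θ) :
    ∃ L₀ : ℝ, 0 < L₀ ∧
      ∀ φ : X → Y, IsQIM K C φ →
        ∀ L : ℝ, (∃ N : ℕ, 0 < N ∧ L = N * L₀) →
          ∀ 𝓕 : Finset (ℝ → X), 𝓕.Nonempty →
            (∀ γ ∈ 𝓕, ∀ s ∈ Set.Icc (0:ℝ) L, ∀ t ∈ Set.Icc (0:ℝ) L,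
              dist (γ s) (γ t) = |s - t|) →
            ∃ (r R : ℝ) (a b : ℕ), 0 < a ∧ 0 < b ∧
              2 * K * C ≤ r ∧ R = a * r ∧ L₀ = b * R ∧
              (1 - θ) * 𝓕.card * (L / R) ≤
                ∑ γ ∈ 𝓕,
                  (Set.ncard {j : ℕ | (j : ℝ) < L / R ∧
                    ∑ i ∈ Finset.range a,
                        dist (φ (γ (j * R + (i + 1) * r))) (φ (γ (j * R + i * r))) ≤
                      (1 + ε) * dist (φ (γ (j * R))) (φ (γ ((j + 1) * R)))} : ℝ) := by
  classical
  have hK0 : (0:ℝ) < K := lt_of_lt_of_le one_pos hK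
  set c : ℝ := max (2 * K * C) 1 with hc_def
  have hc1 : (1:ℝ) ≤ c := le_max_right _ _
  have hcKC : 2 * K * C ≤ c := le_max_left _ _
  have hc0 : (0:ℝ) < c := lt_of_lt_of_le one_pos hc1
  set n : ℕ := ⌈2 * K * (K + 1) / (ε * θ)⌉₊ + 1 with hn_def
  have hn0 : 0 < n := Nat.succ_pos _
  have hn_gt : 2 * K * (K + 1) / (ε * θ) < (n : ℝ) := by
    have h1 := Nat.le_ceil (2 * K * (K + 1) / (ε * θ))
    have h2 : ((⌈2 * K * (K + 1) / (ε * θ)⌉₊ : ℝ)) + 1 = (n:ℝ) := by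
      rw [hn_def]; push_cast; ring
    linarith
  refine ⟨c * 2 ^ n, by positivity, ?_⟩
  intro φ hφ L hLex 𝓕 h𝓕 hgeo
  obtain ⟨N, hN, hL⟩ := hLex
  set s : ℕ → ℝ := fun k => c * 2 ^ k with hs_def
  have hs_pos : ∀ k, 0 < s k := fun k => by positivity
  have hs_succ : ∀ k, s (k + 1) = 2 * s k := by
    intro k; simp only [hs_def]; rw [pow_succ]; ring
  have hs_ge : ∀ k, c ≤ s k := by
    intro k
    have h1 : (1:ℝ) ≤ 2 ^ k := one_le_pow₀ (by norm_num)
    simp only [hs_def]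
    nlinarith
  set m : ℕ → ℕ := fun k => N * 2 ^ (n - k) with hm_def
  have hm_pos : ∀ k, 0 < m k := fun k =>
    Nat.mul_pos hN (pow_pos (by norm_num) _)
  have hmL : ∀ k, k ≤ n → (m k : ℝ) * s k = L := by
    intro k hk
    have h2 : (2:ℝ) ^ (n - k) * 2 ^ k = 2 ^ n := by
      rw [← pow_add]; congr 1; omega
    simp only [hm_def, hs_def, hL]
    push_cast
    linear_combination ((N:ℝ) * c) * h2
  have hm_succ : ∀ k, k + 1 ≤ n → m k = 2 * m (k + 1) := by
    intro k hk
    have h : n - k = (n - (k + 1)) + 1 := by omega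
    simp only [hm_def, h, pow_succ]
    ring
  set F : (ℝ → X) → ℕ → ℝ :=
    fun γ k => ∑ i ∈ Finset.range (m k),
      dist (φ (γ (((i : ℝ) + 1) * s k))) (φ (γ ((i : ℝ) * s k))) with hF_def
  have hF_nonneg : ∀ γ k, 0 ≤ F γ k :=
    fun γ k => Finset.sum_nonneg fun i _ => dist_nonneg
  have hpt : ∀ k, k ≤ n → ∀ i : ℕ, i ≤ m k → (i : ℝ) * s k ∈ Set.Icc (0:ℝ) L := by
    intro k hk i hi
    refine ⟨by positivity, ?_⟩
    calc (i : ℝ) * s k ≤ (m k : ℝ) * s k :=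
          mul_le_mul_of_nonneg_right (by exact_mod_cast hi) (hs_pos k).le
      _ = L := hmL k hk
  have hdist_pt : ∀ γ ∈ 𝓕, ∀ u ∈ Set.Icc (0:ℝ) L, ∀ v ∈ Set.Icc (0:ℝ) L,
      dist (φ (γ u)) (φ (γ v)) ≤ K * |u - v| + C ∧
      (1/K) * |u - v| - C ≤ dist (φ (γ u)) (φ (γ v)) := by
    intro γ hγ u hu v hv
    have h := hφ.1 (γ u) (γ v)
    rw [hgeo γ hγ u hu v hv] at h
    exact ⟨h.2, h.1⟩
  have hC_le : C ≤ c := le_trans (by nlinarith) hcKC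
  have hF0 : ∀ γ ∈ 𝓕, F γ 0 ≤ (K + 1) * L := by
    intro γ hγ
    have hs0 : s 0 = c := by simp [hs_def]
    have hb : ∀ i ∈ Finset.range (m 0),
        dist (φ (γ (((i:ℝ) + 1) * s 0))) (φ (γ ((i:ℝ) * s 0))) ≤ (K + 1) * s 0 := by
      intro i hi
      have hi' : i < m 0 := Finset.mem_range.1 hi
      have h1 : ((i:ℝ)) * s 0 ∈ Set.Icc (0:ℝ) L := hpt 0 (Nat.zero_le n) i hi'.le
      have h2 : (((i:ℝ)) + 1) * s 0 ∈ Set.Icc (0:ℝ) L := by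
        have h := hpt 0 (Nat.zero_le n) (i + 1) hi'
        push_cast at h
        exact h
      have h := (hdist_pt γ hγ _ h2 _ h1).1
      have habs : |((i:ℝ) + 1) * s 0 - (i:ℝ) * s 0| = s 0 := by
        rw [show ((i:ℝ) + 1) * s 0 - (i:ℝ) * s 0 = s 0 by ring, abs_of_pos (hs_pos 0)]
      rw [habs] at h
      have hKc : K * s 0 + C ≤ (K + 1) * s 0 := by rw [hs0]; nlinarith
      linarith
    calc F γ 0 ≤ ∑ _i ∈ Finset.range (m 0), (K + 1) * s 0 := Finset.sum_le_sum hb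
      _ = (m 0 : ℝ) * ((K + 1) * s 0) := by
          rw [Finset.sum_const, Finset.card_range, nsmul_eq_mul]
      _ = (K + 1) * L := by rw [← hmL 0 (Nat.zero_le n)]; ring
  set Bad : (ℝ → X) → ℕ → ℕ := fun γ k =>
    ((Finset.range (m (k + 1))).filter (fun j : ℕ => ¬ (∑ i ∈ Finset.range 2,
        dist (φ (γ ((j:ℝ) * s (k + 1) + ((i:ℝ) + 1) * s k)))
          (φ (γ ((j:ℝ) * s (k + 1) + (i:ℝ) * s k))) ≤
      (1 + ε) * dist (φ (γ ((j:ℝ) * s (k + 1)))) (φ (γ (((j:ℝ) + 1) * s (k + 1))))))).card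
    with hBad_def
  have hgap : ∀ k, k + 1 ≤ n → ∀ γ ∈ 𝓕,
      (Bad γ k : ℝ) * (ε * s (k + 1) / (2 * K)) ≤ F γ k - F γ (k + 1) := by
    intro k hk γ hγ
    set e : ℕ → ℝ := fun i =>
      dist (φ (γ (((i:ℝ) + 1) * s k))) (φ (γ ((i:ℝ) * s k))) with he_def
    have hsplit : F γ k = ∑ j ∈ Finset.range (m (k + 1)), (e (2 * j) + e (2 * j + 1)) := by
      simp only [hF_def, he_def]
      rw [hm_succ k hk]
      exact sum_range_two_mul' _ _
    have harg1 : ∀ j i : ℕ,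
        (j:ℝ) * s (k + 1) + (i:ℝ) * s k = ((2 * j + i : ℕ) : ℝ) * s k := by
      intro j i; push_cast; rw [hs_succ k]; ring
    have harg2 : ∀ j i : ℕ,
        (j:ℝ) * s (k + 1) + ((i:ℝ) + 1) * s k = (((2 * j + i : ℕ) : ℝ) + 1) * s k := by
      intro j i; push_cast; rw [hs_succ k]; ring
    have htwo : ∀ j : ℕ,
        ∑ i ∈ Finset.range 2,
          dist (φ (γ ((j:ℝ) * s (k + 1) + ((i:ℝ) + 1) * s k)))
            (φ (γ ((j:ℝ) * s (k + 1) + (i:ℝ) * s k)))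
          = e (2 * j) + e (2 * j + 1) := by
      intro j
      have hcongr : ∀ i ∈ Finset.range 2,
          dist (φ (γ ((j:ℝ) * s (k + 1) + ((i:ℝ) + 1) * s k)))
            (φ (γ ((j:ℝ) * s (k + 1) + (i:ℝ) * s k))) = e (2 * j + i) := by
        intro i _
        simp only [he_def]
        rw [harg1 j i, harg2 j i]
      rw [Finset.sum_congr rfl hcongr, Finset.sum_range_succ, Finset.sum_range_one]
      norm_num
    have hFk1 : F γ (k + 1) = ∑ j ∈ Finset.range (m (k + 1)),
        dist (φ (γ (((j:ℝ) + 1) * s (k + 1)))) (φ (γ ((j:ℝ) * s (k + 1)))) := by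
      simp only [hF_def]
    have hmain : F γ k - F γ (k + 1) = ∑ j ∈ Finset.range (m (k + 1)),
        ((e (2 * j) + e (2 * j + 1))
          - dist (φ (γ (((j:ℝ) + 1) * s (k + 1)))) (φ (γ ((j:ℝ) * s (k + 1))))) := by
      rw [hsplit, hFk1, ← Finset.sum_sub_distrib]
    have htri : ∀ j : ℕ,
        dist (φ (γ (((j:ℝ) + 1) * s (k + 1)))) (φ (γ ((j:ℝ) * s (k + 1))))
          ≤ e (2 * j + 1) + e (2 * j) := by
      intro j
      have hA : (((2 * j + 1 : ℕ):ℝ) + 1) * s k = ((j:ℝ) + 1) * s (k + 1) := by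
        push_cast; rw [hs_succ k]; ring
      have hMid : ((2 * j + 1 : ℕ):ℝ) * s k = (((2 * j : ℕ):ℝ) + 1) * s k := by
        push_cast; ring
      have hB : ((2 * j : ℕ):ℝ) * s k = (j:ℝ) * s (k + 1) := by
        push_cast; rw [hs_succ k]; ring
      simp only [he_def]
      rw [hA, hMid, hB]
      exact dist_triangle _ (φ (γ ((((2 * j : ℕ):ℝ) + 1) * s k))) _
    have hterm_nonneg : ∀ j ∈ Finset.range (m (k + 1)),
        0 ≤ (e (2 * j) + e (2 * j + 1))
          - dist (φ (γ (((j:ℝ) + 1) * s (k + 1)))) (φ (γ ((j:ℝ) * s (k + 1)))) := by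
      intro j _
      have := htri j
      linarith
    have hlow : ∀ j : ℕ, j ∈ (Finset.range (m (k + 1))).filter (fun j : ℕ => ¬ (∑ i ∈ Finset.range 2,
          dist (φ (γ ((j:ℝ) * s (k + 1) + ((i:ℝ) + 1) * s k)))
            (φ (γ ((j:ℝ) * s (k + 1) + (i:ℝ) * s k))) ≤
        (1 + ε) * dist (φ (γ ((j:ℝ) * s (k + 1)))) (φ (γ (((j:ℝ) + 1) * s (k + 1)))))) →
        ε * s (k + 1) / (2 * K) ≤ (e (2 * j) + e (2 * j + 1))
          - dist (φ (γ (((j:ℝ) + 1) * s (k + 1)))) (φ (γ ((j:ℝ) * s (k + 1)))) := by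
      intro j hj
      obtain ⟨hjm, hbad⟩ := Finset.mem_filter.1 hj
      have hjm' := Finset.mem_range.1 hjm
      have hmem1 : (j:ℝ) * s (k + 1) ∈ Set.Icc (0:ℝ) L := hpt (k + 1) hk j hjm'.le
      have hmem2 : ((j:ℝ) + 1) * s (k + 1) ∈ Set.Icc (0:ℝ) L := by
        have h := hpt (k + 1) hk (j + 1) hjm'
        push_cast at h
        exact h
      have hD := (hdist_pt γ hγ _ hmem2 _ hmem1).2
      have habs : |((j:ℝ) + 1) * s (k + 1) - (j:ℝ) * s (k + 1)| = s (k + 1) := by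
        rw [show ((j:ℝ) + 1) * s (k + 1) - (j:ℝ) * s (k + 1) = s (k + 1) by ring,
          abs_of_pos (hs_pos _)]
      rw [habs] at hD
      have h2K : (0:ℝ) < 2 * K := by positivity
      have hC2 : C ≤ s (k + 1) / (2 * K) := by
        rw [le_div_iff₀ h2K]
        nlinarith [hs_ge (k + 1)]
      have hhalf : s (k + 1) / (2 * K) + s (k + 1) / (2 * K) = (1/K) * s (k + 1) := by
        field_simp
        ring
      have hD2 : s (k + 1) / (2 * K)
          ≤ dist (φ (γ (((j:ℝ) + 1) * s (k + 1)))) (φ (γ ((j:ℝ) * s (k + 1)))) := by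
        linarith
      have hbad' : (1 + ε) * dist (φ (γ ((j:ℝ) * s (k + 1)))) (φ (γ (((j:ℝ) + 1) * s (k + 1))))
          < e (2 * j) + e (2 * j + 1) := by
        rw [← htwo j]
        exact lt_of_not_ge hbad
      rw [dist_comm (φ (γ ((j:ℝ) * s (k + 1))))] at hbad'
      have hexp : (1 + ε) * dist (φ (γ (((j:ℝ) + 1) * s (k + 1)))) (φ (γ ((j:ℝ) * s (k + 1))))
          = dist (φ (γ (((j:ℝ) + 1) * s (k + 1)))) (φ (γ ((j:ℝ) * s (k + 1))))
            + ε * dist (φ (γ (((j:ℝ) + 1) * s (k + 1)))) (φ (γ ((j:ℝ) * s (k + 1)))) := by ring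
      have hεD : ε * (s (k + 1) / (2 * K))
          ≤ ε * dist (φ (γ (((j:ℝ) + 1) * s (k + 1)))) (φ (γ ((j:ℝ) * s (k + 1)))) :=
        mul_le_mul_of_nonneg_left hD2 hε.le
      have hrw : ε * s (k + 1) / (2 * K) = ε * (s (k + 1) / (2 * K)) := by ring
      rw [hrw]
      linarith
    rw [hmain]
    calc (Bad γ k : ℝ) * (ε * s (k + 1) / (2 * K))
        = ∑ _j ∈ (Finset.range (m (k + 1))).filter (fun j : ℕ => ¬ (∑ i ∈ Finset.range 2,
            dist (φ (γ ((j:ℝ) * s (k + 1) + ((i:ℝ) + 1) * s k)))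
              (φ (γ ((j:ℝ) * s (k + 1) + (i:ℝ) * s k))) ≤
          (1 + ε) * dist (φ (γ ((j:ℝ) * s (k + 1)))) (φ (γ (((j:ℝ) + 1) * s (k + 1)))))),
            (ε * s (k + 1) / (2 * K)) := by
          rw [Finset.sum_const, nsmul_eq_mul, hBad_def]
      _ ≤ ∑ j ∈ (Finset.range (m (k + 1))).filter (fun j : ℕ => ¬ (∑ i ∈ Finset.range 2,
            dist (φ (γ ((j:ℝ) * s (k + 1) + ((i:ℝ) + 1) * s k)))
              (φ (γ ((j:ℝ) * s (k + 1) + (i:ℝ) * s k))) ≤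
          (1 + ε) * dist (φ (γ ((j:ℝ) * s (k + 1)))) (φ (γ (((j:ℝ) + 1) * s (k + 1)))))),
            ((e (2 * j) + e (2 * j + 1))
              - dist (φ (γ (((j:ℝ) + 1) * s (k + 1)))) (φ (γ ((j:ℝ) * s (k + 1))))) :=
          Finset.sum_le_sum hlow
      _ ≤ ∑ j ∈ Finset.range (m (k + 1)),
            ((e (2 * j) + e (2 * j + 1))
              - dist (φ (γ (((j:ℝ) + 1) * s (k + 1)))) (φ (γ ((j:ℝ) * s (k + 1))))) :=
          Finset.sum_le_sum_of_subset_of_nonneg (Finset.filter_subset _ _)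
            (fun j hj _ => hterm_nonneg j hj)
  have hsum_all : ∑ k ∈ Finset.range n,
      (∑ γ ∈ 𝓕, (Bad γ k : ℝ)) * (ε * s (k + 1) / (2 * K))
      ≤ (𝓕.card : ℝ) * ((K + 1) * L) := by
    have h1 : ∀ k ∈ Finset.range n,
        (∑ γ ∈ 𝓕, (Bad γ k : ℝ)) * (ε * s (k + 1) / (2 * K))
          ≤ ∑ γ ∈ 𝓕, (F γ k - F γ (k + 1)) := by
      intro k hk
      rw [Finset.sum_mul]
      exact Finset.sum_le_sum fun γ hγ => hgap k (Finset.mem_range.1 hk) γ hγ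
    calc ∑ k ∈ Finset.range n, (∑ γ ∈ 𝓕, (Bad γ k : ℝ)) * (ε * s (k + 1) / (2 * K))
        ≤ ∑ k ∈ Finset.range n, ∑ γ ∈ 𝓕, (F γ k - F γ (k + 1)) := Finset.sum_le_sum h1
      _ = ∑ γ ∈ 𝓕, ∑ k ∈ Finset.range n, (F γ k - F γ (k + 1)) := Finset.sum_comm
      _ = ∑ γ ∈ 𝓕, (F γ 0 - F γ n) := by
          refine Finset.sum_congr rfl fun γ _ => ?_
          exact Finset.sum_range_sub' (fun k => F γ k) n
      _ ≤ ∑ _γ ∈ 𝓕, (K + 1) * L := Finset.sum_le_sum fun γ hγ => by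
          have h1 := hF0 γ hγ
          have h2 := hF_nonneg γ n
          linarith
      _ = (𝓕.card : ℝ) * ((K + 1) * L) := by rw [Finset.sum_const, nsmul_eq_mul]
  have hconst : ∑ _k ∈ Finset.range n, ((𝓕.card : ℝ) * ((K + 1) * L) / n)
      = (𝓕.card : ℝ) * ((K + 1) * L) := by
    rw [Finset.sum_const, Finset.card_range, nsmul_eq_mul]
    have hn' : ((n:ℝ)) ≠ 0 := by positivity
    field_simp
  obtain ⟨k, hkmem, hkle⟩ := Finset.exists_le_of_sum_le
    (Finset.nonempty_range_iff.2 hn0.ne') (hsum_all.trans_eq hconst.symm)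
  have hk1 : k + 1 ≤ n := Finset.mem_range.1 hkmem
  have hLR : L / s (k + 1) = ((m (k + 1)) : ℝ) := by
    rw [div_eq_iff (hs_pos (k + 1)).ne']
    exact (hmL (k + 1) hk1).symm
  have hMpos : (0:ℝ) < (m (k + 1) : ℝ) := by exact_mod_cast hm_pos (k + 1)
  have hcard1 : (1:ℝ) ≤ (𝓕.card : ℝ) := by
    exact_mod_cast Nat.one_le_iff_ne_zero.2 (Finset.card_ne_zero_of_mem h𝓕.choose_spec)
  -- the chosen level works
  have hTk : ∑ γ ∈ 𝓕, (Bad γ k : ℝ) ≤ θ * (𝓕.card : ℝ) * (m (k + 1) : ℝ) := by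
    have hn' : (0:ℝ) < (n:ℝ) := by exact_mod_cast hn0
    have h2K : (0:ℝ) < 2 * K := by positivity
    have h2Kne : (2 * K : ℝ) ≠ 0 := h2K.ne'
    have hnne : ((n:ℝ)) ≠ 0 := hn'.ne'
    have h1 : (∑ γ ∈ 𝓕, (Bad γ k : ℝ)) * (ε * s (k + 1)) * n
        ≤ (𝓕.card : ℝ) * ((K + 1) * L) * (2 * K) := by
      calc (∑ γ ∈ 𝓕, (Bad γ k : ℝ)) * (ε * s (k + 1)) * n
          = ((∑ γ ∈ 𝓕, (Bad γ k : ℝ)) * (ε * s (k + 1) / (2 * K))) * ((n:ℝ) * (2 * K)) := by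
            field_simp
        _ ≤ ((𝓕.card : ℝ) * ((K + 1) * L) / n) * ((n:ℝ) * (2 * K)) :=
            mul_le_mul_of_nonneg_right hkle (by positivity)
        _ = (𝓕.card : ℝ) * ((K + 1) * L) * (2 * K) := by
            field_simp
    rw [← hmL (k + 1) hk1] at h1
    have hεθn : 2 * K * (K + 1) < (n:ℝ) * (ε * θ) := by
      have hεθ : (0:ℝ) < ε * θ := mul_pos hε hθ
      rw [div_lt_iff₀ hεθ] at hn_gt
      linarith
    have hQ : (0:ℝ) < (𝓕.card : ℝ) * (m (k + 1) : ℝ) * s (k + 1) :=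
      mul_pos (mul_pos (lt_of_lt_of_le one_pos hcard1) hMpos) (hs_pos _)
    have hq : (𝓕.card : ℝ) * ((K + 1) * ((m (k + 1) : ℝ) * s (k + 1))) * (2 * K)
        ≤ θ * (𝓕.card : ℝ) * (m (k + 1) : ℝ) * (ε * s (k + 1) * (n:ℝ)) := by
      nlinarith [mul_le_mul_of_nonneg_right hεθn.le hQ.le]
    have h3 : (∑ γ ∈ 𝓕, (Bad γ k : ℝ)) * (ε * s (k + 1) * (n:ℝ))
        ≤ θ * (𝓕.card : ℝ) * (m (k + 1) : ℝ) * (ε * s (k + 1) * (n:ℝ)) := by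
      calc (∑ γ ∈ 𝓕, (Bad γ k : ℝ)) * (ε * s (k + 1) * (n:ℝ))
          = (∑ γ ∈ 𝓕, (Bad γ k : ℝ)) * (ε * s (k + 1)) * n := by ring
        _ ≤ _ := h1.trans hq
    exact le_of_mul_le_mul_right h3 (by positivity)
  refine ⟨s k, s (k + 1), 2, 2 ^ (n - (k + 1)), by norm_num,
    pow_pos (by norm_num) _, le_trans hcKC (hs_ge k), ?_, ?_, ?_⟩
  · push_cast
    exact hs_succ k
  · have h2 : (2:ℝ) ^ (n - (k + 1)) * 2 ^ (k + 1) = 2 ^ n := by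
      rw [← pow_add]; congr 1; omega
    simp only [hs_def]
    push_cast
    linear_combination (-c) * h2
  · have hcard : ∀ γ : ℝ → X,
        ((Set.ncard {j : ℕ | (j : ℝ) < L / s (k + 1) ∧
          ∑ i ∈ Finset.range 2,
              dist (φ (γ ((j:ℝ) * s (k + 1) + ((i:ℝ) + 1) * s k)))
                (φ (γ ((j:ℝ) * s (k + 1) + (i:ℝ) * s k))) ≤
            (1 + ε) * dist (φ (γ ((j:ℝ) * s (k + 1)))) (φ (γ (((j:ℝ) + 1) * s (k + 1))))}) : ℝ)
        = (m (k + 1) : ℝ) - (Bad γ k : ℝ) := by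
      intro γ
      have hsetγ : {j : ℕ | (j : ℝ) < L / s (k + 1) ∧
          ∑ i ∈ Finset.range 2,
              dist (φ (γ ((j:ℝ) * s (k + 1) + ((i:ℝ) + 1) * s k)))
                (φ (γ ((j:ℝ) * s (k + 1) + (i:ℝ) * s k))) ≤
            (1 + ε) * dist (φ (γ ((j:ℝ) * s (k + 1)))) (φ (γ (((j:ℝ) + 1) * s (k + 1))))}
          = ↑((Finset.range (m (k + 1))).filter (fun j : ℕ => ∑ i ∈ Finset.range 2,
              dist (φ (γ ((j:ℝ) * s (k + 1) + ((i:ℝ) + 1) * s k)))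
                (φ (γ ((j:ℝ) * s (k + 1) + (i:ℝ) * s k))) ≤
            (1 + ε) * dist (φ (γ ((j:ℝ) * s (k + 1)))) (φ (γ (((j:ℝ) + 1) * s (k + 1)))))) := by
        ext j
        simp only [Finset.coe_filter, Finset.mem_range, Set.mem_setOf_eq]
        rw [hLR, Nat.cast_lt]
      rw [hsetγ, Set.ncard_coe_finset]
      have hsum := Finset.card_filter_add_card_filter_not
        (s := Finset.range (m (k + 1))) (fun j => ∑ i ∈ Finset.range 2,
              dist (φ (γ ((j:ℝ) * s (k + 1) + ((i:ℝ) + 1) * s k)))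
                (φ (γ ((j:ℝ) * s (k + 1) + (i:ℝ) * s k))) ≤
            (1 + ε) * dist (φ (γ ((j:ℝ) * s (k + 1)))) (φ (γ (((j:ℝ) + 1) * s (k + 1)))))
      rw [Finset.card_range] at hsum
      simp only [hBad_def]
      have hcast := congrArg (fun t : ℕ => (t : ℝ)) hsum
      push_cast at hcast ⊢
      linarith
    have hθcard : (1 - θ) * (𝓕.card : ℝ) * ((m (k + 1)) : ℝ)
        ≤ ∑ γ ∈ 𝓕, ((m (k + 1) : ℝ) - (Bad γ k : ℝ)) := by
      rw [Finset.sum_sub_distrib, Finset.sum_const, nsmul_eq_mul]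
      have hexp : (1 - θ) * (𝓕.card : ℝ) * ((m (k + 1)) : ℝ)
          = (𝓕.card : ℝ) * ((m (k + 1)) : ℝ) - θ * (𝓕.card : ℝ) * ((m (k + 1)) : ℝ) := by
        ring
      rw [hexp]
      linarith [hTk]
    calc (1 - θ) * (𝓕.card : ℝ) * (L / s (k + 1))
        = (1 - θ) * (𝓕.card : ℝ) * ((m (k + 1)) : ℝ) := by rw [hLR]
      _ ≤ ∑ γ ∈ 𝓕, ((m (k + 1) : ℝ) - (Bad γ k : ℝ)) := hθcard
      _ = _ := (Finset.sum_congr rfl fun γ _ => (hcard γ).symm)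

end
end

section
/- There exist constants K ≥ 1 and C ≥ 0 such that the map π₁ × π₂ : Sol → ℍ² × ℍ², (x,y,z) ↦ ((x,z), (y,−z)), is a (K,C)-quasi-isometric embedding, where ℍ² × ℍ² carries the distance d((u,v),(u′,v′)) = max(d_hyp(u,u′), d_hyp(v,v′)). -/
open Set

noncomputable section

/-- The length of a path in the log model of the hyperbolic plane `ℍ²`:
`ds² = e^{-z} dx² + dz²` in coordinates `(x, z)`. -/
def hypLength (γ : ℝ → ℝ × ℝ) : ℝ :=
  ∫ t in (0:ℝ)..1,
    Real.sqrt (Real.exp (-(γ t).2) * (deriv (fun s => (γ s).1) t) ^ 2 +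
      (deriv (fun s => (γ s).2) t) ^ 2)

/-- The hyperbolic distance on the log model `ℍ² = ℝ²`. -/
def dHyp (p q : ℝ × ℝ) : ℝ :=
  sInf {ℓ : ℝ | ∃ γ : ℝ → ℝ × ℝ,
    γ 0 = p ∧ γ 1 = q ∧ PiecewiseC1 γ ∧ hypLength γ = ℓ}

namespace SolQI
open MeasureTheory intervalIntegral


lemma part_mono {n : ℕ} {τ : ℕ → ℝ} (h : ∀ i < n, τ i ≤ τ (i+1)) :
    ∀ i j, i ≤ j → j ≤ n → τ i ≤ τ j := by
  intro i j hij hjn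
  induction j with
  | zero => simp [Nat.le_zero.mp hij]
  | succ k ih =>
    rcases Nat.eq_or_lt_of_le hij with h1 | h1
    · rw [h1]
    · exact le_trans (ih (Nat.lt_succ_iff.mp h1) (by omega)) (h k (by omega))

lemma part_cover {n : ℕ} {τ : ℕ → ℝ} (h : ∀ i < n, τ i ≤ τ (i+1)) :
    ∀ m, m ≤ n → m ≠ 0 → ∀ t, τ 0 ≤ t → t ≤ τ m → ∃ i < m, t ∈ Icc (τ i) (τ (i+1)) := by
  intro m
  induction m with
  | zero => intro _ hm; exact absurd rfl hm
  | succ k ih =>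
    intro hkn _ t h0 h1
    by_cases hk : t ≤ τ k
    · rcases Nat.eq_zero_or_pos k with hk0 | hk0
      · subst hk0
        exact ⟨0, by omega, h0, h1⟩
      · obtain ⟨i, hi, hmem⟩ := ih (by omega) (by omega) t h0 hk
        exact ⟨i, by omega, hmem⟩
    · exact ⟨k, by omega, le_of_not_ge hk, h1⟩

lemma bound_on_Ioo {u : ℝ → ℝ} {a b : ℝ} (h : ContDiffOn ℝ 1 u (Icc a b)) :
    ∃ M, ∀ t ∈ Ioo a b, |u t| ≤ M ∧ |deriv u t| ≤ M := by
  by_cases hab : a < b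
  · obtain ⟨M1, hM1⟩ := isCompact_Icc.exists_bound_of_continuousOn h.continuousOn
    obtain ⟨M2, hM2⟩ := isCompact_Icc.exists_bound_of_continuousOn
      (h.continuousOn_derivWithin (uniqueDiffOn_Icc hab) le_rfl)
    refine ⟨max M1 M2, fun t ht => ⟨?_, ?_⟩⟩
    · exact le_trans (by simpa using hM1 t (Ioo_subset_Icc_self ht)) (le_max_left _ _)
    · rw [← derivWithin_of_mem_nhds (Icc_mem_nhds ht.1 ht.2)]
      exact le_trans (by simpa using hM2 t (Ioo_subset_Icc_self ht)) (le_max_right _ _)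
  · exact ⟨0, fun t ht => absurd (lt_trans ht.1 ht.2) hab⟩

lemma integrable_of_meas_bdd {F : ℝ → ℝ} {a b : ℝ} (hab : a ≤ b)
    (hmeas : AEStronglyMeasurable F (volume.restrict (Ioo a b)))
    (hbdd : ∃ M, ∀ t ∈ Ioo a b, |F t| ≤ M) : IntervalIntegrable F volume a b := by
  obtain ⟨M, hM⟩ := hbdd
  rw [intervalIntegrable_iff, uIoc_of_le hab, integrableOn_Ioc_iff_integrableOn_Ioo]
  refine Integrable.mono' (integrable_const M) hmeas ?_
  rw [ae_restrict_iff' measurableSet_Ioo]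
  exact Filter.Eventually.of_forall fun t ht => by simpa [Real.norm_eq_abs] using hM t ht



def solF (γ : ℝ → ℝ × ℝ × ℝ) (t : ℝ) : ℝ :=
  Real.sqrt (Real.exp (-(γ t).2.2) * (deriv (fun s => (γ s).1) t) ^ 2 +
      Real.exp ((γ t).2.2) * (deriv (fun s => (γ s).2.1) t) ^ 2 +
      (deriv (fun s => (γ s).2.2) t) ^ 2)

def hypF (γ : ℝ → ℝ × ℝ) (t : ℝ) : ℝ :=
  Real.sqrt (Real.exp (-(γ t).2) * (deriv (fun s => (γ s).1) t) ^ 2 +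
      (deriv (fun s => (γ s).2) t) ^ 2)

lemma bound_sq {d M : ℝ} (h : |d| ≤ M) : d ^ 2 ≤ M ^ 2 := by
  nlinarith [neg_abs_le d, le_abs_self d]

lemma solF_integrable {γ : ℝ → ℝ × ℝ × ℝ} {a b : ℝ} (hab : a ≤ b)
    (h : ContDiffOn ℝ 1 γ (Icc a b)) : IntervalIntegrable (solF γ) volume a b := by
  have hx : ContDiffOn ℝ 1 (fun s => (γ s).1) (Icc a b) := contDiff_fst.comp_contDiffOn h
  have hy : ContDiffOn ℝ 1 (fun s => (γ s).2.1) (Icc a b) :=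
    (contDiff_fst.comp contDiff_snd).comp_contDiffOn h
  have hz : ContDiffOn ℝ 1 (fun s => (γ s).2.2) (Icc a b) :=
    (contDiff_snd.comp contDiff_snd).comp_contDiffOn h
  refine integrable_of_meas_bdd hab ?_ ?_
  · have hzm : AEMeasurable (fun t => (γ t).2.2) (volume.restrict (Ioo a b)) :=
      (hz.continuousOn.mono Ioo_subset_Icc_self).aemeasurable measurableSet_Ioo
    have hdx := (measurable_deriv (fun s => (γ s).1)).aemeasurable
      (μ := volume.restrict (Ioo a b))
    have hdy := (measurable_deriv (fun s => (γ s).2.1)).aemeasurable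
      (μ := volume.restrict (Ioo a b))
    have hdz := (measurable_deriv (fun s => (γ s).2.2)).aemeasurable
      (μ := volume.restrict (Ioo a b))
    exact (Real.continuous_sqrt.measurable.comp_aemeasurable
      ((((Real.measurable_exp.comp_aemeasurable hzm.neg).mul (hdx.pow_const 2)).add
        ((Real.measurable_exp.comp_aemeasurable hzm).mul (hdy.pow_const 2))).add
        (hdz.pow_const 2))).aestronglyMeasurable
  · obtain ⟨Mx, hMx⟩ := bound_on_Ioo hx
    obtain ⟨My, hMy⟩ := bound_on_Ioo hy
    obtain ⟨Mz, hMz⟩ := bound_on_Ioo hz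
    refine ⟨Real.sqrt (Real.exp Mz * Mx ^ 2 + Real.exp Mz * My ^ 2 + Mz ^ 2), fun t ht => ?_⟩
    have h1 := hMx t ht; have h2 := hMy t ht; have h3 := hMz t ht
    simp only [solF]
    rw [abs_of_nonneg (Real.sqrt_nonneg _)]
    apply Real.sqrt_le_sqrt
    have e1 : Real.exp (-(γ t).2.2) ≤ Real.exp Mz :=
      Real.exp_le_exp.2 (le_trans (neg_le_abs _) h3.1)
    have e2 : Real.exp ((γ t).2.2) ≤ Real.exp Mz :=
      Real.exp_le_exp.2 (le_trans (le_abs_self _) h3.1)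
    have b1 := bound_sq h1.2; have b2 := bound_sq h2.2; have b3 := bound_sq h3.2
    have p1 : (0:ℝ) ≤ (deriv (fun s => (γ s).1) t)^2 := sq_nonneg _
    have p2 : (0:ℝ) ≤ (deriv (fun s => (γ s).2.1) t)^2 := sq_nonneg _
    nlinarith [Real.exp_pos (-(γ t).2.2), Real.exp_pos ((γ t).2.2), Real.exp_pos Mz,
      sq_nonneg Mx, sq_nonneg My]

lemma hypF_integrable {γ : ℝ → ℝ × ℝ} {a b : ℝ} (hab : a ≤ b)
    (h : ContDiffOn ℝ 1 γ (Icc a b)) : IntervalIntegrable (hypF γ) volume a b := by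
  have hx : ContDiffOn ℝ 1 (fun s => (γ s).1) (Icc a b) := contDiff_fst.comp_contDiffOn h
  have hz : ContDiffOn ℝ 1 (fun s => (γ s).2) (Icc a b) := contDiff_snd.comp_contDiffOn h
  refine integrable_of_meas_bdd hab ?_ ?_
  · have hzm : AEMeasurable (fun t => (γ t).2) (volume.restrict (Ioo a b)) :=
      (hz.continuousOn.mono Ioo_subset_Icc_self).aemeasurable measurableSet_Ioo
    have hdx := (measurable_deriv (fun s => (γ s).1)).aemeasurable
      (μ := volume.restrict (Ioo a b))
    have hdz := (measurable_deriv (fun s => (γ s).2)).aemeasurable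
      (μ := volume.restrict (Ioo a b))
    exact (Real.continuous_sqrt.measurable.comp_aemeasurable
      (((Real.measurable_exp.comp_aemeasurable hzm.neg).mul (hdx.pow_const 2)).add
        (hdz.pow_const 2))).aestronglyMeasurable
  · obtain ⟨Mx, hMx⟩ := bound_on_Ioo hx
    obtain ⟨Mz, hMz⟩ := bound_on_Ioo hz
    refine ⟨Real.sqrt (Real.exp Mz * Mx ^ 2 + Mz ^ 2), fun t ht => ?_⟩
    have h1 := hMx t ht; have h3 := hMz t ht
    simp only [hypF]
    rw [abs_of_nonneg (Real.sqrt_nonneg _)]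
    apply Real.sqrt_le_sqrt
    have e1 : Real.exp (-(γ t).2) ≤ Real.exp Mz :=
      Real.exp_le_exp.2 (le_trans (neg_le_abs _) h3.1)
    have b1 := bound_sq h1.2; have b3 := bound_sq h3.2
    have p1 : (0:ℝ) ≤ (deriv (fun s => (γ s).1) t)^2 := sq_nonneg _
    nlinarith [Real.exp_pos (-(γ t).2), Real.exp_pos Mz, sq_nonneg Mx]

lemma chain_int {F : ℝ → ℝ} {n : ℕ} {τ : ℕ → ℝ}
    (hp : ∀ i < n, IntervalIntegrable F volume (τ i) (τ (i+1))) :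
    ∀ i j, i ≤ j → j ≤ n → IntervalIntegrable F volume (τ i) (τ j) := by
  intro i j hij hjn
  induction j with
  | zero => rw [Nat.le_zero.mp hij]
  | succ k ih =>
    rcases Nat.eq_or_lt_of_le hij with h1 | h1
    · rw [h1]
    · exact (ih (by omega) (by omega)).trans (hp k (by omega))

lemma chain_mono {F G : ℝ → ℝ} {n : ℕ} {τ : ℕ → ℝ} (hmono : ∀ i < n, τ i ≤ τ (i+1))
    (hpF : ∀ i < n, IntervalIntegrable F volume (τ i) (τ (i+1)))
    (hpG : ∀ i < n, IntervalIntegrable G volume (τ i) (τ (i+1)))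
    (hle : ∀ t, F t ≤ G t) :
    ∀ m, m ≤ n → ∫ t in (τ 0)..(τ m), F t ≤ ∫ t in (τ 0)..(τ m), G t := by
  intro m
  induction m with
  | zero => simp
  | succ k ih =>
    intro hkn
    rw [← integral_add_adjacent_intervals (chain_int hpF 0 k (by omega) (by omega))
        (hpF k (by omega)),
      ← integral_add_adjacent_intervals (chain_int hpG 0 k (by omega) (by omega))
        (hpG k (by omega))]
    exact add_le_add (ih (by omega))
      (integral_mono_on (hmono k (by omega)) (hpF k (by omega)) (hpG k (by omega))
        fun x _ => hle x)

lemma piece_ftc {z : ℝ → ℝ} {a b : ℝ} (hab : a ≤ b) (h : ContDiffOn ℝ 1 z (Icc a b))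
    (hint : IntervalIntegrable (fun t => deriv z t) volume a b) :
    ∫ t in a..b, deriv z t = z b - z a := by
  refine integral_eq_sub_of_hasDeriv_right_of_le hab h.continuousOn (fun t ht => ?_) hint
  exact (((h.contDiffAt (Icc_mem_nhds ht.1 ht.2)).differentiableAt one_ne_zero).hasDerivAt).hasDerivWithinAt

lemma abs_deriv_le_hypF (γ : ℝ → ℝ × ℝ) (t : ℝ) :
    |deriv (fun s => (γ s).2) t| ≤ hypF γ t := by
  rw [← Real.sqrt_sq_eq_abs]
  exact Real.sqrt_le_sqrt (by nlinarith [Real.exp_pos (-(γ t).2), sq_nonneg (deriv (fun s => (γ s).1) t)])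

lemma deriv_z_integrable {γ : ℝ → ℝ × ℝ} {a b : ℝ} (hab : a ≤ b)
    (h : ContDiffOn ℝ 1 γ (Icc a b)) :
    IntervalIntegrable (fun t => deriv (fun s => (γ s).2) t) volume a b := by
  refine integrable_of_meas_bdd hab
    ((measurable_deriv _).aestronglyMeasurable.restrict) ?_
  obtain ⟨M, hM⟩ := bound_on_Ioo (contDiff_snd.comp_contDiffOn h : ContDiffOn ℝ 1 (fun s => (γ s).2) (Icc a b))
  exact ⟨M, fun t ht => (hM t ht).2⟩



lemma solLength_eq (γ : ℝ → ℝ × ℝ × ℝ) : solLength γ = ∫ t in (0:ℝ)..1, solF γ t := rfl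

lemma hypLength_eq (γ : ℝ → ℝ × ℝ) : hypLength γ = ∫ t in (0:ℝ)..1, hypF γ t := rfl

lemma solLength_nonneg (γ : ℝ → ℝ × ℝ × ℝ) : 0 ≤ solLength γ :=
  intervalIntegral.integral_nonneg (by norm_num) (fun u _ => Real.sqrt_nonneg _)

lemma hypLength_nonneg (γ : ℝ → ℝ × ℝ) : 0 ≤ hypLength γ :=
  intervalIntegral.integral_nonneg (by norm_num) (fun u _ => Real.sqrt_nonneg _)

lemma piecewiseC1_of_contDiff {E : Type*} [NormedAddCommGroup E] [NormedSpace ℝ E]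
    {γ : ℝ → E} (h : ContDiff ℝ 1 γ) : PiecewiseC1 γ :=
  ⟨1, fun i => (i : ℝ), by norm_num, by norm_num,
    fun i _ => by push_cast; linarith, fun i _ => h.contDiffOn⟩

/-- Height is 1-Lipschitz along piecewise C¹ paths in ℍ². -/
lemma height_le_hypLength {γ : ℝ → ℝ × ℝ} (hγ : PiecewiseC1 γ) :
    |(γ 1).2 - (γ 0).2| ≤ hypLength γ := by
  obtain ⟨n, τ, h0, h1, hmono, hpc⟩ := hγ
  have key : ∀ m, m ≤ n → |(γ (τ m)).2 - (γ (τ 0)).2| ≤ ∫ t in (τ 0)..(τ m), hypF γ t := by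
    intro m
    induction m with
    | zero => simp
    | succ k ih =>
      intro hkn
      have hk : k < n := by omega
      have habk : τ k ≤ τ (k+1) := hmono k hk
      have hcq := hpc k hk
      have hz : ContDiffOn ℝ 1 (fun s => (γ s).2) (Icc (τ k) (τ (k+1))) :=
        contDiff_snd.comp_contDiffOn hcq
      have hdzint := deriv_z_integrable habk hcq
      have hhypint := fun i (hi : i < n) => hypF_integrable (hmono i hi) (hpc i hi)
      have hpiece : |(γ (τ (k+1))).2 - (γ (τ k)).2| ≤ ∫ t in (τ k)..(τ (k+1)), hypF γ t := by
        rw [← piece_ftc habk hz hdzint]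
        refine le_trans (abs_integral_le_integral_abs habk) ?_
        refine integral_mono_on habk ?_ (hhypint k hk) (fun x _ => abs_deriv_le_hypF γ x)
        exact hdzint.abs
      calc |(γ (τ (k+1))).2 - (γ (τ 0)).2|
          ≤ |(γ (τ k)).2 - (γ (τ 0)).2| + |(γ (τ (k+1))).2 - (γ (τ k)).2| := by
            have := abs_sub_le ((γ (τ (k+1))).2) ((γ (τ k)).2) ((γ (τ 0)).2)
            linarith
        _ ≤ (∫ t in (τ 0)..(τ k), hypF γ t) + ∫ t in (τ k)..(τ (k+1)), hypF γ t :=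
            add_le_add (ih (by omega)) hpiece
        _ = ∫ t in (τ 0)..(τ (k+1)), hypF γ t :=
            integral_add_adjacent_intervals
              (chain_int hhypint 0 k (by omega) (by omega)) (hhypint k hk)
  have := key n le_rfl
  rw [h0, h1] at this
  exact this

lemma exists_straight (p q : ℝ × ℝ) :
    ∃ γ : ℝ → ℝ × ℝ, γ 0 = p ∧ γ 1 = q ∧ PiecewiseC1 γ :=
  ⟨fun t => p + t • (q - p), by simp, by simp,
    piecewiseC1_of_contDiff (contDiff_const.add (contDiff_id.smul contDiff_const))⟩

lemma exists_straight3 (p q : ℝ × ℝ × ℝ) :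
    ∃ γ : ℝ → ℝ × ℝ × ℝ, γ 0 = p ∧ γ 1 = q ∧ PiecewiseC1 γ :=
  ⟨fun t => p + t • (q - p), by simp, by simp,
    piecewiseC1_of_contDiff (contDiff_const.add (contDiff_id.smul contDiff_const))⟩

lemma dHyp_le {p q : ℝ × ℝ} {γ : ℝ → ℝ × ℝ} (h0 : γ 0 = p) (h1 : γ 1 = q)
    (hpc : PiecewiseC1 γ) : dHyp p q ≤ hypLength γ :=
  csInf_le ⟨0, fun ℓ ⟨δ, _, _, _, hl⟩ => hl ▸ hypLength_nonneg δ⟩ ⟨γ, h0, h1, hpc, rfl⟩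

lemma dSol_le {p q : ℝ × ℝ × ℝ} {γ : ℝ → ℝ × ℝ × ℝ} (h0 : γ 0 = p) (h1 : γ 1 = q)
    (hpc : PiecewiseC1 γ) : dSol p q ≤ solLength γ :=
  csInf_le ⟨0, fun ℓ ⟨δ, _, _, _, hl⟩ => hl ▸ solLength_nonneg δ⟩ ⟨γ, h0, h1, hpc, rfl⟩

lemma dSol_nonneg (p q : ℝ × ℝ × ℝ) : 0 ≤ dSol p q := by
  obtain ⟨γ, h0, h1, hpc⟩ := exists_straight3 p q
  exact le_csInf ⟨solLength γ, γ, h0, h1, hpc, rfl⟩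
    (fun ℓ ⟨δ, _, _, _, hl⟩ => hl ▸ solLength_nonneg δ)

lemma hypF_proj1_le (γ : ℝ → ℝ × ℝ × ℝ) (t : ℝ) :
    hypF (fun s => ((γ s).1, (γ s).2.2)) t ≤ solF γ t := by
  show Real.sqrt (Real.exp (-(γ t).2.2) * (deriv (fun s => (γ s).1) t) ^ 2 +
      (deriv (fun s => (γ s).2.2) t) ^ 2) ≤ solF γ t
  simp only [solF]
  apply Real.sqrt_le_sqrt
  nlinarith [Real.exp_pos ((γ t).2.2), sq_nonneg (deriv (fun s => (γ s).2.1) t)]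

lemma hypF_proj2_le (γ : ℝ → ℝ × ℝ × ℝ) (t : ℝ) :
    hypF (fun s => ((γ s).2.1, -(γ s).2.2)) t ≤ solF γ t := by
  show Real.sqrt (Real.exp (-(-(γ t).2.2)) * (deriv (fun s => (γ s).2.1) t) ^ 2 +
      (deriv (fun s => -(γ s).2.2) t) ^ 2) ≤ solF γ t
  rw [show deriv (fun s => -(γ s).2.2) t = -(deriv (fun s => (γ s).2.2) t) from deriv.neg,
    neg_neg, neg_pow]
  simp only [solF]
  apply Real.sqrt_le_sqrt
  nlinarith [Real.exp_pos (-(γ t).2.2), sq_nonneg (deriv (fun s => (γ s).1) t),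
    sq_nonneg (deriv (fun s => (γ s).2.2) t)]

lemma max_dHyp_le_dSol (p q : ℝ × ℝ × ℝ) :
    max (dHyp (p.1, p.2.2) (q.1, q.2.2)) (dHyp (p.2.1, -p.2.2) (q.2.1, -q.2.2))
      ≤ dSol p q := by
  obtain ⟨γ0, hs0, hs1, hspc⟩ := exists_straight3 p q
  refine le_csInf ⟨solLength γ0, γ0, hs0, hs1, hspc, rfl⟩ ?_
  rintro ℓ ⟨γ, hg0, hg1, hpc, rfl⟩
  obtain ⟨n, τ, h0, h1, hmono, hcd⟩ := hpc
  refine max_le ?_ ?_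
  · set δ : ℝ → ℝ × ℝ := fun s => ((γ s).1, (γ s).2.2) with hδ
    have hδcd : ∀ i < n, ContDiffOn ℝ 1 δ (Icc (τ i) (τ (i+1))) := fun i hi =>
      (contDiff_fst.prodMk (contDiff_snd.comp contDiff_snd)).comp_contDiffOn (hcd i hi)
    have hlen : hypLength δ ≤ solLength γ := by
      rw [hypLength_eq, solLength_eq, ← h0, ← h1]
      exact chain_mono hmono (fun i hi => hypF_integrable (hmono i hi) (hδcd i hi))
        (fun i hi => solF_integrable (hmono i hi) (hcd i hi))
        (hypF_proj1_le γ) n le_rfl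
    have := dHyp_le (p := ((γ 0).1, (γ 0).2.2)) (q := ((γ 1).1, (γ 1).2.2))
      rfl rfl ⟨n, τ, h0, h1, hmono, hδcd⟩
    rw [hg0, hg1] at this
    exact this.trans hlen
  · set δ : ℝ → ℝ × ℝ := fun s => ((γ s).2.1, -(γ s).2.2) with hδ
    have hδcd : ∀ i < n, ContDiffOn ℝ 1 δ (Icc (τ i) (τ (i+1))) := fun i hi =>
      ((contDiff_fst.comp contDiff_snd).prodMk (contDiff_snd.comp contDiff_snd).neg).comp_contDiffOn (hcd i hi)
    have hlen : hypLength δ ≤ solLength γ := by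
      rw [hypLength_eq, solLength_eq, ← h0, ← h1]
      exact chain_mono hmono (fun i hi => hypF_integrable (hmono i hi) (hδcd i hi))
        (fun i hi => solF_integrable (hmono i hi) (hcd i hi))
        (hypF_proj2_le γ) n le_rfl
    have := dHyp_le (p := ((γ 0).2.1, -(γ 0).2.2)) (q := ((γ 1).2.1, -(γ 1).2.2))
      rfl rfl ⟨n, τ, h0, h1, hmono, hδcd⟩
    rw [hg0, hg1] at this
    exact this.trans hlen

def legA (p : ℝ × ℝ × ℝ) (γ₂ : ℝ → ℝ × ℝ) (t : ℝ) : ℝ × ℝ × ℝ :=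
  (p.1, (γ₂ (3*t)).1, -(γ₂ (3*t)).2)

def legB (p q : ℝ × ℝ × ℝ) (t : ℝ) : ℝ × ℝ × ℝ :=
  (p.1, q.2.1, q.2.2 + (3*t-1)*(p.2.2 - q.2.2))

def legC (q : ℝ × ℝ × ℝ) (γ₁ : ℝ → ℝ × ℝ) (t : ℝ) : ℝ × ℝ × ℝ :=
  ((γ₁ (3*t-2)).1, q.2.1, (γ₁ (3*t-2)).2)

lemma sqrt_nine : Real.sqrt 9 = 3 := by
  rw [show (9:ℝ) = 3^2 by norm_num]
  exact Real.sqrt_sq (by norm_num)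

lemma exists_sol_path (p q : ℝ × ℝ × ℝ) {γ₁ γ₂ : ℝ → ℝ × ℝ}
    (h10 : γ₁ 0 = (p.1, p.2.2)) (h11 : γ₁ 1 = (q.1, q.2.2))
    (h20 : γ₂ 0 = (p.2.1, -p.2.2)) (h21 : γ₂ 1 = (q.2.1, -q.2.2))
    (hp1 : PiecewiseC1 γ₁) (hp2 : PiecewiseC1 γ₂) :
    dSol p q ≤ hypLength γ₂ + |p.2.2 - q.2.2| + hypLength γ₁ := by
  classical
  obtain ⟨n1, ρ, hρ0, hρ1, hρm, hρc⟩ := hp1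
  obtain ⟨n2, σ, hσ0, hσ1, hσm, hσc⟩ := hp2
  have hn1 : 1 ≤ n1 := by
    rcases Nat.eq_zero_or_pos n1 with h | h
    · rw [h, hρ0] at hρ1; norm_num at hρ1
    · omega
  have hn2 : 1 ≤ n2 := by
    rcases Nat.eq_zero_or_pos n2 with h | h
    · rw [h, hσ0] at hσ1; norm_num at hσ1
    · omega
  have hσb : ∀ i, i ≤ n2 → 0 ≤ σ i ∧ σ i ≤ 1 := by
    intro i hi
    constructor
    · have := part_mono hσm 0 i (by omega) hi; rw [hσ0] at this; exact this
    · have := part_mono hσm i n2 hi le_rfl; rw [hσ1] at this; exact this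
  have hρb : ∀ i, i ≤ n1 → 0 ≤ ρ i ∧ ρ i ≤ 1 := by
    intro i hi
    constructor
    · have := part_mono hρm 0 i (by omega) hi; rw [hρ0] at this; exact this
    · have := part_mono hρm i n1 hi le_rfl; rw [hρ1] at this; exact this
  set Γ : ℝ → ℝ × ℝ × ℝ := fun t =>
    if t ≤ 1/3 then legA p γ₂ t else if t ≤ 2/3 then legB p q t else legC q γ₁ t with hΓ
  have hEA : ∀ t, t ≤ (1:ℝ)/3 → Γ t = legA p γ₂ t := by
    intro t ht; simp only [hΓ]; rw [if_pos ht]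
  have hAB : legA p γ₂ (1/3) = legB p q (1/3) := by
    simp only [legA, legB]
    norm_num [h21]
  have hEB : ∀ t, t ∈ Icc ((1:ℝ)/3) (2/3) → Γ t = legB p q t := by
    intro t ht
    rcases eq_or_lt_of_le ht.1 with h | h
    · rw [← h, hEA _ (le_of_eq h.symm), ← h] at *
      exact hAB
    · simp only [hΓ]; rw [if_neg (not_le.2 h), if_pos ht.2]
  have hBC : legB p q (2/3) = legC q γ₁ (2/3) := by
    simp only [legB, legC]
    norm_num [h10]
  have hEC : ∀ t, t ∈ Icc ((2:ℝ)/3) 1 → Γ t = legC q γ₁ t := by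
    intro t ht
    rcases eq_or_lt_of_le ht.1 with h | h
    · rw [← h]
      rw [hEB _ (by constructor <;> norm_num)]
      exact hBC
    · simp only [hΓ]
      rw [if_neg (by push_neg; linarith), if_neg (not_le.2 h)]
  have hΓ0 : Γ 0 = p := by
    rw [hEA 0 (by norm_num)]
    simp only [legA]
    norm_num [h20]
  have hΓ1 : Γ 1 = q := by
    rw [hEC 1 ⟨by norm_num, le_rfl⟩]
    simp only [legC]
    norm_num [h11]
  -- the combined partition
  set n : ℕ := n2 + 1 + n1 with hn
  set τ : ℕ → ℝ := fun k =>
    if k ≤ n2 then σ k / 3 else if k = n2 + 1 then 2/3 else 2/3 + ρ (k - (n2+1)) / 3 with hτ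
  have hτσ : ∀ i, i ≤ n2 → τ i = σ i / 3 := by
    intro i hi; simp only [hτ]; rw [if_pos hi]
  have hτρ : ∀ j, j ≤ n1 → τ (n2+1+j) = 2/3 + ρ j / 3 := by
    intro j hj
    by_cases hj0 : j = 0
    · subst hj0
      simp only [hτ]
      rw [if_neg (show ¬(n2+1+0 ≤ n2) by omega)]
      simp [hρ0]
    · simp only [hτ]
      rw [if_neg (show ¬(n2+1+j ≤ n2) by omega), if_neg (show ¬(n2+1+j = n2+1) by omega)]
      have : n2 + 1 + j - (n2+1) = j := by omega
      rw [this]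
  have hτ0 : τ 0 = 0 := by rw [hτσ 0 (by omega), hσ0]; norm_num
  have hτn2 : τ n2 = 1/3 := by rw [hτσ n2 le_rfl, hσ1]
  have hτn21 : τ (n2+1) = 2/3 := by
    have := hτρ 0 (by omega)
    rw [hρ0] at this
    norm_num at this
    simpa using this
  have hτn : τ n = 1 := by
    have := hτρ n1 le_rfl
    rw [hρ1] at this
    rw [hn, this]
    norm_num
  have hτmono : ∀ i, i < n → τ i ≤ τ (i+1) := by
    intro i hi
    by_cases h1 : i < n2
    · rw [hτσ i (by omega), hτσ (i+1) (by omega)]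
      have := hσm i h1; linarith
    · by_cases h2 : i = n2
      · subst h2; rw [hτn2, hτn21]; norm_num
      · obtain ⟨j, rfl⟩ : ∃ j, i = n2 + 1 + j := ⟨i - (n2+1), by omega⟩
        have hjn1 : j < n1 := by omega
        have e2 : n2 + 1 + j + 1 = n2 + 1 + (j + 1) := by omega
        rw [hτρ j (by omega), e2, hτρ (j+1) (by omega)]
        have := hρm j hjn1; linarith
  have hpieces : ∀ i, i < n → ContDiffOn ℝ 1 Γ (Icc (τ i) (τ (i+1))) := by
    intro i hi
    by_cases h1 : i < n2
    · rw [hτσ i (by omega), hτσ (i+1) (by omega)]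
      have houter : ContDiffOn ℝ 1 (fun u => ((p.1, (γ₂ u).1, -(γ₂ u).2) : ℝ × ℝ × ℝ))
          (Icc (σ i) (σ (i+1))) :=
        contDiffOn_const.prodMk ((contDiff_fst.comp_contDiffOn (hσc i h1)).prodMk
          (contDiff_snd.comp_contDiffOn (hσc i h1)).neg)
      have hinner : ContDiffOn ℝ 1 (fun t : ℝ => 3*t) (Icc (σ i/3) (σ (i+1)/3)) :=
        (contDiff_const.mul contDiff_id).contDiffOn
      have hmaps : MapsTo (fun t : ℝ => 3*t) (Icc (σ i/3) (σ (i+1)/3)) (Icc (σ i) (σ (i+1))) :=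
        fun t ht => ⟨show σ i ≤ 3*t by linarith [ht.1], show 3*t ≤ σ (i+1) by linarith [ht.2]⟩
      refine (houter.comp hinner hmaps).congr ?_
      intro t ht
      have ht3 : t ≤ 1/3 := le_trans ht.2 (by linarith [(hσb (i+1) (by omega)).2])
      rw [hEA t ht3]; rfl
    · by_cases h2 : i = n2
      · subst h2
        rw [hτn2, hτn21]
        have hB : ContDiffOn ℝ 1 (legB p q) (Icc (1/3) (2/3)) := by
          apply ContDiff.contDiffOn
          exact contDiff_const.prodMk (contDiff_const.prodMk (contDiff_const.add
            (((contDiff_const.mul contDiff_id).sub contDiff_const).mul contDiff_const)))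
        exact hB.congr (fun t ht => hEB t ht)
      · obtain ⟨j, rfl⟩ : ∃ j, i = n2 + 1 + j := ⟨i - (n2+1), by omega⟩
        have hjn1 : j < n1 := by omega
        have e2 : n2 + 1 + j + 1 = n2 + 1 + (j + 1) := by omega
        rw [hτρ j (by omega), e2, hτρ (j+1) (by omega)]
        have houter : ContDiffOn ℝ 1 (fun u => (((γ₁ u).1, q.2.1, (γ₁ u).2) : ℝ × ℝ × ℝ))
            (Icc (ρ j) (ρ (j+1))) :=
          (contDiff_fst.comp_contDiffOn (hρc j hjn1)).prodMk (contDiffOn_const.prodMk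
            (contDiff_snd.comp_contDiffOn (hρc j hjn1)))
        have hinner : ContDiffOn ℝ 1 (fun t : ℝ => 3*t-2)
            (Icc (2/3 + ρ j/3) (2/3 + ρ (j+1)/3)) :=
          ((contDiff_const.mul contDiff_id).sub contDiff_const).contDiffOn
        have hmaps : MapsTo (fun t : ℝ => 3*t-2) (Icc (2/3 + ρ j/3) (2/3 + ρ (j+1)/3))
            (Icc (ρ j) (ρ (j+1))) :=
          fun t ht => ⟨show ρ j ≤ 3*t-2 by linarith [ht.1], show 3*t-2 ≤ ρ (j+1) by linarith [ht.2]⟩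
        refine (houter.comp hinner hmaps).congr ?_
        intro t ht
        have h23 : (2:ℝ)/3 ≤ t := le_trans (by linarith [(hρb j (by omega)).1]) ht.1
        have hle1 : t ≤ 1 := le_trans ht.2 (by linarith [(hρb (j+1) (by omega)).2])
        rw [hEC t ⟨h23, hle1⟩]; rfl
  have hPC : PiecewiseC1 Γ := ⟨n, τ, hτ0, hτn, hτmono, hpieces⟩
  -- integrability
  have hint : ∀ i, i < n → IntervalIntegrable (solF Γ) volume (τ i) (τ (i+1)) :=
    fun i hi => solF_integrable (hτmono i hi) (hpieces i hi)
  have hI1 : IntervalIntegrable (solF Γ) volume 0 (1/3) := by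
    have := chain_int hint 0 n2 (by omega) (by omega)
    rwa [hτ0, hτn2] at this
  have hI2 : IntervalIntegrable (solF Γ) volume (1/3) (2/3) := by
    have := hint n2 (by omega)
    rwa [hτn2, hτn21] at this
  have hI3 : IntervalIntegrable (solF Γ) volume (2/3) 1 := by
    have := chain_int hint (n2+1) n (by omega) le_rfl
    rwa [hτn21, hτn] at this
  -- the three integral evaluations
  have E1 : ∫ t in (0:ℝ)..(1/3), solF Γ t = hypLength γ₂ := by
    have hcong : ∫ t in (0:ℝ)..(1/3), solF Γ t
        = ∫ t in (0:ℝ)..(1/3), 3 * hypF γ₂ (3*t) := by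
      refine integral_congr_ae ?_
      have hfin : (Set.range (fun i : Fin (n2+1) => σ i / 3)).Finite := Set.finite_range _
      refine (MeasureTheory.ae_iff).2
        (measure_mono_null (fun t ht => ?_) (hfin.measure_zero volume))
      simp only [Set.mem_setOf_eq, Classical.not_imp] at ht
      obtain ⟨htI, hne⟩ := ht
      rw [Set.uIoc_of_le (by norm_num : (0:ℝ) ≤ 1/3)] at htI
      by_contra hS
      apply hne
      have ht0 : 0 < t := htI.1
      have htlt : t < 1/3 := by
        rcases lt_or_eq_of_le htI.2 with h | h
        · exact h
        · exfalso; apply hS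
          refine ⟨⟨n2, by omega⟩, ?_⟩
          show σ n2 / 3 = t
          rw [hσ1, h]
      obtain ⟨i, hi, hmem⟩ := part_cover hσm n2 le_rfl (by omega) (3*t)
        (by rw [hσ0]; linarith) (by rw [hσ1]; linarith)
      have hne1 : σ i ≠ 3*t := by
        intro h; apply hS; exact ⟨⟨i, by omega⟩, by show σ i / 3 = t; linarith⟩
      have hne2 : σ (i+1) ≠ 3*t := by
        intro h; apply hS; exact ⟨⟨i+1, by omega⟩, by show σ (i+1) / 3 = t; linarith⟩
      have hIoo : 3*t ∈ Ioo (σ i) (σ (i+1)) :=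
        ⟨lt_of_le_of_ne hmem.1 hne1, lt_of_le_of_ne hmem.2 (Ne.symm hne2)⟩
      have hmemN : Icc (σ i) (σ (i+1)) ∈ nhds (3*t) := Icc_mem_nhds hIoo.1 hIoo.2
      have hdiff : DifferentiableAt ℝ γ₂ (3*t) :=
        ((hσc i hi).contDiffAt hmemN).differentiableAt one_ne_zero
      have hinner : HasDerivAt (fun s : ℝ => 3*s) 3 t := by
        simpa using (hasDerivAt_id t).const_mul (3:ℝ)
      have hy : HasDerivAt (fun s => (γ₂ (3*s)).1)
          (deriv (fun u => (γ₂ u).1) (3*t) * 3) t :=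
        (hdiff.fst.hasDerivAt).comp t hinner
      have hz : HasDerivAt (fun s => -(γ₂ (3*s)).2)
          (-(deriv (fun u => (γ₂ u).2) (3*t) * 3)) t :=
        ((hdiff.snd.hasDerivAt).comp t hinner).neg
      have hev : Γ =ᶠ[nhds t] legA p γ₂ :=
        Filter.eventuallyEq_of_mem (Ioo_mem_nhds ht0 htlt)
          (fun s hs => hEA s (le_of_lt hs.2))
      have e1 : deriv (fun s => (Γ s).1) t = 0 := by
        have heq : (fun s => (Γ s).1) =ᶠ[nhds t] (fun _ => p.1) :=
          hev.mono (fun s hs => by simp only [hs, legA, legB, legC])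
        rw [heq.deriv_eq]; exact deriv_const t _
      have e2 : deriv (fun s => (Γ s).2.1) t = deriv (fun u => (γ₂ u).1) (3*t) * 3 := by
        have heq : (fun s => (Γ s).2.1) =ᶠ[nhds t] (fun s => (γ₂ (3*s)).1) :=
          hev.mono (fun s hs => by simp only [hs, legA, legB, legC])
        rw [heq.deriv_eq]; exact hy.deriv
      have e3 : deriv (fun s => (Γ s).2.2) t = -(deriv (fun u => (γ₂ u).2) (3*t) * 3) := by
        have heq : (fun s => (Γ s).2.2) =ᶠ[nhds t] (fun s => -(γ₂ (3*s)).2) :=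
          hev.mono (fun s hs => by simp only [hs, legA, legB, legC])
        rw [heq.deriv_eq]; exact hz.deriv
      have hval : (Γ t).2.2 = -(γ₂ (3*t)).2 := by rw [hEA t (le_of_lt htlt)]; rfl
      simp only [solF, hypF, e1, e2, e3, hval, neg_neg]
      rw [show Real.exp ((γ₂ (3*t)).2) * 0^2
          + Real.exp (-(γ₂ (3*t)).2) * (deriv (fun u => (γ₂ u).1) (3*t) * 3)^2
          + (-(deriv (fun u => (γ₂ u).2) (3*t) * 3))^2
          = 9 * (Real.exp (-(γ₂ (3*t)).2) * (deriv (fun u => (γ₂ u).1) (3*t))^2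
            + (deriv (fun u => (γ₂ u).2) (3*t))^2) from by ring,
        Real.sqrt_mul (by norm_num : (0:ℝ) ≤ 9), sqrt_nine]
    rw [hcong, intervalIntegral.integral_const_mul, integral_comp_mul_left (hypF γ₂) (by norm_num : (3:ℝ) ≠ 0)]
    rw [hypLength_eq]
    norm_num
    try ring
  have E2 : ∫ t in (1/3:ℝ)..(2/3), solF Γ t = |p.2.2 - q.2.2| := by
    have hcong : ∫ t in (1/3:ℝ)..(2/3), solF Γ t
        = ∫ _t in (1/3:ℝ)..(2/3), 3 * |p.2.2 - q.2.2| := by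
      refine integral_congr_ae ?_
      have hfin : ({(2:ℝ)/3} : Set ℝ).Finite := Set.finite_singleton _
      refine (MeasureTheory.ae_iff).2
        (measure_mono_null (fun t ht => ?_) (hfin.measure_zero volume))
      simp only [Set.mem_setOf_eq, Classical.not_imp] at ht
      obtain ⟨htI, hne⟩ := ht
      rw [Set.uIoc_of_le (by norm_num : (1:ℝ)/3 ≤ 2/3)] at htI
      by_contra hS
      apply hne
      have htlt : t < 2/3 := lt_of_le_of_ne htI.2 (fun h => hS (by simp [h]))
      have hev : Γ =ᶠ[nhds t] legB p q :=
        Filter.eventuallyEq_of_mem (Ioo_mem_nhds htI.1 htlt)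
          (fun s hs => hEB s ⟨le_of_lt hs.1, le_of_lt hs.2⟩)
      have hzB : HasDerivAt (fun s : ℝ => q.2.2 + (3*s-1)*(p.2.2-q.2.2))
          (3*(p.2.2-q.2.2)) t := by
        have h1 : HasDerivAt (fun s : ℝ => 3*s-1) 3 t := by
          simpa using ((hasDerivAt_id t).const_mul (3:ℝ)).sub_const 1
        simpa using (h1.mul_const (p.2.2-q.2.2)).const_add q.2.2
      have e1 : deriv (fun s => (Γ s).1) t = 0 := by
        have heq : (fun s => (Γ s).1) =ᶠ[nhds t] (fun _ => p.1) :=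
          hev.mono (fun s hs => by simp only [hs, legA, legB, legC])
        rw [heq.deriv_eq]; exact deriv_const t _
      have e2 : deriv (fun s => (Γ s).2.1) t = 0 := by
        have heq : (fun s => (Γ s).2.1) =ᶠ[nhds t] (fun _ => q.2.1) :=
          hev.mono (fun s hs => by simp only [hs, legA, legB, legC])
        rw [heq.deriv_eq]; exact deriv_const t _
      have e3 : deriv (fun s => (Γ s).2.2) t = 3*(p.2.2-q.2.2) := by
        have heq : (fun s => (Γ s).2.2) =ᶠ[nhds t]
            (fun s => q.2.2 + (3*s-1)*(p.2.2-q.2.2)) :=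
          hev.mono (fun s hs => by simp only [hs, legA, legB, legC])
        rw [heq.deriv_eq]; exact hzB.deriv
      simp only [solF, e1, e2, e3]
      rw [show Real.exp (-(Γ t).2.2) * 0^2 + Real.exp ((Γ t).2.2) * 0^2
          + (3*(p.2.2-q.2.2))^2 = (3*(p.2.2-q.2.2))^2 from by ring,
        Real.sqrt_sq_eq_abs, abs_mul]
      norm_num
    rw [hcong, intervalIntegral.integral_const]
    norm_num
    try ring
  have E3 : ∫ t in (2/3:ℝ)..1, solF Γ t = hypLength γ₁ := by
    have hcong : ∫ t in (2/3:ℝ)..1, solF Γ t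
        = ∫ t in (2/3:ℝ)..1, 3 * hypF γ₁ (3*t-2) := by
      refine integral_congr_ae ?_
      have hfin : (Set.range (fun i : Fin (n1+1) => 2/3 + ρ i / 3)).Finite := Set.finite_range _
      refine (MeasureTheory.ae_iff).2
        (measure_mono_null (fun t ht => ?_) (hfin.measure_zero volume))
      simp only [Set.mem_setOf_eq, Classical.not_imp] at ht
      obtain ⟨htI, hne⟩ := ht
      rw [Set.uIoc_of_le (by norm_num : (2:ℝ)/3 ≤ 1)] at htI
      by_contra hS
      apply hne
      have ht0 : 2/3 < t := htI.1
      have htlt : t < 1 := by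
        rcases lt_or_eq_of_le htI.2 with h | h
        · exact h
        · exfalso; apply hS
          refine ⟨⟨n1, by omega⟩, ?_⟩
          show 2/3 + ρ n1 / 3 = t
          rw [hρ1, h]; norm_num
      obtain ⟨i, hi, hmem⟩ := part_cover hρm n1 le_rfl (by omega) (3*t-2)
        (by rw [hρ0]; linarith) (by rw [hρ1]; linarith)
      have hne1 : ρ i ≠ 3*t-2 := by
        intro h; apply hS
        exact ⟨⟨i, by omega⟩, by show 2/3 + ρ i / 3 = t; rw [h]; ring⟩
      have hne2 : ρ (i+1) ≠ 3*t-2 := by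
        intro h; apply hS
        exact ⟨⟨i+1, by omega⟩, by show 2/3 + ρ (i+1) / 3 = t; rw [h]; ring⟩
      have hIoo : 3*t-2 ∈ Ioo (ρ i) (ρ (i+1)) :=
        ⟨lt_of_le_of_ne hmem.1 hne1, lt_of_le_of_ne hmem.2 (Ne.symm hne2)⟩
      have hmemN : Icc (ρ i) (ρ (i+1)) ∈ nhds (3*t-2) := Icc_mem_nhds hIoo.1 hIoo.2
      have hdiff : DifferentiableAt ℝ γ₁ (3*t-2) :=
        ((hρc i hi).contDiffAt hmemN).differentiableAt one_ne_zero
      have hinner : HasDerivAt (fun s : ℝ => 3*s-2) 3 t := by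
        simpa using ((hasDerivAt_id t).const_mul (3:ℝ)).sub_const 2
      have hx : HasDerivAt (fun s => (γ₁ (3*s-2)).1)
          (deriv (fun u => (γ₁ u).1) (3*t-2) * 3) t := by
        have := (hdiff.fst.hasDerivAt).comp t hinner; exact this
      have hz : HasDerivAt (fun s => (γ₁ (3*s-2)).2)
          (deriv (fun u => (γ₁ u).2) (3*t-2) * 3) t := by
        have := (hdiff.snd.hasDerivAt).comp t hinner; exact this
      have hev : Γ =ᶠ[nhds t] legC q γ₁ :=
        Filter.eventuallyEq_of_mem (Ioo_mem_nhds ht0 htlt)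
          (fun s hs => hEC s ⟨le_of_lt hs.1, le_of_lt hs.2⟩)
      have e1 : deriv (fun s => (Γ s).1) t = deriv (fun u => (γ₁ u).1) (3*t-2) * 3 := by
        have heq : (fun s => (Γ s).1) =ᶠ[nhds t] (fun s => (γ₁ (3*s-2)).1) :=
          hev.mono (fun s hs => by simp only [hs, legA, legB, legC])
        rw [heq.deriv_eq]; exact hx.deriv
      have e2 : deriv (fun s => (Γ s).2.1) t = 0 := by
        have heq : (fun s => (Γ s).2.1) =ᶠ[nhds t] (fun _ => q.2.1) :=
          hev.mono (fun s hs => by simp only [hs, legA, legB, legC])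
        rw [heq.deriv_eq]; exact deriv_const t _
      have e3 : deriv (fun s => (Γ s).2.2) t = deriv (fun u => (γ₁ u).2) (3*t-2) * 3 := by
        have heq : (fun s => (Γ s).2.2) =ᶠ[nhds t] (fun s => (γ₁ (3*s-2)).2) :=
          hev.mono (fun s hs => by simp only [hs, legA, legB, legC])
        rw [heq.deriv_eq]; exact hz.deriv
      have hval : (Γ t).2.2 = (γ₁ (3*t-2)).2 := by
        rw [hEC t ⟨le_of_lt ht0, le_of_lt htlt⟩]; rfl
      simp only [solF, hypF, e1, e2, e3, hval]
      rw [show Real.exp (-(γ₁ (3*t-2)).2) * (deriv (fun u => (γ₁ u).1) (3*t-2) * 3)^2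
          + Real.exp ((γ₁ (3*t-2)).2) * 0^2
          + (deriv (fun u => (γ₁ u).2) (3*t-2) * 3)^2
          = 9 * (Real.exp (-(γ₁ (3*t-2)).2) * (deriv (fun u => (γ₁ u).1) (3*t-2))^2
            + (deriv (fun u => (γ₁ u).2) (3*t-2))^2) from by ring,
        Real.sqrt_mul (by norm_num : (0:ℝ) ≤ 9), sqrt_nine]
    rw [hcong, intervalIntegral.integral_const_mul,
      integral_comp_mul_sub (hypF γ₁) (by norm_num : (3:ℝ) ≠ 0) 2]
    rw [hypLength_eq]
    norm_num
    try ring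
  have hsplit : solLength Γ = hypLength γ₂ + |p.2.2 - q.2.2| + hypLength γ₁ := by
    rw [solLength_eq, ← integral_add_adjacent_intervals (hI1.trans hI2) hI3,
      ← integral_add_adjacent_intervals hI1 hI2, E1, E2, E3]
  exact hsplit ▸ dSol_le hΓ0 hΓ1 hPC

end SolQI

/-- **Lemma.** The pair of projections `(x,y,z) ↦ ((x,z), (y,-z))` is a quasi-isometric
embedding `Sol → ℍ² × ℍ²`, where the product carries the sup distance. -/
theorem sol_embeds_in_H2xH2 :
    ∃ K C : ℝ, 1 ≤ K ∧ 0 ≤ C ∧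
      IsQIE dSol
        (fun u v : (ℝ × ℝ) × (ℝ × ℝ) => max (dHyp u.1 v.1) (dHyp u.2 v.2))
        K C
        (fun p : ℝ × ℝ × ℝ => ((p.1, p.2.2), (p.2.1, -p.2.2))) := by
  refine ⟨3, 0, by norm_num, le_rfl, fun a b => ⟨?_, ?_⟩⟩
  · show 1/3 * dSol a b - 0 ≤
      max (dHyp (a.1, a.2.2) (b.1, b.2.2)) (dHyp (a.2.1, -a.2.2) (b.2.1, -b.2.2))
    have key : dSol a b ≤
        3 * max (dHyp (a.1, a.2.2) (b.1, b.2.2)) (dHyp (a.2.1, -a.2.2) (b.2.1, -b.2.2)) := by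
      refine le_of_forall_pos_le_add (fun ε hε => ?_)
      obtain ⟨γ0, hs0, hs1, hspc⟩ := SolQI.exists_straight (a.1, a.2.2) (b.1, b.2.2)
      have h1 : sInf {ℓ : ℝ | ∃ γ : ℝ → ℝ × ℝ,
          γ 0 = (a.1, a.2.2) ∧ γ 1 = (b.1, b.2.2) ∧ PiecewiseC1 γ ∧ hypLength γ = ℓ}
          < dHyp (a.1, a.2.2) (b.1, b.2.2) + ε/3 :=
        lt_add_of_pos_right _ (by linarith)
      have hne1 : {ℓ : ℝ | ∃ γ : ℝ → ℝ × ℝ,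
          γ 0 = (a.1, a.2.2) ∧ γ 1 = (b.1, b.2.2) ∧ PiecewiseC1 γ ∧ hypLength γ = ℓ}.Nonempty :=
        ⟨hypLength γ0, γ0, hs0, hs1, hspc, rfl⟩
      obtain ⟨ℓ1, hmem1, hlt1⟩ := exists_lt_of_csInf_lt hne1 h1
      obtain ⟨γ₁, h10, h11, hpc1, rfl⟩ := hmem1
      obtain ⟨δ0, hd0, hd1, hdpc⟩ := SolQI.exists_straight (a.2.1, -a.2.2) (b.2.1, -b.2.2)
      have h2 : sInf {ℓ : ℝ | ∃ γ : ℝ → ℝ × ℝ,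
          γ 0 = (a.2.1, -a.2.2) ∧ γ 1 = (b.2.1, -b.2.2) ∧ PiecewiseC1 γ ∧ hypLength γ = ℓ}
          < dHyp (a.2.1, -a.2.2) (b.2.1, -b.2.2) + ε/3 :=
        lt_add_of_pos_right _ (by linarith)
      have hne2 : {ℓ : ℝ | ∃ γ : ℝ → ℝ × ℝ,
          γ 0 = (a.2.1, -a.2.2) ∧ γ 1 = (b.2.1, -b.2.2) ∧ PiecewiseC1 γ ∧ hypLength γ = ℓ}.Nonempty :=
        ⟨hypLength δ0, δ0, hd0, hd1, hdpc, rfl⟩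
      obtain ⟨ℓ2, hmem2, hlt2⟩ := exists_lt_of_csInf_lt hne2 h2
      obtain ⟨γ₂, h20, h21, hpc2, rfl⟩ := hmem2
      have hineq := SolQI.exists_sol_path a b h10 h11 h20 h21 hpc1 hpc2
      have hz : |a.2.2 - b.2.2| ≤ hypLength γ₁ := by
        have := SolQI.height_le_hypLength hpc1
        rw [h10, h11] at this
        simp only at this
        rwa [abs_sub_comm] at this
      have m1 : dHyp (a.1, a.2.2) (b.1, b.2.2) ≤
          max (dHyp (a.1, a.2.2) (b.1, b.2.2)) (dHyp (a.2.1, -a.2.2) (b.2.1, -b.2.2)) :=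
        le_max_left _ _
      have m2 : dHyp (a.2.1, -a.2.2) (b.2.1, -b.2.2) ≤
          max (dHyp (a.1, a.2.2) (b.1, b.2.2)) (dHyp (a.2.1, -a.2.2) (b.2.1, -b.2.2)) :=
        le_max_right _ _
      linarith
    have h0 := SolQI.dSol_nonneg a b
    linarith
  · show max (dHyp (a.1, a.2.2) (b.1, b.2.2)) (dHyp (a.2.1, -a.2.2) (b.2.1, -b.2.2))
      ≤ 3 * dSol a b + 0
    have := SolQI.max_dHyp_le_dSol a b
    have h0 := SolQI.dSol_nonneg a b
    linarith

end
end
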